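/- arXiv:1710.09395 — 8 statements merged into one kernel-verified Lean document; each statement's English description precedes it below -/
import Mathlib

section
/- Ky Fan's maximum principle: if X is a positive self-adjoint Hilbert–Schmidt (compact) operator on a separable Hilbert space with eigenvalues x_0 ≥ x_1 ≥ ... arranged in decreasing order, and P is an orthogonal projection of rank n+1, then Tr(P X) ≤ x_0 + x_1 + ... + x_n. -/
set_option maxHeartbeats 1000000

/-- Ky Fan's maximum principle: if `X` is a positive self-adjoint compact operator on a
separable Hilbert space, diagonalized by a Hilbert basis `b` with eigenvalues `x k`
arranged in decreasing order, and `φ` is an orthonormal family of `n+1` vectors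
(spanning the range of a rank-`(n+1)` orthogonal projection `P`), then
`Tr (P X) = ∑ i, ⟪φ i, X (φ i)⟫ ≤ x 0 + ⋯ + x n`. -/
theorem ky_fan_maximum_principle
    {H : Type*} [NormedAddCommGroup H] [InnerProductSpace ℂ H] [CompleteSpace H]
    (X : H →L[ℂ] H) (hXsa : IsSelfAdjoint X)
    (hXpos : ∀ v : H, 0 ≤ (inner ℂ v (X v) : ℂ).re)
    (x : ℕ → ℝ) (hx_nonneg : ∀ k, 0 ≤ x k) (hx_dec : Antitone x)
    (b : HilbertBasis ℕ ℂ H) (hb : ∀ k, X (b k) = (x k : ℂ) • b k)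
    (n : ℕ) (φ : Fin (n + 1) → H) (hφ : Orthonormal ℂ φ) :
    ∑ i, (inner ℂ (φ i) (X (φ i)) : ℂ).re ≤ ∑ k ∈ Finset.range (n + 1), x k := by
  have hsym0 : (X : H →ₗ[ℂ] H).IsSymmetric :=
    ContinuousLinearMap.isSelfAdjoint_iff_isSymmetric.mp hXsa
  have hsym : ∀ u v : H, (inner ℂ (X u) v : ℂ) = inner ℂ u (X v) := fun u v => by
    simpa using hsym0 u v
  set g : Fin (n + 1) → ℕ → ℝ := fun i k => ‖(inner ℂ (b k) (φ i) : ℂ)‖ ^ 2 with hg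
  -- each φ i has Parseval: ∑' k, g i k = 1
  have hg1 : ∀ i, HasSum (g i) 1 := by
    intro i
    have h := b.hasSum_inner_mul_inner (φ i) (φ i)
    have h1 : (inner ℂ (φ i) (φ i) : ℂ) = 1 := by
      rw [inner_self_eq_norm_sq_to_K, hφ.1 i]; norm_num
    rw [h1] at h
    have h2 : HasSum (fun k => ((g i k : ℝ) : ℂ)) 1 := by
      convert h using 3 with k
      · rfl
      rw [← inner_conj_symm (φ i) (b k), RCLike.conj_mul]
      norm_cast
    have := Complex.hasSum_re h2
    simpa using this
  -- main expansion: ⟪φ i, X (φ i)⟫.re = ∑' k, x k * g i k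
  have hmain : ∀ i, HasSum (fun k => x k * g i k) ((inner ℂ (φ i) (X (φ i)) : ℂ).re) := by
    intro i
    have h := b.hasSum_inner_mul_inner (φ i) (X (φ i))
    have h2 : HasSum (fun k => (((x k * g i k : ℝ)) : ℂ)) (inner ℂ (φ i) (X (φ i)) : ℂ) := by
      convert h using 3 with k
      · rfl
      have hk : (inner ℂ (b k) (X (φ i)) : ℂ) = (x k : ℂ) * inner ℂ (b k) (φ i) := by
        rw [← hsym (b k) (φ i), hb k, inner_smul_left, Complex.conj_ofReal]
      rw [hk, ← inner_conj_symm (b k) (φ i), mul_comm ((x k : ℂ)) _, ← mul_assoc,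
        RCLike.mul_conj]
      push_cast [hg]
      rw [norm_inner_symm (φ i)]
      exact mul_comm _ _
    have := Complex.hasSum_re h2
    simpa using this
  set c : ℕ → ℝ := fun k => ∑ i, g i k with hc
  have hc_nonneg : ∀ k, 0 ≤ c k :=
    fun k => Finset.sum_nonneg fun i _ => sq_nonneg _
  have hc_le_one : ∀ k, c k ≤ 1 := by
    intro k
    calc c k = ∑ i, ‖(inner ℂ (φ i) (b k) : ℂ)‖ ^ 2 :=
          Finset.sum_congr rfl fun i _ => by rw [hg]; rw [norm_inner_symm]
      _ ≤ ‖b k‖ ^ 2 := hφ.sum_inner_products_le (b k)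
      _ = 1 := by rw [b.orthonormal.1 k]; norm_num
  have hcsum : HasSum c ((n : ℝ) + 1) := by
    have := hasSum_sum (fun i (_ : i ∈ (Finset.univ : Finset (Fin (n+1)))) => hg1 i)
    simpa using this
  have hxc : HasSum (fun k => x k * c k) (∑ i, (inner ℂ (φ i) (X (φ i)) : ℂ).re) := by
    have := hasSum_sum (fun i (_ : i ∈ (Finset.univ : Finset (Fin (n+1)))) => hmain i)
    convert this using 2 with k
    simp [hc, Finset.mul_sum]
  clear hb hφ hsym hsym0 hg1 hmain hg hc hXpos hXsa
  clear_value g c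
  clear g
  rw [← hxc.tsum_eq]
  -- split the sum at n+1
  have hS : Summable (fun k => x k * c k) := hxc.summable
  rw [← Summable.sum_add_tsum_nat_add (n + 1) hS]
  have hcsplit := Summable.sum_add_tsum_nat_add (f := c) (n + 1) hcsum.summable
  rw [hcsum.tsum_eq] at hcsplit
  -- bound the tail
  have htail : (∑' k, x (k + (n + 1)) * c (k + (n + 1))) ≤
      x n * ∑' k, c (k + (n + 1)) := by
    rw [← tsum_mul_left]
    refine Summable.tsum_le_tsum (fun k => ?_) ((summable_nat_add_iff (n + 1)).2 hS)
      (((summable_nat_add_iff (n + 1)).2 hcsum.summable).mul_left _)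
    exact mul_le_mul_of_nonneg_right (hx_dec (by omega)) (hc_nonneg _)
  have htail2 : x n * ∑' k, c (k + (n + 1)) =
      ∑ k ∈ Finset.range (n + 1), x n * (1 - c k) := by
    have h3 : (∑' k, c (k + (n + 1))) = ((n : ℝ) + 1) - ∑ k ∈ Finset.range (n + 1), c k := by
      linarith [hcsplit]
    rw [h3]
    simp only [mul_sub, mul_one, Finset.sum_sub_distrib, Finset.sum_const,
      Finset.card_range, ← Finset.mul_sum, nsmul_eq_mul]
    push_cast
    ring
  have hstep : ∑ k ∈ Finset.range (n + 1), x n * (1 - c k) ≤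
      ∑ k ∈ Finset.range (n + 1), x k * (1 - c k) := by
    refine Finset.sum_le_sum fun k hk => ?_
    have hk' : k ≤ n := by simpa [Nat.lt_succ_iff] using Finset.mem_range.mp hk
    exact mul_le_mul_of_nonneg_right (hx_dec hk') (by linarith [hc_le_one k])
  calc ∑ k ∈ Finset.range (n + 1), x k * c k + ∑' k, x (k + (n + 1)) * c (k + (n + 1))
      ≤ ∑ k ∈ Finset.range (n + 1), x k * c k +
        ∑ k ∈ Finset.range (n + 1), x k * (1 - c k) := by
        rw [add_le_add_iff_left]; exact le_trans htail (htail2 ▸ hstep)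
    _ = ∑ k ∈ Finset.range (n + 1), x k := by
        rw [← Finset.sum_add_distrib]; apply Finset.sum_congr rfl; intros; ring
end

section
/- Truncation does not increase Shannon entropy of decreasing distributions: let p = (p_0, ..., p_N) be a probability distribution on {0,...,N} with p_0 ≥ p_1 ≥ ... ≥ p_N ≥ 0, fix 0 ≤ N' ≤ N, and define q_n = p_n / (p_0 + ... + p_{N'}) for n = 0,...,N'. Then the Shannon entropy H(q) = -∑ q_n ln q_n satisfies H(q) ≤ H(p). -/
/-- Truncation does not increase the Shannon entropy of decreasing distributions:
if `p` is a decreasing probability distribution on `{0, …, N}` and `q` is its normalized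
truncation to `{0, …, N'}` (with `N' ≤ N`), then `H(q) ≤ H(p)`. -/
theorem entropy_truncation_le
    (N N' : ℕ) (hN' : N' ≤ N) (p : ℕ → ℝ)
    (h_nonneg : ∀ n, n ≤ N → 0 ≤ p n)
    (h_dec : ∀ m n, m ≤ n → n ≤ N → p n ≤ p m)
    (h_sum : ∑ n ∈ Finset.range (N + 1), p n = 1) :
    -∑ n ∈ Finset.range (N' + 1),
        (p n / ∑ k ∈ Finset.range (N' + 1), p k) *
          Real.log (p n / ∑ k ∈ Finset.range (N' + 1), p k)
      ≤ -∑ n ∈ Finset.range (N + 1), p n * Real.log (p n) := by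
  set S := ∑ k ∈ Finset.range (N' + 1), p k with hS_def
  set c : ℝ := (N' : ℝ) + 1 with hc_def
  have hc : (1 : ℝ) ≤ c := by
    rw [hc_def]
    linarith [Nat.cast_nonneg (α := ℝ) N']
  have hc0 : (0 : ℝ) < c := by positivity
  have hsub : Finset.range (N' + 1) ⊆ Finset.range (N + 1) :=
    Finset.range_subset_range.2 (by omega)
  have hnn : ∀ n ∈ Finset.range (N + 1), 0 ≤ p n := fun n hn =>
    h_nonneg n (by simpa [Nat.lt_succ_iff] using Finset.mem_range.1 hn)
  have hS1 : S ≤ 1 := h_sum ▸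
    Finset.sum_le_sum_of_subset_of_nonneg hsub (fun i hi _ => hnn i hi)
  have hp0 : 0 < p 0 := by
    by_contra h
    push_neg at h
    have hz : ∀ n ∈ Finset.range (N + 1), p n = 0 := fun n hn =>
      le_antisymm (le_trans (h_dec 0 n (Nat.zero_le n)
        (by simpa [Nat.lt_succ_iff] using Finset.mem_range.1 hn)) h) (hnn n hn)
    rw [Finset.sum_eq_zero hz] at h_sum
    norm_num at h_sum
  have hS : 0 < S := lt_of_lt_of_le hp0 <| by
    refine Finset.single_le_sum (fun i hi => hnn i (hsub hi)) ?_
    simp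
  have hsumS : ∑ n ∈ Finset.range (N + 1) \ Finset.range (N' + 1), p n = 1 - S := by
    have := Finset.sum_sdiff (f := p) hsub
    linarith [this.symm ▸ h_sum]
  -- Jensen: A ≤ c * negMulLog (S / c)
  have jensen : ∑ n ∈ Finset.range (N' + 1), Real.negMulLog (p n)
      ≤ c * Real.negMulLog (S / c) := by
    have h := Real.concaveOn_negMulLog.le_map_sum (t := Finset.range (N' + 1))
      (w := fun _ => 1 / c) (p := p)
      (fun i _ => by positivity)
      (by
        rw [Finset.sum_const, Finset.card_range, nsmul_eq_mul]
        push_cast [hc_def]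
        field_simp)
      (fun i hi => Set.mem_Ici.2 (hnn i (hsub hi)))
    simp only [smul_eq_mul, ← Finset.mul_sum] at h
    have hrw : (1 / c) * S = S / c := by ring
    rw [hrw] at h
    calc ∑ n ∈ Finset.range (N' + 1), Real.negMulLog (p n)
        = c * ((1 / c) * ∑ n ∈ Finset.range (N' + 1), Real.negMulLog (p n)) := by
          field_simp
      _ ≤ c * Real.negMulLog (S / c) := by
          apply mul_le_mul_of_nonneg_left _ hc0.le
          simpa [Finset.mul_sum] using h
  have hA : ∑ n ∈ Finset.range (N' + 1), Real.negMulLog (p n)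
      ≤ S * (Real.log c - Real.log S) := by
    have : c * Real.negMulLog (S / c) = S * (Real.log c - Real.log S) := by
      rw [Real.negMulLog, Real.log_div hS.ne' hc0.ne']
      field_simp
      ring
    linarith [jensen, this.symm ▸ jensen]
  -- tail bound
  have hB : (1 - S) * (Real.log c - Real.log S)
      ≤ ∑ n ∈ Finset.range (N + 1) \ Finset.range (N' + 1), Real.negMulLog (p n) := by
    rw [← hsumS, Finset.sum_mul]
    apply Finset.sum_le_sum
    intro n hn
    have hnN : n ≤ N := by
      have := (Finset.mem_sdiff.1 hn).1
      simpa [Nat.lt_succ_iff] using Finset.mem_range.1 this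
    have hpn : 0 ≤ p n := h_nonneg n hnN
    have hple : p n ≤ S / c := by
      have hcp : c * p n ≤ S := by
        have : ∑ k ∈ Finset.range (N' + 1), p n ≤ S := by
          apply Finset.sum_le_sum
          intro k hk
          exact h_dec k n (by
            have := Finset.mem_range.1 hk
            have hn2 := (Finset.mem_sdiff.1 hn).2
            simp only [Finset.mem_range, not_lt] at hn2
            omega) hnN
        simpa [Finset.sum_const, Finset.card_range, nsmul_eq_mul, hc_def] using this
      rw [le_div_iff₀ hc0]
      linarith [hcp]
    rcases eq_or_lt_of_le hpn with h0 | h0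
    · simp [← h0]
    · rw [Real.negMulLog]
      have hlog : Real.log (p n) ≤ Real.log S - Real.log c := by
        rw [← Real.log_div hS.ne' hc0.ne']
        exact Real.log_le_log h0 hple
      nlinarith [h0, hlog]
  -- rewrite LHS
  have hLHS : -∑ n ∈ Finset.range (N' + 1), (p n / S) * Real.log (p n / S)
      = (∑ n ∈ Finset.range (N' + 1), Real.negMulLog (p n)) / S + Real.log S := by
    have hterm : ∀ n ∈ Finset.range (N' + 1),
        (p n / S) * Real.log (p n / S)
          = (p n * Real.log (p n)) / S - (p n / S) * Real.log S := by
      intro n hn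
      have hpn : 0 ≤ p n := hnn n (hsub hn)
      rcases eq_or_lt_of_le hpn with h0 | h0
      · simp [← h0]
      · rw [Real.log_div h0.ne' hS.ne']
        ring
    have h1 : ∑ n ∈ Finset.range (N' + 1), (p n / S) * Real.log (p n / S)
        = (∑ n ∈ Finset.range (N' + 1), p n * Real.log (p n)) / S - Real.log S := by
      rw [Finset.sum_congr rfl hterm, Finset.sum_sub_distrib]
      simp only [div_mul_eq_mul_div, ← Finset.sum_div, ← Finset.sum_mul, ← hS_def]
      field_simp
    rw [h1]
    simp only [Real.negMulLog, neg_mul, Finset.sum_neg_distrib]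
    field_simp
    ring
  -- rewrite RHS
  have hRHS : -∑ n ∈ Finset.range (N + 1), p n * Real.log (p n)
      = (∑ n ∈ Finset.range (N' + 1), Real.negMulLog (p n))
        + ∑ n ∈ Finset.range (N + 1) \ Finset.range (N' + 1), Real.negMulLog (p n) := by
    rw [Finset.sum_sdiff_eq_sub hsub]
    simp only [Real.negMulLog, neg_mul, Finset.sum_neg_distrib]
    ring
  rw [hLHS, hRHS]
  set A := ∑ n ∈ Finset.range (N' + 1), Real.negMulLog (p n)
  set B := ∑ n ∈ Finset.range (N + 1) \ Finset.range (N' + 1), Real.negMulLog (p n)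
  have hlogS : Real.log S ≤ 0 := Real.log_nonpos hS.le hS1
  rw [div_add' _ _ _ hS.ne', div_le_iff₀ hS]
  nlinarith [hA, hB, hS, hS1, hlogS, mul_nonneg (sub_nonneg.2 hS1) (sub_nonneg.2 hA)]
end

section
/- The function f(x) = g⁻¹(ln x) defined for x ≥ 1 satisfies f(x) = -1/2 + x/e + δ(x), where δ(x) = g⁻¹(ln x) - x/e + 1/2 satisfies 0 ≤ δ(x) ≤ δ(1) = 1/2 - 1/e for all x ≥ 1, δ is convex and decreasing, and δ(x) → 0 as x → ∞. -/
/-- The entropy function `g(N) = (N+1) log (N+1) - N log N` (with `g 0 = 0`). -/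
noncomputable def gfun (N : ℝ) : ℝ := (N + 1) * Real.log (N + 1) - N * Real.log N

open Real Set Filter

lemma gfun_zero : gfun 0 = 0 := by simp [gfun]

lemma gfun_continuous : Continuous gfun := by
  have h := Real.continuous_mul_log
  exact ((h.comp (continuous_id.add continuous_const)).sub h)

lemma gfun_hasDerivAt {N : ℝ} (hN : 0 < N) :
    HasDerivAt gfun (Real.log (N + 1) - Real.log N) N := by
  have h1 : HasDerivAt (fun x : ℝ => x + 1) 1 N := (hasDerivAt_id N).add_const 1
  have h2 : HasDerivAt (fun x : ℝ => Real.log (x + 1)) ((N + 1)⁻¹ * 1) N :=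
    (Real.hasDerivAt_log (by linarith)).comp N h1
  have h3 : HasDerivAt (fun x : ℝ => (x + 1) * Real.log (x + 1))
      (1 * Real.log (N + 1) + (N + 1) * ((N + 1)⁻¹ * 1)) N := h1.mul h2
  have h4 : HasDerivAt (fun x : ℝ => x * Real.log x)
      (1 * Real.log N + N * N⁻¹) N := (hasDerivAt_id N).mul (Real.hasDerivAt_log hN.ne')
  have h5 := h3.fun_sub h4
  refine h5.congr_deriv ?_
  field_simp
  ring

lemma log_pos_aux {N : ℝ} (hN : 0 < N) : 0 < Real.log (N + 1) - Real.log N :=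
  sub_pos.2 (Real.log_lt_log hN (by linarith))

lemma gfun_strictMono : StrictMonoOn gfun (Set.Ici 0) := by
  apply strictMonoOn_of_deriv_pos (convex_Ici 0) gfun_continuous.continuousOn
  intro x hx
  rw [interior_Ici] at hx
  rw [(gfun_hasDerivAt hx).deriv]
  exact log_pos_aux hx

lemma gfun_nonneg {N : ℝ} (hN : 0 ≤ N) : 0 ≤ gfun N := by
  rcases eq_or_lt_of_le hN with h | h
  · rw [← h, gfun_zero]
  · rw [← gfun_zero]
    exact (gfun_strictMono self_mem_Ici (le_of_lt h) h).le

lemma F1_hasDerivAt {x : ℝ} (hx : 0 < x) :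
    HasDerivAt (fun s : ℝ => s - 1 / s - 2 * Real.log s)
      (1 + 1 / x ^ 2 - 2 / x) x := by
  have h1 : HasDerivAt (fun s : ℝ => 1 / s) (-(x ^ 2)⁻¹) x := by
    simpa [one_div] using hasDerivAt_inv hx.ne'
  have h2 := ((hasDerivAt_id' x).fun_sub h1).fun_sub ((Real.hasDerivAt_log hx.ne').const_mul 2)
  refine h2.congr_deriv ?_
  field_simp
  ring

lemma two_log_lt {s : ℝ} (hs : 1 < s) : 2 * Real.log s < s - 1 / s := by
  have key : StrictMonoOn (fun s : ℝ => s - 1 / s - 2 * Real.log s) (Set.Ici 1) := by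
    apply strictMonoOn_of_deriv_pos (convex_Ici 1)
    · intro x hx
      simp only [Set.mem_Ici] at hx
      have hx0 : (0:ℝ) < x := by linarith
      exact (F1_hasDerivAt hx0).continuousAt.continuousWithinAt
    · intro x hx
      simp only [interior_Ici, Set.mem_Ioi] at hx
      have hx0 : (0:ℝ) < x := by linarith
      rw [(F1_hasDerivAt hx0).deriv]
      have h : 1 + 1 / x ^ 2 - 2 / x = (1 - 1 / x) ^ 2 := by
        field_simp
        ring
      rw [h]
      have h2 : 1 / x < 1 := by rw [div_lt_one hx0]; exact hx
      have h3 : (0:ℝ) < 1 - 1 / x := by linarith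
      positivity
  have h := key self_mem_Ici hs.le hs
  simp only [Real.log_one, one_div, div_one, mul_zero, sub_zero] at h
  norm_num at h
  rw [one_div]
  linarith

lemma F2_hasDerivAt {x : ℝ} (hx : 0 < x) :
    HasDerivAt (fun s : ℝ => Real.log s - 2 * (s - 1) / (s + 1))
      (x⁻¹ - 4 / (x + 1) ^ 2) x := by
  have hne : x + 1 ≠ 0 := by positivity
  have h1 : HasDerivAt (fun s : ℝ => 2 * (s - 1) / (s + 1))
      ((2 * 1 * (x + 1) - 2 * (x - 1) * 1) / (x + 1) ^ 2) x :=
    (((hasDerivAt_id' x).sub_const 1).const_mul 2).div ((hasDerivAt_id' x).add_const 1) hne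
  have h2 := (Real.hasDerivAt_log hx.ne').fun_sub h1
  refine h2.congr_deriv ?_
  field_simp
  ring

lemma log_gt_frac {s : ℝ} (hs : 1 < s) : 2 * (s - 1) / (s + 1) < Real.log s := by
  have key : StrictMonoOn (fun s : ℝ => Real.log s - 2 * (s - 1) / (s + 1)) (Set.Ici 1) := by
    apply strictMonoOn_of_deriv_pos (convex_Ici 1)
    · intro x hx
      simp only [Set.mem_Ici] at hx
      have hx0 : (0:ℝ) < x := by linarith
      exact (F2_hasDerivAt hx0).continuousAt.continuousWithinAt
    · intro x hx
      simp only [interior_Ici, Set.mem_Ioi] at hx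
      have hx0 : (0:ℝ) < x := by linarith
      rw [(F2_hasDerivAt hx0).deriv]
      have h : x⁻¹ - 4 / (x + 1) ^ 2 = (x - 1) ^ 2 / (x * (x + 1) ^ 2) := by
        field_simp
        ring
      rw [h]
      have h1 : (0:ℝ) < (x - 1) ^ 2 := pow_pos (by linarith) 2
      exact div_pos h1 (by positivity)
  have h := key self_mem_Ici hs.le hs
  simp only [Real.log_one] at h
  norm_num at h
  linarith

lemma sq_log_lt {N : ℝ} (hN : 0 < N) :
    (Real.log (N + 1) - Real.log N) ^ 2 < 1 / (N * (N + 1)) := by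
  set s := Real.sqrt ((N + 1) / N) with hs
  have hdivpos : (0:ℝ) < (N + 1) / N := by positivity
  have hs0 : 0 < s := Real.sqrt_pos.2 hdivpos
  have hs2 : s ^ 2 = (N + 1) / N := Real.sq_sqrt hdivpos.le
  have hs1 : 1 < s := by
    have hd : 1 < (N + 1) / N := (one_lt_div hN).2 (by linarith)
    nlinarith [hs2, hs0, hd]
  have h2log : 2 * Real.log s = Real.log (N + 1) - Real.log N := by
    rw [hs, Real.log_sqrt hdivpos.le, Real.log_div (by positivity) hN.ne']
    ring
  have hlt := two_log_lt hs1
  rw [h2log] at hlt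
  have hL : 0 < Real.log (N + 1) - Real.log N := log_pos_aux hN
  have hsq : (Real.log (N + 1) - Real.log N) ^ 2 < (s - 1 / s) ^ 2 :=
    pow_lt_pow_left₀ hlt hL.le two_ne_zero
  have key : (s - 1 / s) ^ 2 = 1 / (N * (N + 1)) := by
    have h1 : (s - 1 / s) ^ 2 = s ^ 2 - 2 + 1 / s ^ 2 := by
      field_simp
      ring
    rw [h1, hs2]
    field_simp
    ring
  rwa [key] at hsq

lemma frac_lt_log {N : ℝ} (hN : 0 < N) :
    2 / (2 * N + 1) < Real.log (N + 1) - Real.log N := by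
  have hs1 : 1 < (N + 1) / N := (one_lt_div hN).2 (by linarith)
  have h := log_gt_frac hs1
  rw [Real.log_div (by positivity) hN.ne'] at h
  have heq : 2 * ((N + 1) / N - 1) / ((N + 1) / N + 1) = 2 / (2 * N + 1) := by
    rw [div_eq_div_iff (by positivity) (by positivity)]
    field_simp
    ring
  rwa [heq] at h

lemma L_hasDerivAt {N : ℝ} (hN : 0 < N) :
    HasDerivAt (fun x : ℝ => Real.log (x + 1) - Real.log x) ((N + 1)⁻¹ - N⁻¹) N := by
  have h1 : HasDerivAt (fun x : ℝ => Real.log (x + 1)) ((N + 1)⁻¹ * 1) N :=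
    (Real.hasDerivAt_log (by linarith)).comp N ((hasDerivAt_id' N).add_const 1)
  have h2 := h1.fun_sub (Real.hasDerivAt_log hN.ne')
  simpa using h2

noncomputable def hfun (N : ℝ) : ℝ :=
  gfun N + Real.log (Real.log (N + 1) - Real.log N)

lemma hfun_hasDerivAt {N : ℝ} (hN : 0 < N) :
    HasDerivAt hfun
      ((Real.log (N + 1) - Real.log N) +
        ((N + 1)⁻¹ - N⁻¹) / (Real.log (N + 1) - Real.log N)) N := by
  have hL := log_pos_aux hN
  have h1 : HasDerivAt (fun x : ℝ => Real.log (Real.log (x + 1) - Real.log x))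
      ((Real.log (N + 1) - Real.log N)⁻¹ * ((N + 1)⁻¹ - N⁻¹)) N :=
    HasDerivAt.comp (h₂ := Real.log) N (Real.hasDerivAt_log hL.ne') (L_hasDerivAt hN)
  have h2 := (gfun_hasDerivAt hN).fun_add h1
  refine h2.congr_deriv ?_
  rw [div_eq_inv_mul]

lemma hfun_anti : AntitoneOn hfun (Set.Ioi 0) := by
  apply antitoneOn_of_deriv_nonpos (convex_Ioi 0)
  · intro x hx
    simp only [Set.mem_Ioi] at hx
    exact (hfun_hasDerivAt hx).continuousAt.continuousWithinAt
  · intro x hx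
    rw [interior_Ioi] at hx
    simp only [Set.mem_Ioi] at hx
    exact (hfun_hasDerivAt hx).differentiableAt.differentiableWithinAt
  · intro x hx
    rw [interior_Ioi] at hx
    simp only [Set.mem_Ioi] at hx
    rw [(hfun_hasDerivAt hx).deriv]
    have hL := log_pos_aux hx
    have hsq := sq_log_lt hx
    set L := Real.log (x + 1) - Real.log x with hLdef
    have hinv : (x + 1)⁻¹ - x⁻¹ = -(1 / (x * (x + 1))) := by
      field_simp
      ring
    rw [hinv]
    have h1 : L + -(1 / (x * (x + 1))) / L = (L ^ 2 - 1 / (x * (x + 1))) / L := by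
      field_simp
      ring
    rw [h1]
    apply div_nonpos_of_nonpos_of_nonneg _ hL.le
    linarith

lemma L_eq {N : ℝ} (hN : 0 < N) :
    Real.log (N + 1) - Real.log N = Real.log (1 + 1 / N) := by
  rw [show (1:ℝ) + 1 / N = (N + 1) / N by field_simp, Real.log_div (by positivity) hN.ne']

lemma tendsto_NL : Filter.Tendsto (fun N : ℝ => N * Real.log (1 + 1 / N))
    Filter.atTop (nhds 1) := by
  simpa using Real.tendsto_mul_log_one_add_div_atTop 1

lemma tendsto_base : Filter.Tendsto (fun N : ℝ => 1 + 1 / N) Filter.atTop (nhds 1) := by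
  have h : Filter.Tendsto (fun N : ℝ => 1 / N) Filter.atTop (nhds 0) := by
    simpa [one_div] using tendsto_inv_atTop_zero
  simpa using (tendsto_const_nhds (x := (1:ℝ)) (f := Filter.atTop (α := ℝ))).add h

lemma tendsto_L0 : Filter.Tendsto (fun N : ℝ => Real.log (1 + 1 / N))
    Filter.atTop (nhds 0) := by
  have h := (Real.continuousAt_log one_ne_zero).tendsto.comp tendsto_base
  simpa [Function.comp_def] using h

lemma tendsto_logNL : Filter.Tendsto (fun N : ℝ => Real.log (N * Real.log (1 + 1 / N)))
    Filter.atTop (nhds 0) := by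
  have h := (Real.continuousAt_log one_ne_zero).tendsto.comp tendsto_NL
  simpa [Function.comp_def] using h

lemma hfun_tendsto : Filter.Tendsto hfun Filter.atTop (nhds 1) := by
  have key : Filter.Tendsto (fun N : ℝ =>
      N * Real.log (1 + 1 / N) + Real.log (1 + 1 / N)
        + Real.log (N * Real.log (1 + 1 / N))) Filter.atTop (nhds 1) := by
    have := (tendsto_NL.add tendsto_L0).add tendsto_logNL
    simpa using this
  apply key.congr'
  filter_upwards [Filter.eventually_gt_atTop (0:ℝ)] with N hN
  have hL := log_pos_aux hN
  rw [← L_eq hN]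
  set L := Real.log (N + 1) - Real.log N with hLdef
  have h1 : gfun N = (N + 1) * L + Real.log N := by
    rw [hLdef, gfun]
    ring
  rw [hfun, h1, Real.log_mul hN.ne' hL.ne']
  ring

lemma ge_of_anti_tendsto {f : ℝ → ℝ} {c : ℝ} (hf : AntitoneOn f (Set.Ioi 0))
    (hl : Filter.Tendsto f Filter.atTop (nhds c)) {N : ℝ} (hN : 0 < N) : c ≤ f N := by
  by_contra hcon
  push_neg at hcon
  have h1 : ∀ᶠ M in Filter.atTop, f N < f M := hl.eventually (eventually_gt_nhds hcon)
  obtain ⟨M, hM1, hM2⟩ := (h1.and (Filter.eventually_ge_atTop (max N 1))).exists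
  have hNM : N ≤ M := le_trans (le_max_left _ _) hM2
  have hM0 : (0:ℝ) < M := lt_of_lt_of_le one_pos (le_trans (le_max_right _ _) hM2)
  exact absurd (hf hN hM0 hNM) (not_le.2 hM1)

lemma hfun_ge {N : ℝ} (hN : 0 < N) : 1 ≤ hfun N :=
  ge_of_anti_tendsto hfun_anti hfun_tendsto hN

noncomputable def psi (N : ℝ) : ℝ := 1 + Real.log (N + 1 / 2) - gfun N

lemma psi_hasDerivAt {N : ℝ} (hN : 0 < N) :
    HasDerivAt psi ((N + 1 / 2)⁻¹ - (Real.log (N + 1) - Real.log N)) N := by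
  have h1 : HasDerivAt (fun x : ℝ => 1 + Real.log (x + 1 / 2)) ((N + 1 / 2)⁻¹ * 1) N :=
    (((Real.hasDerivAt_log (by positivity)).comp N
      ((hasDerivAt_id' N).add_const (1 / 2)))).const_add 1
  have h2 := h1.sub (gfun_hasDerivAt hN)
  have h3 : (N + 1 / 2)⁻¹ - (Real.log (N + 1) - Real.log N)
      = (N + 1 / 2)⁻¹ * 1 - (Real.log (N + 1) - Real.log N) := by ring
  rw [h3]
  exact h2

lemma psi_anti : AntitoneOn psi (Set.Ioi 0) := by
  apply antitoneOn_of_deriv_nonpos (convex_Ioi 0)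
  · intro x hx
    simp only [Set.mem_Ioi] at hx
    exact (psi_hasDerivAt hx).continuousAt.continuousWithinAt
  · intro x hx
    rw [interior_Ioi] at hx
    exact (psi_hasDerivAt hx).differentiableAt.differentiableWithinAt
  · intro x hx
    rw [interior_Ioi] at hx
    simp only [Set.mem_Ioi] at hx
    rw [(psi_hasDerivAt hx).deriv]
    have h := frac_lt_log hx
    have heq : (x + 1 / 2)⁻¹ = 2 / (2 * x + 1) := by
      rw [inv_eq_one_div, div_eq_div_iff (by positivity) (by positivity)]
      ring
    rw [heq]
    linarith

lemma psi_tendsto : Filter.Tendsto psi Filter.atTop (nhds 0) := by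
  have t1 : Filter.Tendsto (fun N : ℝ => Real.log (1 + 1 / 2 * (1 / N)))
      Filter.atTop (nhds 0) := by
    have hb : Filter.Tendsto (fun N : ℝ => 1 + 1 / 2 * (1 / N)) Filter.atTop (nhds 1) := by
      have h : Filter.Tendsto (fun N : ℝ => 1 / N) Filter.atTop (nhds 0) := by
        simpa [one_div] using tendsto_inv_atTop_zero
      have h2 := (tendsto_const_nhds (x := (1:ℝ))
        (f := Filter.atTop (α := ℝ))).add (h.const_mul (1 / 2))
      have h3 : (1:ℝ) + 1 / 2 * 0 = 1 := by norm_num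
      rw [h3] at h2
      exact h2
    simpa [Function.comp_def] using (Real.continuousAt_log one_ne_zero).tendsto.comp hb
  have key : Filter.Tendsto (fun N : ℝ =>
      1 - N * Real.log (1 + 1 / N) - Real.log (1 + 1 / N)
        + Real.log (1 + 1 / 2 * (1 / N))) Filter.atTop (nhds 0) := by
    have := ((tendsto_const_nhds (x := (1:ℝ)) (f := Filter.atTop (α := ℝ))).sub
      tendsto_NL).sub tendsto_L0 |>.add t1
    simpa using this
  apply key.congr'
  filter_upwards [Filter.eventually_gt_atTop (0:ℝ)] with N hN
  have hL := log_pos_aux hN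
  rw [← L_eq hN]
  set L := Real.log (N + 1) - Real.log N with hLdef
  have h1 : gfun N = (N + 1) * L + Real.log N := by rw [hLdef, gfun]; ring
  have h2 : Real.log (N + 1 / 2) = Real.log (1 + 1 / 2 * (1 / N)) + Real.log N := by
    rw [show (1:ℝ) + 1 / 2 * (1 / N) = (N + 1 / 2) / N by field_simp,
      Real.log_div (by positivity) hN.ne']
    ring
  rw [psi, h1, h2]
  ring

lemma psi_nonneg {N : ℝ} (hN : 0 ≤ N) : 0 ≤ psi N := by
  rcases eq_or_lt_of_le hN with h | h
  · rw [← h]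
    have : psi 0 = 1 + Real.log (1 / 2) := by
      simp [psi, gfun_zero]
    rw [this]
    have h2 : Real.log (1 / 2) = -Real.log 2 := by
      rw [one_div, Real.log_inv]
    rw [h2]
    have := Real.log_two_lt_d9
    norm_num at this ⊢
    linarith
  · exact ge_of_anti_tendsto psi_anti psi_tendsto h

noncomputable def Efun (N : ℝ) : ℝ := Real.exp (gfun N - 1)

lemma Efun_hasDerivAt {N : ℝ} (hN : 0 < N) :
    HasDerivAt Efun (Real.exp (gfun N - 1) * (Real.log (N + 1) - Real.log N)) N :=
  ((gfun_hasDerivAt hN).sub_const 1).exp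

lemma Efun_le {N : ℝ} (hN : 0 ≤ N) : Efun N ≤ N + 1 / 2 := by
  have h := psi_nonneg hN
  rw [psi] at h
  have h2 : gfun N - 1 ≤ Real.log (N + 1 / 2) := by linarith
  calc Efun N ≤ Real.exp (Real.log (N + 1 / 2)) := Real.exp_le_exp.2 h2
    _ = N + 1 / 2 := Real.exp_log (by positivity)

lemma Efun_continuous : Continuous Efun :=
  Real.continuous_exp.comp (gfun_continuous.sub continuous_const)

lemma Efun_sub_mono : MonotoneOn (fun N => Efun N - N) (Set.Ici 0) := by
  apply monotoneOn_of_deriv_nonneg (convex_Ici 0)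
  · exact (Efun_continuous.sub continuous_id).continuousOn
  · intro x hx
    rw [interior_Ici] at hx
    exact ((Efun_hasDerivAt hx).sub (hasDerivAt_id' x)).differentiableAt.differentiableWithinAt
  · intro x hx
    rw [interior_Ici] at hx
    simp only [Set.mem_Ioi] at hx
    rw [((Efun_hasDerivAt hx).fun_sub (hasDerivAt_id' x)).deriv]
    have hL := log_pos_aux hx
    have key : Real.exp (gfun x - 1) * (Real.log (x + 1) - Real.log x)
        = Real.exp (hfun x - 1) := by
      rw [hfun]
      rw [show gfun x + Real.log (Real.log (x + 1) - Real.log x) - 1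
        = (gfun x - 1) + Real.log (Real.log (x + 1) - Real.log x) by ring]
      rw [Real.exp_add, Real.exp_log hL]
    rw [key]
    have h1 : (0:ℝ) ≤ hfun x - 1 := by linarith [hfun_ge hx]
    have h2 : (1:ℝ) ≤ Real.exp (hfun x - 1) := by
      calc (1:ℝ) = Real.exp 0 := Real.exp_zero.symm
        _ ≤ Real.exp (hfun x - 1) := Real.exp_le_exp.2 h1
    linarith

lemma expg_concave : ConcaveOn ℝ (Set.Ici 0) (fun N => Real.exp (gfun N)) := by
  apply concaveOn_of_hasDerivWithinAt2_nonpos (convex_Ici 0)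
    (f' := fun x => Real.exp (gfun x) * (Real.log (x + 1) - Real.log x))
    (f'' := fun x => Real.exp (gfun x) *
      ((Real.log (x + 1) - Real.log x) ^ 2 + ((x + 1)⁻¹ - x⁻¹)))
  · exact (Real.continuous_exp.comp gfun_continuous).continuousOn
  · intro x hx
    rw [interior_Ici] at hx
    simp only [Set.mem_Ioi] at hx
    exact (gfun_hasDerivAt hx).exp.hasDerivWithinAt
  · intro x hx
    rw [interior_Ici] at hx
    simp only [Set.mem_Ioi] at hx
    have h := (gfun_hasDerivAt hx).exp.mul (L_hasDerivAt hx)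
    have heq : Real.exp (gfun x) * ((Real.log (x + 1) - Real.log x) ^ 2 + ((x + 1)⁻¹ - x⁻¹))
        = Real.exp (gfun x) * (Real.log (x + 1) - Real.log x) * (Real.log (x + 1) - Real.log x)
          + Real.exp (gfun x) * ((x + 1)⁻¹ - x⁻¹) := by ring
    rw [heq]
    exact h.hasDerivWithinAt
  · intro x hx
    rw [interior_Ici] at hx
    simp only [Set.mem_Ioi] at hx
    apply mul_nonpos_of_nonneg_of_nonpos (Real.exp_nonneg _)
    have hsq := sq_log_lt hx
    have hinv : (x + 1)⁻¹ - x⁻¹ = -(1 / (x * (x + 1))) := by field_simp; ring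
    rw [hinv]
    linarith

lemma taylor_log {u : ℝ} (h0 : 0 < u) (h1 : u ≤ 1 / 2) :
    |Real.log (1 + u) - (u - u ^ 2 / 2)| ≤ 2 * u ^ 3 := by
  have habs : |(-u : ℝ)| < 1 := by rw [abs_neg, abs_of_pos h0]; linarith
  have h := Real.abs_log_sub_add_sum_range_le habs 2
  have hsum : (∑ i ∈ Finset.range 2, (-u) ^ (i + 1) / (i + 1)) = -u + u ^ 2 / 2 := by
    simp [Finset.sum_range_succ]
    ring
  rw [hsum] at h
  have heq : -u + u ^ 2 / 2 + Real.log (1 - -u) = Real.log (1 + u) - (u - u ^ 2 / 2) := by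
    rw [show (1:ℝ) - -u = 1 + u by ring]
    ring
  rw [heq] at h
  have hrhs : |(-u:ℝ)| ^ (2 + 1) / (1 - |(-u:ℝ)|) ≤ 2 * u ^ 3 := by
    rw [abs_neg, abs_of_pos h0]
    rw [div_le_iff₀ (by linarith)]
    have h3 : u ^ (2 + 1) = u ^ 3 := by norm_num
    rw [h3]
    nlinarith [pow_pos h0 3, pow_pos h0 4]
  linarith

lemma psi_le {N : ℝ} (hN : 2 ≤ N) : psi N ≤ 4 / N ^ 2 := by
  have hN0 : (0:ℝ) < N := by linarith
  have hu0 : (0:ℝ) < 1 / N := by positivity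
  have hu2 : 1 / N ≤ 1 / 2 := by
    rw [div_le_div_iff₀ hN0 (by norm_num)]
    linarith
  have hv0 : (0:ℝ) < 1 / (2 * N) := by positivity
  have hv2 : 1 / (2 * N) ≤ 1 / 2 := by
    rw [div_le_div_iff₀ (by positivity) (by norm_num)]
    linarith
  have a1 := abs_le.1 (taylor_log hu0 hu2)
  have a2 := abs_le.1 (taylor_log hv0 hv2)
  have a1' : 1 / N - 1 / (2 * N ^ 2) - 2 / N ^ 3 ≤ Real.log (1 + 1 / N) := by
    have := a1.1
    have heq : 1 / N - (1 / N) ^ 2 / 2 - 2 * (1 / N) ^ 3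
        = 1 / N - 1 / (2 * N ^ 2) - 2 / N ^ 3 := by
      field_simp
    linarith [heq ▸ (by linarith [a1.1] :
      1 / N - (1 / N) ^ 2 / 2 - 2 * (1 / N) ^ 3 ≤ Real.log (1 + 1 / N))]
  have a2' : Real.log (1 + 1 / (2 * N)) ≤ 1 / (2 * N) - 1 / (8 * N ^ 2) + 1 / (4 * N ^ 3) := by
    have heq : 1 / (2 * N) - (1 / (2 * N)) ^ 2 / 2 + 2 * (1 / (2 * N)) ^ 3
        = 1 / (2 * N) - 1 / (8 * N ^ 2) + 1 / (4 * N ^ 3) := by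
      field_simp
      ring
    linarith [heq ▸ (by linarith [a2.2] :
      Real.log (1 + 1 / (2 * N)) ≤ 1 / (2 * N) - (1 / (2 * N)) ^ 2 / 2 + 2 * (1 / (2 * N)) ^ 3)]
  have e1 : psi N = 1 - (N + 1) * Real.log (1 + 1 / N) + Real.log (1 + 1 / (2 * N)) := by
    have hL := log_pos_aux hN0
    have h1 : gfun N = (N + 1) * (Real.log (N + 1) - Real.log N) + Real.log N := by
      rw [gfun]
      ring
    have h2 : Real.log (N + 1 / 2) = Real.log (1 + 1 / (2 * N)) + Real.log N := by
      rw [show (1:ℝ) + 1 / (2 * N) = (N + 1 / 2) / N by field_simp,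
        Real.log_div (by positivity) hN0.ne']
      ring
    rw [psi, h1, h2, L_eq hN0]
    ring
  rw [e1]
  have hmul := mul_le_mul_of_nonneg_left a1' (by linarith : (0:ℝ) ≤ N + 1)
  have final : 1 - (N + 1) * (1 / N - 1 / (2 * N ^ 2) - 2 / N ^ 3)
      + (1 / (2 * N) - 1 / (8 * N ^ 2) + 1 / (4 * N ^ 3)) ≤ 4 / N ^ 2 := by
    have hdiff : 4 / N ^ 2 - (1 - (N + 1) * (1 / N - 1 / (2 * N ^ 2) - 2 / N ^ 3)
        + (1 / (2 * N) - 1 / (8 * N ^ 2) + 1 / (4 * N ^ 3)))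
        = (13 * N - 18) / (8 * N ^ 3) := by
      field_simp
      ring
    have hpos : (0:ℝ) ≤ (13 * N - 18) / (8 * N ^ 3) :=
      div_nonneg (by linarith) (by positivity)
    linarith
  linarith

noncomputable def phi (N : ℝ) : ℝ := N + 1 / 2 - Efun N

lemma phi_nonneg {N : ℝ} (hN : 0 ≤ N) : 0 ≤ phi N := by
  have := Efun_le hN
  rw [phi]
  linarith

lemma phi_le {N : ℝ} (hN : 2 ≤ N) : phi N ≤ 5 / N := by
  have hN0 : (0:ℝ) < N := by linarith
  have hE : Efun N = (N + 1 / 2) * Real.exp (-psi N) := by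
    rw [Efun, show gfun N - 1 = Real.log (N + 1 / 2) + -psi N by rw [psi]; ring,
      Real.exp_add, Real.exp_log (by positivity)]
  have hexp : 1 - psi N ≤ Real.exp (-psi N) := by
    have := Real.add_one_le_exp (-psi N)
    linarith
  have hEf : (N + 1 / 2) * (1 - psi N) ≤ Efun N := by
    rw [hE]
    exact mul_le_mul_of_nonneg_left hexp (by linarith)
  have h1 : phi N ≤ (N + 1 / 2) * psi N := by
    rw [phi]
    nlinarith
  have h2 : (N + 1 / 2) * psi N ≤ (N + 1 / 2) * (4 / N ^ 2) :=
    mul_le_mul_of_nonneg_left (psi_le hN) (by linarith)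
  have h3 : (N + 1 / 2) * (4 / N ^ 2) ≤ 5 / N := by
    have hdiff : 5 / N - (N + 1 / 2) * (4 / N ^ 2) = (N - 2) / N ^ 2 := by
      field_simp
      ring
    have hpos : (0:ℝ) ≤ (N - 2) / N ^ 2 := div_nonneg (by linarith) (by positivity)
    linarith
  linarith

lemma phi_tendsto : Filter.Tendsto phi Filter.atTop (nhds 0) := by
  have h5 : Filter.Tendsto (fun N : ℝ => 5 / N) Filter.atTop (nhds 0) := by
    have h : Filter.Tendsto (fun N : ℝ => 1 / N) Filter.atTop (nhds 0) := by
      simpa [one_div] using tendsto_inv_atTop_zero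
    have := h.const_mul (5:ℝ)
    simpa [div_eq_mul_inv, mul_comm] using this
  apply tendsto_of_tendsto_of_tendsto_of_le_of_le' tendsto_const_nhds h5
  · filter_upwards [Filter.eventually_ge_atTop (0:ℝ)] with N hN
    exact phi_nonneg hN
  · filter_upwards [Filter.eventually_ge_atTop (2:ℝ)] with N hN
    exact phi_le hN

/-- Properties of `δ(x) = g⁻¹(log x) - x/e + 1/2` on `[1,∞)`: writing
`f(x) = g⁻¹(log x) = -1/2 + x/e + δ(x)`, one has `0 ≤ δ(x) ≤ δ(1) = 1/2 - 1/e`,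
`δ` is convex and decreasing on `[1,∞)`, and `δ(x) → 0` as `x → ∞`. -/
theorem delta_properties
    (ginv : ℝ → ℝ)
    (hginv_left : ∀ N : ℝ, 0 ≤ N → ginv (gfun N) = N)
    (hginv_right : ∀ S : ℝ, 0 ≤ S → 0 ≤ ginv S ∧ gfun (ginv S) = S) :
    ∀ δ : ℝ → ℝ, (∀ x : ℝ, δ x = ginv (Real.log x) - x / Real.exp 1 + 1 / 2) →
      ((∀ x : ℝ, 1 ≤ x → ginv (Real.log x) = -(1 / 2) + x / Real.exp 1 + δ x) ∧
       (∀ x : ℝ, 1 ≤ x → 0 ≤ δ x ∧ δ x ≤ δ 1) ∧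
       δ 1 = 1 / 2 - 1 / Real.exp 1 ∧
       ConvexOn ℝ (Set.Ici 1) δ ∧
       AntitoneOn δ (Set.Ici 1) ∧
       Filter.Tendsto δ Filter.atTop (nhds 0)) := by
  intro δ hδ
  have ginv_mono : ∀ S T : ℝ, 0 ≤ S → 0 ≤ T → S ≤ T → ginv S ≤ ginv T := by
    intro S T hS hT hST
    obtain ⟨hS0, hSg⟩ := hginv_right S hS
    obtain ⟨hT0, hTg⟩ := hginv_right T hT
    by_contra hcon
    push_neg at hcon
    have h := gfun_strictMono (Set.mem_Ici.2 hT0) (Set.mem_Ici.2 hS0) hcon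
    rw [hSg, hTg] at h
    linarith
  have key : ∀ x : ℝ, 1 ≤ x →
      0 ≤ ginv (Real.log x) ∧ x = Real.exp (gfun (ginv (Real.log x))) := by
    intro x hx
    have hlog : 0 ≤ Real.log x := Real.log_nonneg hx
    obtain ⟨h1, h2⟩ := hginv_right _ hlog
    exact ⟨h1, by rw [h2, Real.exp_log (by linarith)]⟩
  have hdelta : ∀ x : ℝ, 1 ≤ x →
      δ x = ginv (Real.log x) + 1 / 2 - Efun (ginv (Real.log x)) := by
    intro x hx
    obtain ⟨h1, h2⟩ := key x hx
    rw [hδ x]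
    have h3 : x / Real.exp 1 = Efun (ginv (Real.log x)) := by
      rw [Efun, Real.exp_sub, ← h2]
    rw [h3]
    ring
  have hanti : AntitoneOn δ (Set.Ici 1) := by
    intro x hx y hy hxy
    simp only [Set.mem_Ici] at hx hy
    obtain ⟨hx0, hx2⟩ := key x hx
    obtain ⟨hy0, hy2⟩ := key y hy
    have hlogle : Real.log x ≤ Real.log y := Real.log_le_log (by linarith) hxy
    have hNM : ginv (Real.log x) ≤ ginv (Real.log y) :=
      ginv_mono _ _ (Real.log_nonneg hx) (Real.log_nonneg hy) hlogle
    have hmono := Efun_sub_mono (Set.mem_Ici.2 hx0) (Set.mem_Ici.2 hy0) hNM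
    simp only at hmono
    rw [hdelta x hx, hdelta y hy]
    linarith
  have hnonneg : ∀ x : ℝ, 1 ≤ x → 0 ≤ δ x := by
    intro x hx
    obtain ⟨h1, _⟩ := key x hx
    rw [hdelta x hx]
    linarith [Efun_le h1]
  refine ⟨?_, ?_, ?_, ?_, hanti, ?_⟩
  · intro x hx
    rw [hδ x]
    ring
  · intro x hx
    exact ⟨hnonneg x hx, hanti Set.self_mem_Ici hx hx⟩
  · have h0 : ginv (Real.log 1) = 0 := by
      have h := hginv_left 0 le_rfl
      rw [gfun_zero] at h
      rw [Real.log_one, h]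
    rw [hδ 1, h0]
    ring
  · refine ⟨convex_Ici 1, ?_⟩
    intro x hx y hy a b ha hb hab
    simp only [Set.mem_Ici] at hx hy
    simp only [smul_eq_mul]
    have hz : 1 ≤ a * x + b * y := by nlinarith
    obtain ⟨hN0, hx2⟩ := key x hx
    obtain ⟨hM0, hy2⟩ := key y hy
    set N := ginv (Real.log x) with hNdef
    set M := ginv (Real.log y) with hMdef
    have hcc := expg_concave.2 (Set.mem_Ici.2 hN0) (Set.mem_Ici.2 hM0) ha hb hab
    simp only [smul_eq_mul] at hcc
    have hzle : a * x + b * y ≤ Real.exp (gfun (a * N + b * M)) := by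
      calc a * x + b * y = a * Real.exp (gfun N) + b * Real.exp (gfun M) := by
            rw [← hx2, ← hy2]
        _ ≤ Real.exp (gfun (a * N + b * M)) := hcc
    have hab0 : 0 ≤ a * N + b * M := add_nonneg (mul_nonneg ha hN0) (mul_nonneg hb hM0)
    have hg0 : 0 ≤ gfun (a * N + b * M) := gfun_nonneg hab0
    have hlogz : Real.log (a * x + b * y) ≤ gfun (a * N + b * M) := by
      calc Real.log (a * x + b * y) ≤ Real.log (Real.exp (gfun (a * N + b * M))) :=
            Real.log_le_log (by linarith) hzle
        _ = gfun (a * N + b * M) := Real.log_exp _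
    have hkey : ginv (Real.log (a * x + b * y)) ≤ a * N + b * M := by
      have h := ginv_mono _ _ (Real.log_nonneg hz) hg0 hlogz
      rwa [hginv_left _ hab0] at h
    rw [hδ (a * x + b * y), hδ x, hδ y]
    have expand : a * (ginv (Real.log x) - x / Real.exp 1 + 1 / 2)
        + b * (ginv (Real.log y) - y / Real.exp 1 + 1 / 2)
        = (a * N + b * M) - (a * x + b * y) / Real.exp 1 + 1 / 2 := by
      rw [← hNdef, ← hMdef]
      linear_combination hab / 2
    rw [expand]
    linarith
  · rw [Metric.tendsto_atTop]
    intro ε hε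
    obtain ⟨N₀, hN₀⟩ := Metric.tendsto_atTop.1 phi_tendsto ε hε
    set N₁ := max N₀ 0 with hN₁def
    have hφ := hN₀ N₁ (le_max_left _ _)
    have hN₁0 : (0:ℝ) ≤ N₁ := le_max_right _ _
    refine ⟨Real.exp (gfun N₁), fun x hx => ?_⟩
    have hxe1 : 1 ≤ Real.exp (gfun N₁) := by
      rw [← Real.exp_zero]
      exact Real.exp_le_exp.2 (gfun_nonneg hN₁0)
    have hx1 : 1 ≤ x := le_trans hxe1 hx
    have h1 : δ x ≤ δ (Real.exp (gfun N₁)) :=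
      hanti (Set.mem_Ici.2 hxe1) (Set.mem_Ici.2 hx1) hx
    have h2 : δ (Real.exp (gfun N₁)) = phi N₁ := by
      rw [hdelta _ hxe1, Real.log_exp, hginv_left _ hN₁0, phi]
    have h3 : phi N₁ < ε := by
      rw [Real.dist_eq, sub_zero, abs_of_nonneg (phi_nonneg hN₁0)] at hφ
      exact hφ
    rw [Real.dist_eq, sub_zero, abs_of_nonneg (hnonneg x hx1)]
    rw [h2] at h1
    linarith
end

section
/- The quantum Entropy Power Inequality implies the Entropy Photon-number Inequality up to a small violation: for any λ ∈ [0,1] and S_1, S_2 ≥ 0, setting N_i = g⁻¹(S_i) and N_Y = g⁻¹(ln(λ e^{S_1} + (1-λ) e^{S_2})), one has N_Y ≥ λ N_1 + (1-λ) N_2 - (1/2 - 1/e). -/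
lemma mono_Icc {b : ℝ} {f f' : ℝ → ℝ}
    (hd : ∀ x ∈ Set.Icc (0:ℝ) b, HasDerivAt f (f' x) x)
    (hnn : ∀ x ∈ Set.Ioo (0:ℝ) b, 0 ≤ f' x) (hb : 0 ≤ b) :
    f 0 ≤ f b := by
  rcases eq_or_lt_of_le hb with h|h
  · rw [← h]
  · have hmono := monotoneOn_of_deriv_nonneg (convex_Icc 0 b)
      (fun x hx => (hd x hx).continuousAt.continuousWithinAt)
      (fun x hx => by
        rw [interior_Icc] at hx
        exact (hd x (Set.mem_Icc.mpr ⟨hx.1.le, hx.2.le⟩)).differentiableAt.differentiableWithinAt)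
      (fun x hx => by
        rw [interior_Icc] at hx
        rw [(hd x ⟨hx.1.le, hx.2.le⟩).deriv]
        exact hnn x hx)
    exact hmono (Set.left_mem_Icc.2 hb) (Set.right_mem_Icc.2 hb) hb

/-- Padé lower bound: `2x/(2+x) ≤ log (1+x)` for `x ≥ 0`. -/
lemma pade_log {x : ℝ} (hx : 0 ≤ x) : 2*x/(2+x) ≤ Real.log (1+x) := by
  have := mono_Icc (b := x) (f := fun y => Real.log (1+y) - 2*y/(2+y))
    (f' := fun y => 1/(1+y) - (2*(2+y) - 2*y)/(2+y)^2)
    (fun y hy => by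
      have h1 : (0:ℝ) < 1 + y := by linarith [hy.1]
      have h2 : (0:ℝ) < 2 + y := by linarith [hy.1]
      have hlog : HasDerivAt (fun y : ℝ => Real.log (1+y)) (1/(1+y)) y := by
        simpa using (((hasDerivAt_id y).const_add 1).log h1.ne')
      have hdiv : HasDerivAt (fun y : ℝ => 2*y/(2+y)) ((2*(2+y) - 2*y)/(2+y)^2) y := by
        exact (((hasDerivAt_id y).const_mul 2).div ((hasDerivAt_id y).const_add 2) h2.ne').congr_deriv (by simp only [id_eq]; ring)
      exact hlog.sub hdiv)
    (fun y hy => by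
      have h1 : (0:ℝ) < 1 + y := by linarith [hy.1]
      have h2 : (0:ℝ) < 2 + y := by linarith [hy.1]
      rw [div_sub_div _ _ h1.ne' (by positivity), le_div_iff₀ (by positivity)]
      nlinarith [sq_nonneg y, hy.1]) hx
  simp at this
  linarith

/-- `log (1+t) ≤ t(3+2t)/(3(1+t))` for `t ≥ 0`. -/
lemma log_upper {t : ℝ} (ht : 0 ≤ t) : Real.log (1+t) ≤ t*(3+2*t)/(3*(1+t)) := by
  have := mono_Icc (b := t) (f := fun y => y*(3+2*y)/(3*(1+y)) - Real.log (1+y))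
    (f' := fun y => ((3+4*y)*(3*(1+y)) - (y*(3+2*y))*3)/(3*(1+y))^2 - 1/(1+y))
    (fun y hy => by
      have h1 : (0:ℝ) < 1 + y := by linarith [hy.1]
      have hlog : HasDerivAt (fun y : ℝ => Real.log (1+y)) (1/(1+y)) y := by
        simpa using (((hasDerivAt_id y).const_add 1).log h1.ne')
      have hnum : HasDerivAt (fun y : ℝ => y*(3+2*y)) (3+4*y) y := by
        exact ((hasDerivAt_id' y).mul (((hasDerivAt_id' y).const_mul 2).const_add 3)).congr_deriv (by ring)
      have hden : HasDerivAt (fun y : ℝ => 3*(1+y)) 3 y := by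
        simpa using ((hasDerivAt_id y).const_add 1).const_mul 3
      exact (hnum.div hden (by positivity)).sub hlog)
    (fun y hy => by
      have h1 : (0:ℝ) < 1 + y := by linarith [hy.1]
      rw [sub_nonneg, div_le_div_iff₀ (by positivity) (by positivity)]
      nlinarith [hy.1, sq_nonneg y]) ht
  simp at this
  linarith

/-- `log (1+t) - log (1-t) ≤ 2t + 2t³/(3(1-t²))` for `0 ≤ t < 1`. -/
lemma log_ratio_upper {t : ℝ} (ht : 0 ≤ t) (ht1 : t < 1) :
    Real.log (1+t) - Real.log (1-t) ≤ 2*t + 2*t^3/(3*(1-t^2)) := by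
  have := mono_Icc (b := t)
    (f := fun y => 2*y + 2*y^3/(3*(1-y^2)) - (Real.log (1+y) - Real.log (1-y)))
    (f' := fun y => (2 + (2*(3*y^2)*(3*(1-y^2)) - (2*y^3)*(3*(-(2*y))))/(3*(1-y^2))^2)
        - (1/(1+y) - (-1)/(1-y)))
    (fun y hy => by
      have h1 : (0:ℝ) < 1 + y := by linarith [hy.1]
      have h2 : (0:ℝ) < 1 - y := by linarith [hy.2, ht1]
      have hlog1 : HasDerivAt (fun y : ℝ => Real.log (1+y)) (1/(1+y)) y := by
        simpa using (((hasDerivAt_id y).const_add 1).log h1.ne')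
      have hlog2 : HasDerivAt (fun y : ℝ => Real.log (1-y)) ((-1)/(1-y)) y := by
        have : HasDerivAt (fun y : ℝ => 1 - y) (-1) y := by
          simpa using ((hasDerivAt_id y).const_sub 1)
        simpa using this.log h2.ne'
      have hnum : HasDerivAt (fun y : ℝ => 2*y^3) (2*(3*y^2)) y := by
        simpa using ((hasDerivAt_pow 3 y).const_mul 2).congr_deriv (by ring)
      have hden : HasDerivAt (fun y : ℝ => 3*(1-y^2)) (3*(-(2*y))) y := by
        have : HasDerivAt (fun y : ℝ => 1 - y^2) (-(2*y)) y := by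
          exact ((hasDerivAt_pow 2 y).const_sub 1).congr_deriv (by norm_num)
        exact this.const_mul 3
      have h3 : (0:ℝ) < 1 - y^2 := by nlinarith
      have hquot := hnum.div hden (by positivity : (0:ℝ) < 3*(1-y^2)).ne'
      exact ((((hasDerivAt_id y).const_mul 2).congr_deriv (by norm_num)).add hquot).sub (hlog1.sub hlog2))
    (fun y hy => by
      have h1 : (0:ℝ) < 1 + y := by linarith [hy.1]
      have h2 : (0:ℝ) < 1 - y := by linarith [hy.2, ht1]
      have h3 : (0:ℝ) < 1 - y^2 := by nlinarith
      have hkey : (2 + (2*(3*y^2)*(3*(1-y^2)) - (2*y^3)*(3*(-(2*y))))/(3*(1-y^2))^2)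
          - (1/(1+y) - (-1)/(1-y)) = (4/3)*y^4/(1-y^2)^2 := by
        field_simp
        ring
      rw [hkey]
      positivity) ht
  simp at this
  linarith

/-- `exp (-t) ≤ 1 - t + t²/2` for `t ≥ 0`. -/
lemma exp_neg_upper {t : ℝ} (ht : 0 ≤ t) : Real.exp (-t) ≤ 1 - t + t^2/2 := by
  have := mono_Icc (b := t)
    (f := fun y => 1 - y + y^2/2 - Real.exp (-y))
    (f' := fun y => -1 + 2*y/2 - (-Real.exp (-y)))
    (fun y hy => by
      have hexp : HasDerivAt (fun y : ℝ => Real.exp (-y)) (-Real.exp (-y)) y := by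
        exact ((Real.hasDerivAt_exp (-y)).comp y ((hasDerivAt_id' y).neg)).congr_deriv (by ring)
      have hpoly : HasDerivAt (fun y : ℝ => 1 - y + y^2/2) (-1 + 2*y/2) y := by
        have := ((hasDerivAt_id y).const_sub 1).add ((hasDerivAt_pow 2 y).div_const 2)
        refine this.congr_deriv (by norm_num)
      exact hpoly.sub hexp)
    (fun y hy => by
      have h := Real.add_one_le_exp (-y)
      linarith) ht
  simp only [neg_zero, Real.exp_zero] at this
  norm_num at this
  linarith

/-- `1 - t + t²/2 - t³/6 ≤ exp (-t)` for `t ≥ 0`. -/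
lemma exp_neg_lower {t : ℝ} (ht : 0 ≤ t) : 1 - t + t^2/2 - t^3/6 ≤ Real.exp (-t) := by
  have := mono_Icc (b := t)
    (f := fun y => Real.exp (-y) - (1 - y + y^2/2 - y^3/6))
    (f' := fun y => -Real.exp (-y) - (-1 + 2*y/2 - 3*y^2/6))
    (fun y hy => by
      have hexp : HasDerivAt (fun y : ℝ => Real.exp (-y)) (-Real.exp (-y)) y := by
        exact ((Real.hasDerivAt_exp (-y)).comp y ((hasDerivAt_id' y).neg)).congr_deriv (by ring)
      have hpoly : HasDerivAt (fun y : ℝ => 1 - y + y^2/2 - y^3/6) (-1 + 2*y/2 - 3*y^2/6) y := by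
        have := (((hasDerivAt_id y).const_sub 1).add ((hasDerivAt_pow 2 y).div_const 2)).sub
          ((hasDerivAt_pow 3 y).div_const 6)
        refine this.congr_deriv (by norm_num)
      exact hexp.sub hpoly)
    (fun y hy => by
      have h := exp_neg_upper hy.1.le
      linarith) ht
  simp only [neg_zero, Real.exp_zero] at this
  norm_num at this
  linarith

lemma gfun_exp_upper {N : ℝ} (hN : 0 ≤ N) : Real.exp (gfun N) ≤ Real.exp 1 * (N + 1/2) := by
  rcases eq_or_lt_of_le hN with h|h
  · have : gfun N = 0 := by rw [← h]; simp [gfun]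
    rw [this, Real.exp_zero, ← h]
    nlinarith [Real.exp_one_gt_d9]
  · set t : ℝ := 1/(2*N+1) with htdef
    have h2N : (0:ℝ) < 2*N+1 := by linarith
    have ht0 : 0 < t := by positivity
    have ht1 : t < 1 := by rw [htdef, div_lt_one h2N]; linarith
    have hNhalf : (0:ℝ) < N + 1/2 := by linarith
    have hlog1 : Real.log (1+t) = Real.log (N+1) - Real.log (N+1/2) := by
      rw [show (1+t) = (N+1)/(N+1/2) by rw [htdef]; field_simp; ring,
        Real.log_div (by linarith) hNhalf.ne']
    have hlog2 : Real.log (1-t) = Real.log N - Real.log (N+1/2) := by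
      rw [show (1-t) = N/(N+1/2) by rw [htdef]; field_simp; ring,
        Real.log_div h.ne' hNhalf.ne']
    have hA := log_ratio_upper ht0.le ht1
    have hB := log_upper ht0.le
    have hNt : N = (1-t)/(2*t) := by rw [htdef]; field_simp; ring
    have hkey : t*(3+2*t)/(3*(1+t)) + N*(2*t + 2*t^3/(3*(1-t^2))) = 1 := by
      rw [hNt]
      have h1t : (0:ℝ) < 1 + t := by linarith
      have h2t : (0:ℝ) < 1 - t := by linarith
      have h3 : (0:ℝ) < 1 - t^2 := by nlinarith
      field_simp
      ring
    have hNA : N*(Real.log (1+t) - Real.log (1-t)) ≤ N*(2*t + 2*t^3/(3*(1-t^2))) :=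
      mul_le_mul_of_nonneg_left hA hN
    have hgfun : gfun N = Real.log (N+1) + N*(Real.log (N+1) - Real.log N) := by
      unfold gfun; ring
    have hle : gfun N ≤ 1 + Real.log (N+1/2) := by
      rw [hgfun]
      have e1 : Real.log (N+1) = Real.log (1+t) + Real.log (N+1/2) := by linarith [hlog1]
      have e2 : Real.log (N+1) - Real.log N = Real.log (1+t) - Real.log (1-t) := by
        linarith [hlog1, hlog2]
      have e3 : N*(Real.log (N+1) - Real.log N) = N*(Real.log (1+t) - Real.log (1-t)) := by
        rw [e2]
      linarith [hNA, hB, hkey, e1, e3]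
    calc Real.exp (gfun N) ≤ Real.exp (1 + Real.log (N+1/2)) := Real.exp_le_exp.2 hle
      _ = Real.exp 1 * (N + 1/2) := by rw [Real.exp_add, Real.exp_log hNhalf]

lemma gfun_exp_lower {N : ℝ} (hN : 0 ≤ N) : Real.exp 1 * N + 1 ≤ Real.exp (gfun N) := by
  rcases eq_or_lt_of_le hN with h|h
  · have : gfun N = 0 := by rw [← h]; simp [gfun]
    rw [this, Real.exp_zero, ← h]
    norm_num
  · set t : ℝ := 1/(2*N+1) with htdef
    have h2N : (0:ℝ) < 2*N+1 := by linarith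
    have ht0 : 0 < t := by positivity
    have ht1 : t ≤ 1 := by rw [htdef, div_le_one h2N]; linarith
    have hNt : N = (1-t)/(2*t) := by rw [htdef]; field_simp; ring
    have ht_eq : t*(2*N+1) = 1 := by rw [htdef]; field_simp
    have hL : Real.log (N+1) - Real.log N = Real.log (1 + 1/N) := by
      rw [show (1:ℝ) + 1/N = (N+1)/N by field_simp, Real.log_div (by linarith) h.ne']
    have hPade := pade_log (x := 1/N) (by positivity)
    have hNL : 1 - t ≤ N*(Real.log (N+1) - Real.log N) := by
      have h1 : N*(2*(1/N)/(2+1/N)) = 1 - t := by rw [htdef]; field_simp; ring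
      have h2 := mul_le_mul_of_nonneg_left hPade hN
      rw [hL]; linarith
    have hexpand : Real.exp (gfun N) = (N+1)*Real.exp (N*(Real.log (N+1) - Real.log N)) := by
      have hg : gfun N = Real.log (N+1) + N*(Real.log (N+1) - Real.log N) := by unfold gfun; ring
      rw [hg, Real.exp_add, Real.exp_log (by linarith)]
    have hmono : Real.exp (1-t) ≤ Real.exp (N*(Real.log (N+1) - Real.log N)) :=
      Real.exp_le_exp.2 hNL
    have hmain : Real.exp 1 * N + 1 ≤ (N+1)*Real.exp (1-t) := by
      rcases le_total (Real.exp 1 - 2) t with hc | hc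
      · -- small N case
        have h2mt : 2 - t ≤ Real.exp (1-t) := by
          have := Real.add_one_le_exp (1-t); linarith
        have hb : (2*Real.exp 1-4)*N + (Real.exp 1 - 3) ≤ 0 := by
          have : (Real.exp 1 - 2) * (2*N+1) ≤ 1 := by
            calc (Real.exp 1 - 2) * (2*N+1) ≤ t * (2*N+1) :=
              mul_le_mul_of_nonneg_right hc (by linarith)
            _ = 1 := ht_eq
          nlinarith
        have hstep : Real.exp 1 * N + 1 ≤ (N+1)*(2-t) := by
          rw [← sub_nonneg]
          have hnn : 0 ≤ N * (0 - ((2*Real.exp 1-4)*N + (Real.exp 1 - 3))) :=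
            mul_nonneg hN (by linarith)
          nlinarith [ht_eq, hnn]
        have : (N+1)*(2-t) ≤ (N+1)*Real.exp (1-t) :=
          mul_le_mul_of_nonneg_left h2mt (by linarith)
        linarith
      · -- large N case
        have hq : 2 ≤ Real.exp 1 * (1 - t/2 + t^2/3 - t^3/6) := by
          nlinarith [Real.exp_one_gt_d9, Real.exp_one_lt_d9, ht0.le, hc,
            mul_nonneg ht0.le ht0.le,
            mul_nonneg (mul_nonneg ht0.le ht0.le) ht0.le,
            mul_nonneg (sub_nonneg.2 hc) ht0.le,
            mul_nonneg (sub_nonneg.2 hc) (mul_nonneg ht0.le ht0.le),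
            sq_nonneg (t - (Real.exp 1 - 2))]
        have hKt := exp_neg_lower ht0.le
        have hexp1t : Real.exp (1-t) = Real.exp 1 * Real.exp (-t) := by
          rw [← Real.exp_add]; ring_nf
        have hident : (N+1)*(Real.exp 1*(1-t+t^2/2-t^3/6)) - (Real.exp 1*N+1)
            = (Real.exp 1*(1 - t/2 + t^2/3 - t^3/6) - 2)/2 := by
          rw [hNt]; field_simp; ring
        have hchain : (N+1)*(Real.exp 1*(1-t+t^2/2-t^3/6)) ≤ (N+1)*Real.exp (1-t) := by
          rw [hexp1t]
          apply mul_le_mul_of_nonneg_left _ (by linarith : (0:ℝ) ≤ N+1)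
          exact mul_le_mul_of_nonneg_left hKt (Real.exp_pos 1).le
        linarith
    have hfinal : (N+1)*Real.exp (1-t) ≤ (N+1)*Real.exp (N*(Real.log (N+1) - Real.log N)) :=
      mul_le_mul_of_nonneg_left hmono (by linarith)
    rw [hexpand]
    linarith

/-- The quantum Entropy Power Inequality implies the Entropy Photon-number Inequality up to a
small violation: for `λ ∈ [0,1]` and `S₁, S₂ ≥ 0`, with `N_i = g⁻¹(S_i)` and
`N_Y = g⁻¹(log (λ e^{S₁} + (1-λ) e^{S₂}))`, one has
`N_Y ≥ λ N₁ + (1-λ) N₂ - (1/2 - 1/e)`. -/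
theorem epni_violation_bound
    (ginv : ℝ → ℝ)
    (hginv_left : ∀ N : ℝ, 0 ≤ N → ginv (gfun N) = N)
    (hginv_right : ∀ S : ℝ, 0 ≤ S → 0 ≤ ginv S ∧ gfun (ginv S) = S) :
    ∀ lam : ℝ, 0 ≤ lam → lam ≤ 1 → ∀ S₁ S₂ : ℝ, 0 ≤ S₁ → 0 ≤ S₂ →
      lam * ginv S₁ + (1 - lam) * ginv S₂ - (1 / 2 - 1 / Real.exp 1)
        ≤ ginv (Real.log (lam * Real.exp S₁ + (1 - lam) * Real.exp S₂)) := by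
  intro lam hlam0 hlam1 S₁ S₂ hS₁ hS₂
  obtain ⟨hN₁, hg₁⟩ := hginv_right S₁ hS₁
  obtain ⟨hN₂, hg₂⟩ := hginv_right S₂ hS₂
  set N₁ := ginv S₁
  set N₂ := ginv S₂
  set A := lam * Real.exp S₁ + (1 - lam) * Real.exp S₂ with hA
  have hA1 : 1 ≤ A := by
    have e1 : 1 ≤ Real.exp S₁ := Real.one_le_exp hS₁
    have e2 : 1 ≤ Real.exp S₂ := Real.one_le_exp hS₂
    nlinarith
  have hlogA : 0 ≤ Real.log A := Real.log_nonneg hA1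
  obtain ⟨hNY, hgY⟩ := hginv_right (Real.log A) hlogA
  set NY := ginv (Real.log A)
  have hexpY : Real.exp (gfun NY) = A := by rw [hgY, Real.exp_log (by linarith)]
  -- upper bound on A via gfun_exp_upper at NY
  have hup : A ≤ Real.exp 1 * (NY + 1/2) := hexpY ▸ gfun_exp_upper hNY
  -- lower bounds on exp S_i
  have hlo1 : Real.exp 1 * N₁ + 1 ≤ Real.exp S₁ := by
    have := gfun_exp_lower hN₁; rwa [hg₁] at this
  have hlo2 : Real.exp 1 * N₂ + 1 ≤ Real.exp S₂ := by
    have := gfun_exp_lower hN₂; rwa [hg₂] at this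
  have hAlo : Real.exp 1 * (lam * N₁ + (1-lam) * N₂) + 1 ≤ A := by
    have t1 := mul_le_mul_of_nonneg_left hlo1 hlam0
    have t2 := mul_le_mul_of_nonneg_left hlo2 (by linarith : (0:ℝ) ≤ 1 - lam)
    rw [hA]; nlinarith
  have hepos := Real.exp_pos 1
  have h1e : 1/Real.exp 1 * Real.exp 1 = 1 := by field_simp
  nlinarith [hup, hAlo, hepos, h1e]
end

section
/- One-mode positivity condition: for a 2×2 real matrix K and a 2×2 real symmetric positive semidefinite matrix α, the condition det(K σ Kᵀ + α) ≥ 1 holds for every real symmetric positive semidefinite 2×2 matrix σ with det σ ≥ 1 if and only if √(det α) ≥ 1 - |det K|. -/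
open Matrix Real

set_option maxHeartbeats 1000000

lemma psd_entries {M : Matrix (Fin 2) (Fin 2) ℝ} (hM : M.PosSemidef) :
    0 ≤ M 0 0 ∧ 0 ≤ M 1 1 ∧ M 1 0 = M 0 1 ∧ (M 0 1)^2 ≤ M 0 0 * M 1 1 := by
  have hsym : M 1 0 = M 0 1 := by
    have h := hM.1
    have := congrFun (congrFun h 1) 0
    simpa [Matrix.conjTranspose_apply] using this.symm
  have hQ : ∀ a b : ℝ, 0 ≤ a * (M 0 0 * a + M 0 1 * b) + b * (M 1 0 * a + M 1 1 * b) := by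
    intro a b
    have := hM.dotProduct_mulVec_nonneg ![a, b]
    simpa [dotProduct, Matrix.mulVec, Fin.sum_univ_two] using this
  have h00 : 0 ≤ M 0 0 := by have := hQ 1 0; linarith
  have h11 : 0 ≤ M 1 1 := by have := hQ 0 1; linarith
  have h1 : 0 ≤ M 0 0 * (M 0 0 * M 1 1 - M 0 1 ^ 2) := by
    have := hQ (M 0 1) (-(M 0 0)); rw [hsym] at this; nlinarith
  have h2 : 0 ≤ M 1 1 * (M 0 0 * M 1 1 - M 0 1 ^ 2) := by
    have := hQ (-(M 1 1)) (M 0 1); rw [hsym] at this; nlinarith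
  have h3 : 0 ≤ 1 * (M 0 0 * 1 + M 0 1 * (-(M 0 1))) +
      (-(M 0 1)) * (M 1 0 * 1 + M 1 1 * (-(M 0 1))) := hQ 1 (-(M 0 1))
  rw [hsym] at h3
  refine ⟨h00, h11, hsym, ?_⟩
  rcases eq_or_lt_of_le (add_nonneg h00 h11) with hzz | hpos
  · have hx0 : M 0 0 = 0 := by linarith
    have hz0 : M 1 1 = 0 := by linarith
    nlinarith
  · nlinarith

lemma psd_fin_two {M : Matrix (Fin 2) (Fin 2) ℝ} (h00 : 0 ≤ M 0 0) (h11 : 0 ≤ M 1 1)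
    (hsym : M 1 0 = M 0 1) (hdet : (M 0 1)^2 ≤ M 0 0 * M 1 1) : M.PosSemidef := by
  refine Matrix.PosSemidef.of_dotProduct_mulVec_nonneg ?_ ?_
  · ext i j
    fin_cases i <;> fin_cases j <;> simp [Matrix.conjTranspose_apply, hsym]
  · intro x
    have hx : (star x) ⬝ᵥ (M *ᵥ x) =
        x 0 * (M 0 0 * x 0 + M 0 1 * x 1) + x 1 * (M 1 0 * x 0 + M 1 1 * x 1) := by
      simp [dotProduct, Matrix.mulVec, Fin.sum_univ_two]
    rw [hx, hsym]
    rcases eq_or_lt_of_le h00 with h0 | h0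
    · have hq : M 0 1 = 0 := by nlinarith [sq_nonneg (M 0 1)]
      rw [hq, ← h0]; nlinarith [mul_nonneg h11 (sq_nonneg (x 1))]
    · nlinarith [sq_nonneg (M 0 0 * x 0 + M 0 1 * x 1),
        mul_nonneg (sub_nonneg.2 hdet) (sq_nonneg (x 1))]

lemma det_nonneg2 {M : Matrix (Fin 2) (Fin 2) ℝ} (hM : M.PosSemidef) : 0 ≤ M.det := by
  obtain ⟨h1, h2, h3, h4⟩ := psd_entries hM
  rw [Matrix.det_fin_two, h3]; nlinarith

lemma psd_smul {n : Type*} [Fintype n] {M : Matrix n n ℝ} (hM : M.PosSemidef) {c : ℝ}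
    (hc : 0 ≤ c) : (c • M).PosSemidef := by
  refine Matrix.PosSemidef.of_dotProduct_mulVec_nonneg ?_ ?_
  · unfold Matrix.IsHermitian
    rw [Matrix.conjTranspose_smul, hM.1]
    simp
  · intro x
    rw [Matrix.smul_mulVec, dotProduct_smul]
    exact mul_nonneg hc (hM.dotProduct_mulVec_nonneg x)


lemma caseB_contra {x y z p q m t u : ℝ}
    (hx : 0 ≤ x) (hz : 0 ≤ z) (ha0 : 0 ≤ x*z - y^2) (ha1 : x*z - y^2 < 1)
    (hp0 : 0 ≤ p) (hm0 : 0 ≤ m) (hpm : p*m - q^2 = 0)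
    (ht : t = (x + z + 1)/(1 - (x*z - y^2)))
    (hu : u = 1/(t*(p+m))) (hf0 : 0 < p + m)
    (hval : 1 ≤ u^2*(p*m - q^2) + u*(p*z + m*x - 2*q*y) + (x*z - y^2)) : False := by
  have ht0 : 0 < t := by rw [ht]; apply div_pos <;> linarith
  have hu0 : 0 < u := by rw [hu]; positivity
  have hmain : (2*q*y)^2 ≤ (p*x + m*z)^2 := by
    nlinarith [sq_nonneg (p*x - m*z), mul_nonneg (sq_nonneg q) ha0,
      mul_nonneg (mul_nonneg hx hz) (le_of_eq hpm.symm)]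
  have key : 0 ≤ p*x + m*z + 2*q*y := by
    nlinarith [hmain, add_nonneg (mul_nonneg hp0 hx) (mul_nonneg hm0 hz)]
  have hcross : p*z + m*x - 2*q*y ≤ (p+m)*(x+z) := by nlinarith [key]
  have hub : u*(p*z + m*x - 2*q*y) ≤ u*((p+m)*(x+z)) :=
    mul_le_mul_of_nonneg_left hcross hu0.le
  have hueq : u*((p+m)*(x+z)) = (x+z)*(1 - (x*z - y^2))/(x+z+1) := by
    rw [hu, ht]
    field_simp
  have hlt : (x+z)*(1 - (x*z - y^2))/(x+z+1) < 1 - (x*z - y^2) := by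
    rw [div_lt_iff₀ (by linarith)]
    nlinarith
  rw [hpm] at hval
  simp only [mul_zero] at hval
  rw [hueq] at hub
  linarith

lemma caseC_contra {x y z r d τ g ε Dε s : ℝ}
    (hx : 0 ≤ x) (hz : 0 ≤ z) (ha0 : 0 ≤ x*z - y^2) (hr0 : 0 ≤ r)
    (hr2 : r^2 = x*z - y^2) (hd0 : 0 < d) (hrd : r + d < 1)
    (hτ : τ = x + z) (hg : g = 1 - (r+d)^2) (hε : ε = g^2/(2*(d^2*τ + 1)))
    (hD : Dε = (x*z - y^2) + ε*τ + ε^2) (hs0 : 0 < s) (hs2 : s^2*Dε = d^2)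
    (hval : 1 ≤ (x*z - y^2) + d^2 + 2*s*(x*z - y^2) + s*ε*τ) : False := by
  have hτ0 : 0 ≤ τ := by rw [hτ]; linarith
  have hg0 : 0 < g := by
    rw [hg]
    nlinarith [hr0, hd0, hrd]
  have hg1 : g ≤ 1 := by rw [hg]; nlinarith [sq_nonneg (r+d)]
  have hε0 : 0 < ε := by rw [hε]; positivity
  have hsr : s * r ≤ d := by
    have h1 : (s*r)^2 ≤ d^2 := by
      have h2 : s^2 * (x*z - y^2) ≤ s^2 * Dε := by
        apply mul_le_mul_of_nonneg_left _ (sq_nonneg s)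
        rw [hD]; nlinarith
      nlinarith [hr2]
    nlinarith [mul_nonneg hs0.le hr0, hd0]
  have h2sa : 2*s*(x*z - y^2) ≤ 2*d*r := by
    have h3 : s * r * r ≤ d * r := mul_le_mul_of_nonneg_right hsr hr0
    nlinarith [hr2]
  have hsετ : s*ε*τ < g := by
    have h1 : (s*ε*τ)^2 ≤ d^2 * (ε*τ) := by
      have hs2' : s^2 * (ε*τ) ≤ d^2 := by
        rw [← hs2]
        apply mul_le_mul_of_nonneg_left _ (sq_nonneg s)
        rw [hD]; nlinarith
      calc (s*ε*τ)^2 = (s^2 * (ε*τ)) * (ε*τ) := by ring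
        _ ≤ d^2 * (ε*τ) := mul_le_mul_of_nonneg_right hs2' (by positivity)
    have h2 : d^2 * (ε*τ) < g^2 := by
      rw [hε, div_mul_eq_mul_div, mul_div_assoc', div_lt_iff₀ (by positivity)]
      nlinarith [mul_nonneg (mul_nonneg (sq_nonneg d) hτ0) (sq_nonneg g), sq_nonneg g,
        mul_nonneg (sq_nonneg d) hτ0]
    have h3 : (s*ε*τ)^2 < g^2 := lt_of_le_of_lt h1 h2
    nlinarith [mul_nonneg (mul_nonneg hs0.le hε0.le) hτ0]
  have hfin : s*ε*τ < 1 - (r+d)^2 := by rw [← hg]; exact hsετ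
  nlinarith [hval, h2sa, hfin, hr2]


lemma minkowski2 {A B : Matrix (Fin 2) (Fin 2) ℝ} (hA : A.PosSemidef) (hB : B.PosSemidef) :
    Real.sqrt A.det + Real.sqrt B.det ≤ Real.sqrt (A + B).det := by
  obtain ⟨ha0, ha1, ha2, ha3⟩ := psd_entries hA
  obtain ⟨hb0, hb1, hb2, hb3⟩ := psd_entries hB
  set u := Real.sqrt A.det with hu
  set v := Real.sqrt B.det with hv
  have hu0 : 0 ≤ u := Real.sqrt_nonneg _
  have hv0 : 0 ≤ v := Real.sqrt_nonneg _
  have hu2 : u^2 = A 0 0 * A 1 1 - A 0 1 ^ 2 := by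
    rw [hu, Real.sq_sqrt (det_nonneg2 hA), Matrix.det_fin_two, ha2]; ring
  have hv2 : v^2 = B 0 0 * B 1 1 - B 0 1 ^ 2 := by
    rw [hv, Real.sq_sqrt (det_nonneg2 hB), Matrix.det_fin_two, hb2]; ring
  apply Real.le_sqrt_of_sq_le
  have hdet : (A + B).det = (A 0 0 + B 0 0) * (A 1 1 + B 1 1) - (A 0 1 + B 0 1)^2 := by
    rw [Matrix.det_fin_two]; simp [ha2, hb2]; ring
  rw [hdet]
  nlinarith [sq_nonneg (A 0 0 * B 1 1 - A 1 1 * B 0 0), sq_nonneg (u * B 0 1 - v * A 0 1),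
    sq_nonneg (u * B 0 1 + v * A 0 1), sq_nonneg (u*v - A 0 1 * B 0 1),
    sq_nonneg (u*v + A 0 1 * B 0 1), mul_nonneg ha0 hb1, mul_nonneg ha1 hb0,
    mul_nonneg hu0 hv0, mul_nonneg (mul_nonneg ha0 hb1) (mul_nonneg ha1 hb0)]

/-- One-mode positivity condition: for a real `2×2` matrix `K` and a real symmetric positive
semidefinite `2×2` matrix `α`, one has `det (K σ Kᵀ + α) ≥ 1` for every positive semidefinite
`σ` with `det σ ≥ 1` if and only if `√(det α) ≥ 1 - |det K|`. -/
theorem one_mode_positivity_condition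
    (K α : Matrix (Fin 2) (Fin 2) ℝ) (hα : α.PosSemidef) :
    (∀ σ : Matrix (Fin 2) (Fin 2) ℝ, σ.PosSemidef → 1 ≤ σ.det →
        1 ≤ (K * σ * K.transpose + α).det) ↔
      1 - |K.det| ≤ Real.sqrt α.det := by
  obtain ⟨hx, hz, hsymα, hdiscα⟩ := psd_entries hα
  set x := α 0 0
  set z := α 1 1
  set y := α 0 1
  have hadet : α.det = x * z - y^2 := by rw [Matrix.det_fin_two, hsymα]; ring
  have ha0 : 0 ≤ x * z - y^2 := by nlinarith
  set d := |K.det| with hdd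
  have hd0 : 0 ≤ d := abs_nonneg _
  set r := Real.sqrt α.det with hrr
  have hr0 : 0 ≤ r := Real.sqrt_nonneg _
  have hr2 : r^2 = x * z - y^2 := by rw [hrr, Real.sq_sqrt (det_nonneg2 hα), hadet]
  constructor
  · -- forward direction
    intro h
    by_contra hc
    push_neg at hc
    -- hc : r < 1 - d
    have hrd1 : r + d < 1 := by linarith
    have hd1 : d < 1 := by linarith
    have ha1 : x * z - y^2 < 1 := by
      rw [← hr2]; exact pow_lt_one₀ hr0 (by linarith) two_ne_zero
    by_cases hK : K.det = 0
    · by_cases hK0 : K = 0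
      · have := h 1 Matrix.PosSemidef.one (by simp)
        rw [hK0] at this
        simp [hadet] at this
        linarith
      · -- K ≠ 0, det K = 0
        set τ := x + z with hτ
        have hτ0 : 0 ≤ τ := by positivity
        set f := K 0 0^2 + K 0 1^2 + K 1 0^2 + K 1 1^2 with hf
        have hf0 : 0 < f := by
          have hex : ∃ i j, K i j ≠ 0 := by
            by_contra h'
            push_neg at h'
            exact hK0 (by ext i j; simpa using h' i j)
          obtain ⟨i, j, hij⟩ := hex
          have : 0 < K i j ^ 2 := by positivity
          fin_cases i <;> fin_cases j <;> simp only [Fin.zero_eta, Fin.mk_one] at this <;>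
            linarith [this, sq_nonneg (K 0 0), sq_nonneg (K 0 1), sq_nonneg (K 1 0),
              sq_nonneg (K 1 1)]
        set t := (τ + 1) / (1 - (x * z - y^2)) with ht
        have ht0 : 0 < t := by
          apply div_pos <;> linarith
        set u := 1 / (t * f) with hu
        have hu0 : 0 < u := by positivity
        set A := K.adjugate with hA
        set σ := t • (A * Aᵀ) + u • (1 : Matrix (Fin 2) (Fin 2) ℝ) with hσ
        have hσpsd : σ.PosSemidef := by
          apply Matrix.PosSemidef.add
          · apply psd_smul _ ht0.le
            have := Matrix.posSemidef_self_mul_conjTranspose A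
            rwa [Matrix.conjTranspose_eq_transpose_of_trivial] at this
          · exact psd_smul Matrix.PosSemidef.one hu0.le
        have hAdet : A.det = 0 := by
          rw [hA, Matrix.det_adjugate]
          simp [hK]
        have hσdet : σ.det = 1 + u^2 := by
          have hAe : A = !![K 1 1, -(K 0 1); -(K 1 0), K 0 0] := Matrix.adjugate_fin_two K
          have hK' : K 0 0 * K 1 1 - K 0 1 * K 1 0 = 0 := by
            rw [← Matrix.det_fin_two]; exact hK
          have htuf : t * u * f = 1 := by
            rw [hu]; field_simp
          have hAte : Aᵀ = !![K 1 1, -(K 1 0); -(K 0 1), K 0 0] := by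
            rw [hAe]
            ext i j
            fin_cases i <;> fin_cases j <;> simp
          have hAAt : A * Aᵀ = !![K 1 1^2 + K 0 1^2, -(K 1 1 * K 1 0) - K 0 1 * K 0 0;
              -(K 1 1 * K 1 0) - K 0 1 * K 0 0, K 1 0^2 + K 0 0^2] := by
            rw [hAte, hAe, Matrix.mul_fin_two]
            ext i j
            fin_cases i <;> fin_cases j <;> simp <;> ring
          have e00 : σ 0 0 = t * (K 1 1^2 + K 0 1^2) + u := by
            rw [hσ, hAAt]
            simp [Matrix.add_apply, Matrix.smul_apply, Matrix.one_apply]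
          have e01 : σ 0 1 = t * (-(K 1 1 * K 1 0) - K 0 1 * K 0 0) := by
            rw [hσ, hAAt]
            simp [Matrix.add_apply, Matrix.smul_apply, Matrix.one_apply]
          have e10 : σ 1 0 = t * (-(K 1 1 * K 1 0) - K 0 1 * K 0 0) := by
            rw [hσ, hAAt]
            simp [Matrix.add_apply, Matrix.smul_apply, Matrix.one_apply]
          have e11 : σ 1 1 = t * (K 1 0^2 + K 0 0^2) + u := by
            rw [hσ, hAAt]
            simp [Matrix.add_apply, Matrix.smul_apply, Matrix.one_apply]
          rw [Matrix.det_fin_two, e00, e01, e10, e11]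
          have : (t * (K 1 1^2 + K 0 1^2) + u) * (t * (K 1 0^2 + K 0 0^2) + u) -
              t * (-(K 1 1 * K 1 0) - K 0 1 * K 0 0) * (t * (-(K 1 1 * K 1 0) - K 0 1 * K 0 0))
              = t * u * f + u^2 + t^2 * (K 0 0 * K 1 1 - K 0 1 * K 1 0)^2 := by
            rw [hf]; ring
          rw [this, htuf, hK']
          ring
        have hKA : K * A = 0 := by
          rw [hA, Matrix.mul_adjugate, hK, zero_smul]
        have hKσK : K * σ * Kᵀ = u • (K * Kᵀ) := by
          rw [hσ]
          rw [Matrix.mul_add, Matrix.add_mul]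
          rw [Matrix.mul_smul, Matrix.smul_mul, Matrix.mul_smul, Matrix.smul_mul]
          rw [← Matrix.mul_assoc, hKA, Matrix.zero_mul, Matrix.mul_one]
          simp
        have hval := h σ hσpsd (by rw [hσdet]; linarith [sq_nonneg u])
        rw [hKσK] at hval
        -- compute the determinant
        set p := K 0 0^2 + K 0 1^2 with hp
        set q := K 0 0 * K 1 0 + K 0 1 * K 1 1 with hq
        set m := K 1 0^2 + K 1 1^2 with hm
        have hK' : K 0 0 * K 1 1 - K 0 1 * K 1 0 = 0 := by
          rw [← Matrix.det_fin_two]; exact hK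
        have hpm : p * m - q^2 = 0 := by
          rw [hp, hm, hq]
          linear_combination (K 0 0 * K 1 1 - K 0 1 * K 1 0) * hK'
        have hvd : (u • (K * Kᵀ) + α).det = (u*p + x) * (u*m + z) - (u*q + y)^2 := by
          rw [Matrix.det_fin_two]
          simp [Matrix.add_apply, Matrix.smul_apply, Matrix.mul_apply, Matrix.transpose_apply,
            Fin.sum_univ_two, hsymα, hp, hq, hm]
          ring
        rw [hvd] at hval
        -- hval : 1 ≤ (u*p + x)*(u*m + z) - (u*q + y)^2, derive contradiction
        have hp0 : 0 ≤ p := by positivity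
        have hm0 : 0 ≤ m := by positivity
        have hfpm : f = p + m := by rw [hf, hp, hm]; ring
        have hexp : (u*p + x) * (u*m + z) - (u*q + y)^2
            = u^2 * (p*m - q^2) + u * (p*z + m*x - 2*q*y) + (x*z - y^2) := by ring
        rw [hexp] at hval
        have htB : t = (x + z + 1) / (1 - (x*z - y^2)) := by rw [ht, hτ]
        have huB : u = 1 / (t * (p + m)) := by rw [hu, hfpm]
        have hfB : 0 < p + m := by rw [← hfpm]; exact hf0
        exact caseB_contra hx hz ha0 ha1 hp0 hm0 hpm htB huB hfB hval
    · -- det K ≠ 0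
      have hd0' : 0 < d := abs_pos.mpr hK
      set τ := x + z with hτ
      have hτ0 : 0 ≤ τ := by positivity
      set g := 1 - (r + d)^2 with hg
      have hg0 : 0 < g := by
        have := pow_lt_one₀ (add_nonneg hr0 hd0) hrd1 two_ne_zero
        rw [hg]; linarith
      set ε := g^2 / (2 * (d^2 * τ + 1)) with hε
      have hε0 : 0 < ε := by positivity
      set Dε := (x*z - y^2) + ε * τ + ε^2 with hD
      have hD0 : 0 < Dε := by positivity
      set s := d / Real.sqrt Dε with hs
      have hs0 : 0 < s := div_pos hd0' (Real.sqrt_pos.2 hD0)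
      have hs2 : s^2 * Dε = d^2 := by
        rw [hs, div_pow, Real.sq_sqrt hD0.le]
        field_simp
      have hKu : IsUnit K.det := isUnit_iff_ne_zero.mpr hK
      set M := α + ε • (1 : Matrix (Fin 2) (Fin 2) ℝ) with hM
      have hMpsd : M.PosSemidef := hα.add (psd_smul Matrix.PosSemidef.one hε0.le)
      have hMdet : M.det = Dε := by
        rw [hM, Matrix.det_fin_two]
        simp [Matrix.add_apply, Matrix.smul_apply, Matrix.one_apply, hsymα]
        rw [hD, hτ]; ring
      set σ := s • (K⁻¹ * M * (K⁻¹)ᵀ) with hσ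
      have hσpsd : σ.PosSemidef := by
        apply psd_smul _ hs0.le
        have := hMpsd.mul_mul_conjTranspose_same K⁻¹
        rwa [Matrix.conjTranspose_eq_transpose_of_trivial] at this
      have hσdet : σ.det = 1 := by
        rw [hσ, Matrix.det_smul, Matrix.det_mul, Matrix.det_mul, Matrix.det_transpose,
          Matrix.det_nonsing_inv, hMdet]
        simp only [Fintype.card_fin]
        rw [Ring.inverse_eq_inv']
        field_simp
        linear_combination hs2 + sq_abs K.det + (d + |K.det|) * hdd
      have hKσK : K * σ * Kᵀ = s • M := by
        rw [hσ]
        rw [Matrix.mul_smul, Matrix.smul_mul]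
        congr 1
        rw [← Matrix.mul_assoc, ← Matrix.mul_assoc, Matrix.mul_nonsing_inv K hKu,
          Matrix.one_mul, Matrix.mul_assoc, ← Matrix.transpose_mul,
          Matrix.mul_nonsing_inv K hKu, Matrix.transpose_one, Matrix.mul_one]
      have hval := h σ hσpsd (le_of_eq hσdet.symm)
      rw [hKσK] at hval
      have hvd : (s • M + α).det = ((1+s)*x + s*ε) * ((1+s)*z + s*ε) - ((1+s)*y)^2 := by
        rw [Matrix.det_fin_two, hM]
        simp [Matrix.add_apply, Matrix.smul_apply, Matrix.one_apply, hsymα]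
        ring
      rw [hvd] at hval
      have hT : ((1+s)*x + s*ε) * ((1+s)*z + s*ε) - ((1+s)*y)^2
          = (x*z - y^2) + d^2 + 2*s*(x*z - y^2) + s*ε*τ := by
        rw [hτ]; linear_combination hs2
      rw [hT] at hval
      exact caseC_contra hx hz ha0 hr0 hr2 hd0' hrd1 hτ hg hε hD hs0 hs2 hval
  · -- reverse direction
    intro h σ hσ hσdet
    have hKs : (K * σ * Kᵀ).PosSemidef := by
      have := hσ.mul_mul_conjTranspose_same K
      rwa [Matrix.conjTranspose_eq_transpose_of_trivial] at this
    have hdetKσ : (K * σ * Kᵀ).det = K.det^2 * σ.det := by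
      rw [Matrix.det_mul, Matrix.det_mul, Matrix.det_transpose]; ring
    have hsq : d ≤ Real.sqrt ((K * σ * Kᵀ).det) := by
      rw [hdetKσ, Real.sqrt_mul (sq_nonneg _), Real.sqrt_sq_eq_abs]
      calc d = d * 1 := by ring
        _ ≤ |K.det| * Real.sqrt σ.det := by
          apply mul_le_mul_of_nonneg_left _ hd0
          rw [show (1:ℝ) = Real.sqrt 1 from (Real.sqrt_one).symm]
          exact Real.sqrt_le_sqrt hσdet
    have hmink := minkowski2 hKs hα
    have h1 : 1 ≤ Real.sqrt ((K * σ * Kᵀ + α).det) := by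
      calc (1:ℝ) ≤ d + r := by linarith
        _ ≤ Real.sqrt ((K * σ * Kᵀ).det) + Real.sqrt α.det := by
          rw [← hrr]; linarith
        _ ≤ _ := hmink
    rwa [Real.one_le_sqrt] at h1
end

section
/- Infimum over quantum covariance matrices: for any vector w ∈ ℂ^{2n}, the infimum of w† σ w over all real symmetric 2n×2n matrices σ satisfying σ ≥ iΔ and σ ≥ -iΔ equals |w† Δ w|, where Δ is the standard 2n-mode symplectic form. -/
open scoped ComplexOrder
/-- The standard symplectic form `Δ = ⊕ₖ [[0,1],[-1,0]]` on `ℝ^{2n}`. -/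
noncomputable def sympForm (n : ℕ) : Matrix (Fin (2 * n)) (Fin (2 * n)) ℝ :=
  Matrix.of fun i j =>
    if (i : ℕ) % 2 = 0 ∧ (j : ℕ) = (i : ℕ) + 1 then 1
    else if (j : ℕ) % 2 = 0 ∧ (i : ℕ) = (j : ℕ) + 1 then -1
    else 0

open Matrix
section
variable {n m : ℕ}

def partner {n : ℕ} (i : Fin (2*n)) : Fin (2*n) :=
  ⟨if (i:ℕ) % 2 = 0 then (i:ℕ)+1 else (i:ℕ)-1, by
    rcases i with ⟨i, hi⟩; dsimp only; split <;> omega⟩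

lemma partner_coe {n : ℕ} (i : Fin (2*n)) :
    (partner i : ℕ) = if (i:ℕ) % 2 = 0 then (i:ℕ)+1 else (i:ℕ)-1 := rfl

lemma sympForm_apply' {n : ℕ} (k i : Fin (2*n)) :
    sympForm n k i = if k = partner i then (if (i:ℕ) % 2 = 0 then (-1:ℝ) else 1) else 0 := by
  rcases k with ⟨k, hk⟩; rcases i with ⟨i, hi⟩
  simp only [sympForm, Matrix.of_apply, Fin.ext_iff, partner_coe]
  split_ifs <;> first | rfl | (exfalso; omega) | norm_num

lemma partner_inj {n : ℕ} (i j : Fin (2*n)) (h : partner i = partner j) : i = j := by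
  rcases i with ⟨i, hi⟩; rcases j with ⟨j, hj⟩
  rw [Fin.ext_iff, partner_coe, partner_coe] at h
  rw [Fin.ext_iff]
  dsimp at h ⊢
  split_ifs at h <;> omega

lemma transpose_symp' {n : ℕ} : (sympForm n)ᵀ = -(sympForm n) := by
  ext i j
  simp only [Matrix.transpose_apply, Matrix.neg_apply, sympForm, Matrix.of_apply]
  split_ifs <;> first | (exfalso; omega) | norm_num

lemma sympT_mul_symp' {n : ℕ} : (sympForm n)ᵀ * sympForm n = 1 := by
  ext i j
  rw [Matrix.mul_apply]
  simp only [Matrix.transpose_apply]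
  rw [Finset.sum_eq_single (partner i)]
  · rw [sympForm_apply' (partner i) i, sympForm_apply' (partner i) j, if_pos rfl]
    by_cases h : i = j
    · subst h
      rw [if_pos rfl, Matrix.one_apply_eq]
      split_ifs <;> norm_num
    · rw [if_neg (fun hc => h (partner_inj i j hc)), Matrix.one_apply_ne h, mul_zero]
  · intro k _ hk
    rw [sympForm_apply' k i, if_neg hk, zero_mul]
  · intro hm; exact absurd (Finset.mem_univ _) hm

lemma vecMulVec_mulVec' (a b y : Fin m → ℝ) : (vecMulVec a b) *ᵥ y = (b ⬝ᵥ y) • a := by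
  funext i; simp [Matrix.mulVec, vecMulVec_apply, dotProduct, Finset.mul_sum, mul_assoc,
    mul_comm, mul_left_comm]

lemma dot_tmul (M : Matrix (Fin m) (Fin m) ℝ) (x : Fin m → ℝ) :
    x ⬝ᵥ (Mᵀ * M) *ᵥ x = (M *ᵥ x) ⬝ᵥ (M *ᵥ x) := by
  rw [← Matrix.mulVec_mulVec, Matrix.dotProduct_mulVec, Matrix.vecMul_transpose]

lemma two_dot_le (p q : Fin m → ℝ) : 2 * (p ⬝ᵥ q) ≤ p ⬝ᵥ p + q ⬝ᵥ q := by
  simp only [dotProduct, Finset.mul_sum, ← Finset.sum_add_distrib]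
  apply Finset.sum_le_sum; intro i _; nlinarith [sq_nonneg (p i - q i)]

lemma dot_symm_of {σ : Matrix (Fin m) (Fin m) ℝ} (h : σ.IsSymm) (a b : Fin m → ℝ) :
    a ⬝ᵥ σ *ᵥ b = b ⬝ᵥ σ *ᵥ a := by
  rw [Matrix.dotProduct_mulVec, ← Matrix.IsSymm.eq h, Matrix.vecMul_transpose,
    dotProduct_comm, Matrix.IsSymm.eq h]

lemma dot_anti {Δ : Matrix (Fin m) (Fin m) ℝ} (h : Δᵀ = -Δ) (a b : Fin m → ℝ) :
    a ⬝ᵥ Δ *ᵥ b = -(b ⬝ᵥ Δ *ᵥ a) := by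
  rw [Matrix.dotProduct_mulVec, ← Matrix.mulVec_transpose, h, Matrix.neg_mulVec,
    neg_dotProduct, dotProduct_comm]

lemma symp_anti {n : ℕ} (a b : Fin (2*n) → ℝ) :
    a ⬝ᵥ (sympForm n) *ᵥ b = -(b ⬝ᵥ (sympForm n) *ᵥ a) := dot_anti transpose_symp' a b

lemma symp_self (a : Fin (2*n) → ℝ) : a ⬝ᵥ (sympForm n) *ᵥ a = 0 := by
  have := symp_anti a a; linarith

lemma symp_dot_symp (a b : Fin (2*n) → ℝ) :
    ((sympForm n) *ᵥ a) ⬝ᵥ ((sympForm n) *ᵥ b) = a ⬝ᵥ b := by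
  rw [Matrix.dotProduct_mulVec, ← Matrix.mulVec_transpose, Matrix.mulVec_mulVec,
    sympT_mul_symp', Matrix.one_mulVec]

lemma symp_symp (a : Fin (2*n) → ℝ) : (sympForm n) *ᵥ ((sympForm n) *ᵥ a) = -a := by
  rw [Matrix.mulVec_mulVec]
  have h2 : sympForm n * sympForm n = -1 := by
    have := sympT_mul_symp' (n := n)
    rw [transpose_symp', neg_mul] at this
    exact neg_eq_iff_eq_neg.mp this
  rw [h2, Matrix.neg_mulVec, Matrix.one_mulVec]

/-- Construction in the case `u ⬝ Δ v > 0`. -/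
lemma lemB (u v : Fin (2*n) → ℝ) (hs : 0 < u ⬝ᵥ (sympForm n) *ᵥ v) {ε : ℝ} (hε : 0 < ε) :
    ∃ σ : Matrix (Fin (2*n)) (Fin (2*n)) ℝ, σ.IsSymm ∧
      (∀ x y, 2 * (x ⬝ᵥ (sympForm n) *ᵥ y) ≤ x ⬝ᵥ σ *ᵥ x + y ⬝ᵥ σ *ᵥ y) ∧
      u ⬝ᵥ σ *ᵥ u + v ⬝ᵥ σ *ᵥ v ≤ 2 * (u ⬝ᵥ (sympForm n) *ᵥ v) + ε := by
  classical
  set Δ := sympForm n with hΔ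
  set s : ℝ := u ⬝ᵥ Δ *ᵥ v with hsdef
  have hs0 : s ≠ 0 := ne_of_gt hs
  set du : Fin (2*n) → ℝ := Δ *ᵥ u with hdu
  set dv : Fin (2*n) → ℝ := Δ *ᵥ v with hdv
  set α : ℝ := s + ε/2 with hα
  set γ : ℝ := α / s^2 with hγ
  set P : Matrix (Fin (2*n)) (Fin (2*n)) ℝ :=
    vecMulVec u (s⁻¹ • dv) - vecMulVec v (s⁻¹ • du) with hP
  set σ : Matrix (Fin (2*n)) (Fin (2*n)) ℝ :=
    γ • (vecMulVec du du + vecMulVec dv dv) + (1 - P)ᵀ * (1 - P) with hσ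
  -- basic dot product facts
  have hduu : du ⬝ᵥ u = 0 := by
    rw [dotProduct_comm, hdu]; exact symp_self u
  have hdvv : dv ⬝ᵥ v = 0 := by
    rw [dotProduct_comm, hdv]; exact symp_self v
  have hdvu : dv ⬝ᵥ u = s := by
    rw [dotProduct_comm, hdv, hsdef]
  have hduv : du ⬝ᵥ v = -s := by
    rw [dotProduct_comm, hdu, hsdef]; exact symp_anti v u
  -- the residual map
  have hF : ∀ x, (1 - P) *ᵥ x = x - (s⁻¹*(dv ⬝ᵥ x)) • u + (s⁻¹*(du ⬝ᵥ x)) • v := by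
    intro x
    rw [Matrix.sub_mulVec, Matrix.one_mulVec, hP, Matrix.sub_mulVec,
      vecMulVec_mulVec', vecMulVec_mulVec', smul_dotProduct, smul_dotProduct,
      smul_eq_mul, smul_eq_mul]
    abel
  have hFdu : ∀ x, du ⬝ᵥ ((1 - P) *ᵥ x) = 0 := by
    intro x
    rw [hF x, dotProduct_add, dotProduct_sub, dotProduct_smul,
      dotProduct_smul, hduu, hduv, smul_eq_mul, smul_eq_mul]
    field_simp
    ring
  have hFdv : ∀ x, dv ⬝ᵥ ((1 - P) *ᵥ x) = 0 := by
    intro x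
    rw [hF x, dotProduct_add, dotProduct_sub, dotProduct_smul,
      dotProduct_smul, hdvv, hdvu, smul_eq_mul, smul_eq_mul]
    field_simp
    ring
  -- quadratic form expansion
  have hq : ∀ x, x ⬝ᵥ σ *ᵥ x
      = γ*((du ⬝ᵥ x)^2 + (dv ⬝ᵥ x)^2) + ((1 - P) *ᵥ x) ⬝ᵥ ((1 - P) *ᵥ x) := by
    intro x
    rw [hσ, Matrix.add_mulVec, dotProduct_add, dot_tmul, Matrix.smul_mulVec,
      dotProduct_smul, Matrix.add_mulVec, dotProduct_add,
      vecMulVec_mulVec', vecMulVec_mulVec', dotProduct_smul, dotProduct_smul,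
      dotProduct_comm x du, dotProduct_comm x dv]
    simp only [smul_eq_mul]
    ring
  -- decomposition of the symplectic pairing
  have hxy : ∀ x y, x ⬝ᵥ Δ *ᵥ y
      = s⁻¹*((du ⬝ᵥ x)*(dv ⬝ᵥ y) - (dv ⬝ᵥ x)*(du ⬝ᵥ y))
        + ((1 - P) *ᵥ x) ⬝ᵥ Δ *ᵥ ((1 - P) *ᵥ y) := by
    intro x y
    have hx : (1 - P) *ᵥ x + (s⁻¹*(dv ⬝ᵥ x)) • u - (s⁻¹*(du ⬝ᵥ x)) • v = x := by
      rw [hF x]; abel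
    have hy : (1 - P) *ᵥ y + (s⁻¹*(dv ⬝ᵥ y)) • u - (s⁻¹*(du ⬝ᵥ y)) • v = y := by
      rw [hF y]; abel
    conv_lhs => rw [← hx, ← hy]
    generalize hX : (1 - P) *ᵥ x = X
    generalize hY : (1 - P) *ᵥ y = Y
    have h1 : X ⬝ᵥ Δ *ᵥ u = 0 := by rw [← hdu, dotProduct_comm, ← hX]; exact hFdu x
    have h2 : X ⬝ᵥ Δ *ᵥ v = 0 := by rw [← hdv, dotProduct_comm, ← hX]; exact hFdv x
    have h3 : u ⬝ᵥ Δ *ᵥ Y = 0 := by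
      rw [symp_anti, ← hdu, dotProduct_comm, ← hY, hFdu y]; ring
    have h4 : v ⬝ᵥ Δ *ᵥ Y = 0 := by
      rw [symp_anti, ← hdv, dotProduct_comm, ← hY, hFdv y]; ring
    have h5 : u ⬝ᵥ Δ *ᵥ u = 0 := symp_self u
    have h6 : v ⬝ᵥ Δ *ᵥ v = 0 := symp_self v
    have h7 : u ⬝ᵥ Δ *ᵥ v = s := hsdef.symm
    have h8 : v ⬝ᵥ Δ *ᵥ u = -s := by rw [symp_anti, h7]
    simp only [Matrix.mulVec_add, Matrix.mulVec_sub, Matrix.mulVec_smul,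
      dotProduct_add, dotProduct_sub, sub_dotProduct,
      add_dotProduct, smul_dotProduct, dotProduct_smul, smul_eq_mul,
      h1, h2, h3, h4, h5, h6, h7, h8]
    field_simp
    ring
  have hsα : s ≤ α := by rw [hα]; linarith
  refine ⟨σ, ?_, ?_, ?_⟩
  · unfold Matrix.IsSymm
    rw [hσ, Matrix.transpose_add, Matrix.transpose_smul, Matrix.transpose_add,
      Matrix.transpose_mul, Matrix.transpose_transpose]
    congr 1
    · congr 1 <;> · ext i j; simp [vecMulVec_apply, mul_comm]
  · intro x y
    rw [hq x, hq y, hxy x y]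
    have h2 : 2 * (((1 - P) *ᵥ x) ⬝ᵥ Δ *ᵥ ((1 - P) *ᵥ y))
        ≤ ((1 - P) *ᵥ x) ⬝ᵥ ((1 - P) *ᵥ x) + ((1 - P) *ᵥ y) ⬝ᵥ ((1 - P) *ᵥ y) := by
      calc 2 * (((1 - P) *ᵥ x) ⬝ᵥ Δ *ᵥ ((1 - P) *ᵥ y))
          ≤ ((1 - P) *ᵥ x) ⬝ᵥ ((1 - P) *ᵥ x) + (Δ *ᵥ ((1 - P) *ᵥ y)) ⬝ᵥ (Δ *ᵥ ((1 - P) *ᵥ y)) :=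
            two_dot_le _ _
        _ = ((1 - P) *ᵥ x) ⬝ᵥ ((1 - P) *ᵥ x) + ((1 - P) *ᵥ y) ⬝ᵥ ((1 - P) *ᵥ y) := by
            rw [hΔ, symp_dot_symp]
    have key : 2 * (s⁻¹*((du ⬝ᵥ x)*(dv ⬝ᵥ y) - (dv ⬝ᵥ x)*(du ⬝ᵥ y)))
        ≤ γ*((du ⬝ᵥ x)^2 + (dv ⬝ᵥ x)^2) + γ*((du ⬝ᵥ y)^2 + (dv ⬝ᵥ y)^2) := by
      rw [← sub_nonneg]
      have heq : γ*((du ⬝ᵥ x)^2 + (dv ⬝ᵥ x)^2) + γ*((du ⬝ᵥ y)^2 + (dv ⬝ᵥ y)^2)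
          - 2 * (s⁻¹*((du ⬝ᵥ x)*(dv ⬝ᵥ y) - (dv ⬝ᵥ x)*(du ⬝ᵥ y)))
          = (α*((du ⬝ᵥ x)^2 + (dv ⬝ᵥ x)^2 + (du ⬝ᵥ y)^2 + (dv ⬝ᵥ y)^2)
             - 2*s*((du ⬝ᵥ x)*(dv ⬝ᵥ y) - (dv ⬝ᵥ x)*(du ⬝ᵥ y))) / s^2 := by
        rw [hγ]; field_simp; ring
      rw [heq]
      apply div_nonneg _ (sq_nonneg s)
      nlinarith [sq_nonneg ((du ⬝ᵥ x) - (dv ⬝ᵥ y)), sq_nonneg ((dv ⬝ᵥ x) + (du ⬝ᵥ y)),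
        sq_nonneg ((du ⬝ᵥ x) + (dv ⬝ᵥ y)), sq_nonneg ((dv ⬝ᵥ x) - (du ⬝ᵥ y)), hsα, hs,
        sq_nonneg (du ⬝ᵥ x), sq_nonneg (dv ⬝ᵥ x), sq_nonneg (du ⬝ᵥ y), sq_nonneg (dv ⬝ᵥ y)]
    linarith
  · have hFu : (1 - P) *ᵥ u = 0 := by
      rw [hF u, hdvu, hduu]
      rw [mul_zero, inv_mul_cancel₀ hs0]
      simp
    have hFv : (1 - P) *ᵥ v = 0 := by
      rw [hF v, hdvv, hduv, mul_zero, zero_smul, sub_zero, mul_neg, inv_mul_cancel₀ hs0]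
      simp
    rw [hq u, hq v, hFu, hFv, hduu, hdvu, hduv, hdvv]
    simp only [dotProduct_zero, zero_dotProduct, add_zero]
    have h2α : γ * ((0:ℝ)^2 + s^2) + γ*((-s)^2 + (0:ℝ)^2) = 2*s + ε := by
      rw [hγ, hα]; field_simp; ring
    linarith

set_option maxHeartbeats 2000000 in
/-- Construction in the isotropic case. -/
lemma lemC (e f : Fin (2*n) → ℝ)
    (hee : e ⬝ᵥ e = 1 ∨ e = 0) (hff : f ⬝ᵥ f = 1 ∨ f = 0)
    (hef : e ⬝ᵥ f = 0) (hΔef : e ⬝ᵥ (sympForm n) *ᵥ f = 0)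
    {β : ℝ} (hβ : 0 < β) :
    ∃ σ : Matrix (Fin (2*n)) (Fin (2*n)) ℝ, σ.IsSymm ∧
      (∀ x y, 2 * (x ⬝ᵥ (sympForm n) *ᵥ y) ≤ x ⬝ᵥ σ *ᵥ x + y ⬝ᵥ σ *ᵥ y) ∧
      ∀ c₁ c₂ : ℝ, (c₁ • e + c₂ • f) ⬝ᵥ σ *ᵥ (c₁ • e + c₂ • f) ≤ β*(c₁^2 + c₂^2) := by
  classical
  set Δ := sympForm n with hΔ
  set de : Fin (2*n) → ℝ := Δ *ᵥ e with hde
  set df : Fin (2*n) → ℝ := Δ *ᵥ f with hdf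
  set P : Matrix (Fin (2*n)) (Fin (2*n)) ℝ :=
    vecMulVec e e + vecMulVec f f + vecMulVec de de + vecMulVec df df with hP
  set σ : Matrix (Fin (2*n)) (Fin (2*n)) ℝ :=
    β • (vecMulVec e e + vecMulVec f f) + β⁻¹ • (vecMulVec de de + vecMulVec df df)
      + (1 - P)ᵀ * (1 - P) with hσ
  have hβ0 : β ≠ 0 := ne_of_gt hβ
  -- base dot product facts
  have hfe : f ⬝ᵥ e = 0 := by rw [dotProduct_comm]; exact hef
  have hede : e ⬝ᵥ de = 0 := by rw [hde]; exact symp_self e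
  have hdee : de ⬝ᵥ e = 0 := by rw [dotProduct_comm]; exact hede
  have hfdf : f ⬝ᵥ df = 0 := by rw [hdf]; exact symp_self f
  have hdff : df ⬝ᵥ f = 0 := by rw [dotProduct_comm]; exact hfdf
  have hedf : e ⬝ᵥ df = 0 := by rw [hdf]; exact hΔef
  have hdfe : df ⬝ᵥ e = 0 := by rw [dotProduct_comm]; exact hedf
  have hfde : f ⬝ᵥ de = 0 := by rw [hde, symp_anti, hΔef]; ring
  have hdef : de ⬝ᵥ f = 0 := by rw [dotProduct_comm]; exact hfde
  have hdede : de ⬝ᵥ de = e ⬝ᵥ e := by rw [hde]; exact symp_dot_symp e e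
  have hdfdf : df ⬝ᵥ df = f ⬝ᵥ f := by rw [hdf]; exact symp_dot_symp f f
  have hdedf : de ⬝ᵥ df = 0 := by rw [hde, hdf, symp_dot_symp]; exact hef
  have hdfde : df ⬝ᵥ de = 0 := by rw [dotProduct_comm]; exact hdedf
  -- absorption facts
  have he1 : ∀ z, (e ⬝ᵥ e) * (e ⬝ᵥ z) = e ⬝ᵥ z := by
    intro z; rcases hee with h|h
    · rw [h, one_mul]
    · simp [h]
  have he2 : ∀ z, (e ⬝ᵥ e) * (de ⬝ᵥ z) = de ⬝ᵥ z := by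
    intro z; rcases hee with h|h
    · rw [h, one_mul]
    · have : de = 0 := by rw [hde, h, Matrix.mulVec_zero]
      simp [this, h]
  have hf1 : ∀ z, (f ⬝ᵥ f) * (f ⬝ᵥ z) = f ⬝ᵥ z := by
    intro z; rcases hff with h|h
    · rw [h, one_mul]
    · simp [h]
  have hf2 : ∀ z, (f ⬝ᵥ f) * (df ⬝ᵥ z) = df ⬝ᵥ z := by
    intro z; rcases hff with h|h
    · rw [h, one_mul]
    · have : df = 0 := by rw [hdf, h, Matrix.mulVec_zero]
      simp [this, h]
  have hν1 : e ⬝ᵥ e = 0 ∨ e ⬝ᵥ e = 1 := by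
    rcases hee with h|h
    · right; exact h
    · left; simp [h]
  have hν2 : f ⬝ᵥ f = 0 ∨ f ⬝ᵥ f = 1 := by
    rcases hff with h|h
    · right; exact h
    · left; simp [h]
  -- residual map
  have hF : ∀ x, (1 - P) *ᵥ x
      = x - (e ⬝ᵥ x) • e - (f ⬝ᵥ x) • f - (de ⬝ᵥ x) • de - (df ⬝ᵥ x) • df := by
    intro x
    rw [Matrix.sub_mulVec, Matrix.one_mulVec, hP, Matrix.add_mulVec, Matrix.add_mulVec,
      Matrix.add_mulVec, vecMulVec_mulVec', vecMulVec_mulVec', vecMulVec_mulVec',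
      vecMulVec_mulVec']
    abel
  have hFe : ∀ x, e ⬝ᵥ ((1 - P) *ᵥ x) = 0 := by
    intro x
    rw [hF x]
    simp only [dotProduct_sub, dotProduct_smul, smul_eq_mul, hef, hede, hedf]
    linear_combination -he1 x
  have hFf : ∀ x, f ⬝ᵥ ((1 - P) *ᵥ x) = 0 := by
    intro x
    rw [hF x]
    simp only [dotProduct_sub, dotProduct_smul, smul_eq_mul, hfe, hfde, hfdf]
    linear_combination -hf1 x
  have hFde : ∀ x, de ⬝ᵥ ((1 - P) *ᵥ x) = 0 := by
    intro x
    rw [hF x]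
    simp only [dotProduct_sub, dotProduct_smul, smul_eq_mul, hdee, hdef,
      hdede, hdedf]
    linear_combination -he2 x
  have hFdf : ∀ x, df ⬝ᵥ ((1 - P) *ᵥ x) = 0 := by
    intro x
    rw [hF x]
    simp only [dotProduct_sub, dotProduct_smul, smul_eq_mul, hdfe, hdff,
      hdfde, hdfdf]
    linear_combination -hf2 x
  -- quadratic form expansion
  have hq : ∀ x, x ⬝ᵥ σ *ᵥ x
      = β*((e ⬝ᵥ x)^2 + (f ⬝ᵥ x)^2) + β⁻¹*((de ⬝ᵥ x)^2 + (df ⬝ᵥ x)^2)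
        + ((1 - P) *ᵥ x) ⬝ᵥ ((1 - P) *ᵥ x) := by
    intro x
    rw [hσ]
    simp only [Matrix.add_mulVec, Matrix.smul_mulVec, dotProduct_add,
      dotProduct_smul, vecMulVec_mulVec', dot_tmul, smul_eq_mul,
      dotProduct_comm x e, dotProduct_comm x f,
      dotProduct_comm x de, dotProduct_comm x df]
    ring
  -- decomposition of the symplectic pairing
  have hxy : ∀ x y, x ⬝ᵥ Δ *ᵥ y
      = (e ⬝ᵥ e) * ((de ⬝ᵥ x)*(e ⬝ᵥ y) - (e ⬝ᵥ x)*(de ⬝ᵥ y))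
        + (f ⬝ᵥ f) * ((df ⬝ᵥ x)*(f ⬝ᵥ y) - (f ⬝ᵥ x)*(df ⬝ᵥ y))
        + ((1 - P) *ᵥ x) ⬝ᵥ Δ *ᵥ ((1 - P) *ᵥ y) := by
    intro x y
    have hx : (1 - P) *ᵥ x + (e ⬝ᵥ x) • e + (f ⬝ᵥ x) • f + (de ⬝ᵥ x) • de
        + (df ⬝ᵥ x) • df = x := by rw [hF x]; abel
    have hy : (1 - P) *ᵥ y + (e ⬝ᵥ y) • e + (f ⬝ᵥ y) • f + (de ⬝ᵥ y) • de
        + (df ⬝ᵥ y) • df = y := by rw [hF y]; abel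
    conv_lhs => rw [← hx, ← hy]
    generalize hX : (1 - P) *ᵥ x = X
    generalize hY : (1 - P) *ᵥ y = Y
    have b1 : e ⬝ᵥ Δ *ᵥ e = 0 := symp_self e
    have b2 : e ⬝ᵥ Δ *ᵥ f = 0 := by rw [← hdf]; exact hΔef
    have b3 : f ⬝ᵥ Δ *ᵥ e = 0 := by rw [hΔ, symp_anti, ← hΔ, ← hdf, hΔef]; ring
    have b4 : f ⬝ᵥ Δ *ᵥ f = 0 := symp_self f
    have b5 : e ⬝ᵥ Δ *ᵥ de = -(e ⬝ᵥ e) := by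
      rw [hde, hΔ, symp_symp, dotProduct_neg]
    have b6 : e ⬝ᵥ Δ *ᵥ df = 0 := by
      rw [hdf, hΔ, symp_symp, dotProduct_neg, hef]; ring
    have b7 : f ⬝ᵥ Δ *ᵥ de = 0 := by
      rw [hde, hΔ, symp_symp, dotProduct_neg, hfe]; ring
    have b8 : f ⬝ᵥ Δ *ᵥ df = -(f ⬝ᵥ f) := by
      rw [hdf, hΔ, symp_symp, dotProduct_neg]
    have b9 : de ⬝ᵥ Δ *ᵥ e = e ⬝ᵥ e := by rw [← hde]; exact hdede
    have b10 : de ⬝ᵥ Δ *ᵥ f = 0 := by rw [← hdf]; exact hdedf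
    have b11 : df ⬝ᵥ Δ *ᵥ e = 0 := by rw [← hde]; exact hdfde
    have b12 : df ⬝ᵥ Δ *ᵥ f = f ⬝ᵥ f := by rw [← hdf]; exact hdfdf
    have b13 : de ⬝ᵥ Δ *ᵥ de = 0 := symp_self de
    have b14 : de ⬝ᵥ Δ *ᵥ df = 0 := by
      rw [hdf, hΔ, symp_symp, dotProduct_neg, hdef]; ring
    have b15 : df ⬝ᵥ Δ *ᵥ de = 0 := by
      rw [hde, hΔ, symp_symp, dotProduct_neg, hdfe]; ring
    have b16 : df ⬝ᵥ Δ *ᵥ df = 0 := symp_self df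
    have c1 : X ⬝ᵥ Δ *ᵥ e = 0 := by
      rw [← hde, dotProduct_comm, ← hX]; exact hFde x
    have c2 : X ⬝ᵥ Δ *ᵥ f = 0 := by
      rw [← hdf, dotProduct_comm, ← hX]; exact hFdf x
    have c3 : X ⬝ᵥ Δ *ᵥ de = 0 := by
      rw [hde, hΔ, symp_symp, dotProduct_neg, dotProduct_comm, ← hX, hFe x]
      ring
    have c4 : X ⬝ᵥ Δ *ᵥ df = 0 := by
      rw [hdf, hΔ, symp_symp, dotProduct_neg, dotProduct_comm, ← hX, hFf x]
      ring
    have c5 : e ⬝ᵥ Δ *ᵥ Y = 0 := by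
      rw [hΔ, symp_anti, ← hΔ, ← hde, dotProduct_comm, ← hY, hFde y]; ring
    have c6 : f ⬝ᵥ Δ *ᵥ Y = 0 := by
      rw [hΔ, symp_anti, ← hΔ, ← hdf, dotProduct_comm, ← hY, hFdf y]; ring
    have c7 : de ⬝ᵥ Δ *ᵥ Y = 0 := by
      rw [hΔ, symp_anti, ← hΔ, hde, hΔ, symp_symp, dotProduct_neg,
        dotProduct_comm, ← hY, hFe y]; ring
    have c8 : df ⬝ᵥ Δ *ᵥ Y = 0 := by
      rw [hΔ, symp_anti, ← hΔ, hdf, hΔ, symp_symp, dotProduct_neg,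
        dotProduct_comm, ← hY, hFf y]; ring
    simp only [Matrix.mulVec_add, Matrix.mulVec_smul, dotProduct_add,
      add_dotProduct, dotProduct_smul, smul_dotProduct, smul_eq_mul,
      b1, b2, b3, b4, b5, b6, b7, b8, b9, b10, b11, b12, b13, b14, b15, b16,
      c1, c2, c3, c4, c5, c6, c7, c8]
    ring
  -- AM-GM helpers
  have hAM : ∀ p q : ℝ, 2*(p*q) ≤ β*p^2 + β⁻¹*q^2 := by
    intro p q
    have h0 : 0 ≤ β⁻¹*(β*p - q)^2 := mul_nonneg (inv_nonneg.mpr hβ.le) (sq_nonneg _)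
    have he' : β⁻¹*(β*p - q)^2 = β*p^2 - 2*(p*q) + β⁻¹*q^2 := by field_simp; ring
    linarith
  have hAMm : ∀ p q : ℝ, -(β*p^2 + β⁻¹*q^2) ≤ 2*(p*q) := by
    intro p q
    have h0 : 0 ≤ β⁻¹*(β*p + q)^2 := mul_nonneg (inv_nonneg.mpr hβ.le) (sq_nonneg _)
    have he' : β⁻¹*(β*p + q)^2 = β*p^2 + 2*(p*q) + β⁻¹*q^2 := by field_simp; ring
    linarith
  refine ⟨σ, ?_, ?_, ?_⟩
  · unfold Matrix.IsSymm
    rw [hσ, Matrix.transpose_add, Matrix.transpose_mul, Matrix.transpose_transpose]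
    congr 1
    ext i j
    simp only [Matrix.transpose_apply, Matrix.add_apply, Matrix.smul_apply,
      vecMulVec_apply, smul_eq_mul]
    ring
  · intro x y
    rw [hq x, hq y, hxy x y]
    have h2 : 2 * (((1 - P) *ᵥ x) ⬝ᵥ Δ *ᵥ ((1 - P) *ᵥ y))
        ≤ ((1 - P) *ᵥ x) ⬝ᵥ ((1 - P) *ᵥ x) + ((1 - P) *ᵥ y) ⬝ᵥ ((1 - P) *ᵥ y) := by
      calc 2 * (((1 - P) *ᵥ x) ⬝ᵥ Δ *ᵥ ((1 - P) *ᵥ y))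
          ≤ ((1 - P) *ᵥ x) ⬝ᵥ ((1 - P) *ᵥ x)
            + (Δ *ᵥ ((1 - P) *ᵥ y)) ⬝ᵥ (Δ *ᵥ ((1 - P) *ᵥ y)) := two_dot_le _ _
        _ = ((1 - P) *ᵥ x) ⬝ᵥ ((1 - P) *ᵥ x) + ((1 - P) *ᵥ y) ⬝ᵥ ((1 - P) *ᵥ y) := by
            rw [hΔ, symp_dot_symp]
    have n1 : 0 ≤ β*(e ⬝ᵥ x)^2 := mul_nonneg hβ.le (sq_nonneg _)
    have n2 : 0 ≤ β*(f ⬝ᵥ x)^2 := mul_nonneg hβ.le (sq_nonneg _)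
    have n3 : 0 ≤ β*(e ⬝ᵥ y)^2 := mul_nonneg hβ.le (sq_nonneg _)
    have n4 : 0 ≤ β*(f ⬝ᵥ y)^2 := mul_nonneg hβ.le (sq_nonneg _)
    have hβi : 0 ≤ β⁻¹ := inv_nonneg.mpr hβ.le
    have n5 : 0 ≤ β⁻¹*(de ⬝ᵥ x)^2 := mul_nonneg hβi (sq_nonneg _)
    have n6 : 0 ≤ β⁻¹*(df ⬝ᵥ x)^2 := mul_nonneg hβi (sq_nonneg _)
    have n7 : 0 ≤ β⁻¹*(de ⬝ᵥ y)^2 := mul_nonneg hβi (sq_nonneg _)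
    have n8 : 0 ≤ β⁻¹*(df ⬝ᵥ y)^2 := mul_nonneg hβi (sq_nonneg _)
    rcases hν1 with h1|h1 <;> rcases hν2 with h2'|h2' <;> rw [h1, h2'] <;>
      linarith [hAM (e ⬝ᵥ y) (de ⬝ᵥ x), hAMm (e ⬝ᵥ x) (de ⬝ᵥ y),
        hAM (f ⬝ᵥ y) (df ⬝ᵥ x), hAMm (f ⬝ᵥ x) (df ⬝ᵥ y), h2,
        n1, n2, n3, n4, n5, n6, n7, n8]
  · intro c₁ c₂
    have hze : e ⬝ᵥ (c₁ • e + c₂ • f) = c₁*(e ⬝ᵥ e) := by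
      rw [dotProduct_add, dotProduct_smul, dotProduct_smul, hef]
      simp
    have hzf : f ⬝ᵥ (c₁ • e + c₂ • f) = c₂*(f ⬝ᵥ f) := by
      rw [dotProduct_add, dotProduct_smul, dotProduct_smul, hfe]
      simp
    have hzde : de ⬝ᵥ (c₁ • e + c₂ • f) = 0 := by
      rw [dotProduct_add, dotProduct_smul, dotProduct_smul, hdee, hdef]
      simp
    have hzdf : df ⬝ᵥ (c₁ • e + c₂ • f) = 0 := by
      rw [dotProduct_add, dotProduct_smul, dotProduct_smul, hdfe, hdff]
      simp
    have hFz : (1 - P) *ᵥ (c₁ • e + c₂ • f) = 0 := by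
      rw [hF, hze, hzf, hzde, hzdf]
      rcases hee with h|h <;> rcases hff with h'|h' <;>
        simp [h, h', smul_smul] <;> abel
    rw [hq _, hFz, hze, hzf, hzde, hzdf]
    simp only [dotProduct_zero, zero_dotProduct, add_zero]
    rcases hν1 with h1|h1 <;> rcases hν2 with h2'|h2' <;> rw [h1, h2'] <;>
      nlinarith [mul_nonneg hβ.le (sq_nonneg c₁), mul_nonneg hβ.le (sq_nonneg c₂), hβ]

lemma dot_self_nonneg' (z : Fin m → ℝ) : 0 ≤ z ⬝ᵥ z :=
  Finset.sum_nonneg fun i _ => mul_self_nonneg (z i)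

lemma dot_self_pos (z : Fin m → ℝ) (hz : z ≠ 0) : 0 < z ⬝ᵥ z :=
  lt_of_le_of_ne (dot_self_nonneg' z) fun h => hz (dotProduct_self_eq_zero.mp h.symm)

lemma normalized_dot (z : Fin m → ℝ) (hz : z ≠ 0) :
    ((Real.sqrt (z ⬝ᵥ z))⁻¹ • z) ⬝ᵥ ((Real.sqrt (z ⬝ᵥ z))⁻¹ • z) = 1 := by
  have h0 : 0 < z ⬝ᵥ z := dot_self_pos z hz
  rw [smul_dotProduct, dotProduct_smul, smul_eq_mul, smul_eq_mul,
    ← mul_assoc, ← mul_inv]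
  rw [Real.mul_self_sqrt h0.le, inv_mul_cancel₀ h0.ne']

lemma normalized_smul (z : Fin m → ℝ) (hz : z ≠ 0) :
    (Real.sqrt (z ⬝ᵥ z)) • ((Real.sqrt (z ⬝ᵥ z))⁻¹ • z) = z := by
  have h0 : 0 < z ⬝ᵥ z := dot_self_pos z hz
  rw [smul_smul, mul_inv_cancel₀ (ne_of_gt (Real.sqrt_pos.mpr h0)), one_smul]

/-- The real-side main lemma. -/
lemma lemG (u v : Fin (2*n) → ℝ) {ε : ℝ} (hε : 0 < ε) :
    ∃ σ : Matrix (Fin (2*n)) (Fin (2*n)) ℝ, σ.IsSymm ∧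
      (∀ x y, 2 * (x ⬝ᵥ (sympForm n) *ᵥ y) ≤ x ⬝ᵥ σ *ᵥ x + y ⬝ᵥ σ *ᵥ y) ∧
      u ⬝ᵥ σ *ᵥ u + v ⬝ᵥ σ *ᵥ v ≤ |2 * (u ⬝ᵥ (sympForm n) *ᵥ v)| + ε := by
  rcases lt_trichotomy (u ⬝ᵥ (sympForm n) *ᵥ v) 0 with h|h|h
  · have h' : 0 < v ⬝ᵥ (sympForm n) *ᵥ u := by
      rw [symp_anti]; linarith
    obtain ⟨σ, hsym, hmas, hval⟩ := lemB v u h' hε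
    refine ⟨σ, hsym, hmas, ?_⟩
    rw [abs_of_neg (by linarith : 2 * (u ⬝ᵥ (sympForm n) *ᵥ v) < 0)]
    rw [symp_anti v u] at hval
    linarith
  · obtain ⟨e, f, c₁, c₂, d₁, d₂, hee, hff, hef, hΔef, hu', hv'⟩ :
        ∃ e f : Fin (2*n) → ℝ, ∃ c₁ c₂ d₁ d₂ : ℝ,
          (e ⬝ᵥ e = 1 ∨ e = 0) ∧ (f ⬝ᵥ f = 1 ∨ f = 0) ∧ e ⬝ᵥ f = 0 ∧
          e ⬝ᵥ (sympForm n) *ᵥ f = 0 ∧ u = c₁ • e + c₂ • f ∧ v = d₁ • e + d₂ • f := by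
      by_cases hu : u = 0
      · by_cases hv : v = 0
        · exact ⟨0, 0, 0, 0, 0, 0, Or.inr rfl, Or.inr rfl, by simp, by simp,
            by simp [hu], by simp [hv]⟩
        · refine ⟨(Real.sqrt (v ⬝ᵥ v))⁻¹ • v, 0, 0, 0, Real.sqrt (v ⬝ᵥ v), 0,
            Or.inl (normalized_dot v hv), Or.inr rfl, by simp, by simp [Matrix.mulVec_zero],
            by simp [hu], ?_⟩
          rw [smul_zero, add_zero, normalized_smul v hv]
      · set nu := Real.sqrt (u ⬝ᵥ u) with hnu
        set e := nu⁻¹ • u with he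
        have hee' : e ⬝ᵥ e = 1 := normalized_dot u hu
        have hue : nu • e = u := normalized_smul u hu
        have heΔe : e ⬝ᵥ (sympForm n) *ᵥ e = 0 := symp_self e
        have heΔv : e ⬝ᵥ (sympForm n) *ᵥ v = 0 := by
          rw [he, smul_dotProduct, smul_eq_mul, h, mul_zero]
        by_cases hr : v - (e ⬝ᵥ v) • e = 0
        · refine ⟨e, 0, nu, 0, e ⬝ᵥ v, 0, Or.inl hee', Or.inr rfl, by simp,
            by simp [Matrix.mulVec_zero], by rw [smul_zero, add_zero, hue], ?_⟩
          rw [smul_zero, add_zero]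
          exact sub_eq_zero.mp hr
        · set r := v - (e ⬝ᵥ v) • e with hrdef
          set f := (Real.sqrt (r ⬝ᵥ r))⁻¹ • r with hf
          have hff' : f ⬝ᵥ f = 1 := normalized_dot r hr
          have hrf : Real.sqrt (r ⬝ᵥ r) • f = r := normalized_smul r hr
          have her : e ⬝ᵥ r = 0 := by
            rw [hrdef, dotProduct_sub, dotProduct_smul, hee', smul_eq_mul,
              mul_one, sub_self]
          have hef' : e ⬝ᵥ f = 0 := by
            rw [hf, dotProduct_smul, her, smul_eq_mul, mul_zero]
          have heΔr : e ⬝ᵥ (sympForm n) *ᵥ r = 0 := by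
            rw [hrdef, Matrix.mulVec_sub, dotProduct_sub, heΔv, Matrix.mulVec_smul,
              dotProduct_smul, heΔe, smul_eq_mul, mul_zero, sub_self]
          have heΔf : e ⬝ᵥ (sympForm n) *ᵥ f = 0 := by
            rw [hf, Matrix.mulVec_smul, dotProduct_smul, heΔr, smul_eq_mul, mul_zero]
          refine ⟨e, f, nu, 0, e ⬝ᵥ v, Real.sqrt (r ⬝ᵥ r), Or.inl hee', Or.inl hff',
            hef', heΔf, by rw [zero_smul, add_zero, hue], ?_⟩
          rw [hrf, hrdef]
          abel
    set C : ℝ := c₁^2 + c₂^2 + d₁^2 + d₂^2 with hC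
    have hC0 : 0 ≤ C := by positivity
    have hβ : 0 < ε / (C + 1) := div_pos hε (by linarith)
    obtain ⟨σ, hsym, hmas, hval⟩ := lemC e f hee hff hef hΔef hβ
    refine ⟨σ, hsym, hmas, ?_⟩
    rw [h, hu', hv']
    have h1 := hval c₁ c₂
    have h2 := hval d₁ d₂
    have hle : ε / (C + 1) * (c₁^2 + c₂^2) + ε / (C + 1) * (d₁^2 + d₂^2) ≤ ε := by
      rw [div_mul_eq_mul_div, div_mul_eq_mul_div, ← add_div,
        div_le_iff₀ (by linarith : (0:ℝ) < C + 1)]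
      nlinarith [hε, hC0]
    simp only [mul_zero, abs_zero, zero_add]
    linarith
  · obtain ⟨σ, hsym, hmas, hval⟩ := lemB u v h hε
    refine ⟨σ, hsym, hmas, ?_⟩
    rw [abs_of_pos (by linarith : 0 < 2 * (u ⬝ᵥ (sympForm n) *ᵥ v))]
    exact hval

lemma dot_ofReal (M : Matrix (Fin m) (Fin m) ℝ) (z : Fin m → ℂ) :
    star z ⬝ᵥ (M.map (fun a => (a : ℂ))) *ᵥ z =
      (((fun i => (z i).re) ⬝ᵥ M *ᵥ (fun i => (z i).re)
        + (fun i => (z i).im) ⬝ᵥ M *ᵥ (fun i => (z i).im) : ℝ) : ℂ)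
      + (((fun i => (z i).re) ⬝ᵥ M *ᵥ (fun i => (z i).im)
        - (fun i => (z i).im) ⬝ᵥ M *ᵥ (fun i => (z i).re) : ℝ) : ℂ) * Complex.I := by
  simp only [dotProduct, Matrix.mulVec, Matrix.map_apply, Pi.star_apply, Finset.mul_sum,
    Finset.sum_mul, Complex.ofReal_sum, Complex.ofReal_add, Complex.ofReal_sub,
    Complex.ofReal_mul, add_mul, sub_mul]
  rw [← Finset.sum_sub_distrib, ← Finset.sum_add_distrib, ← Finset.sum_add_distrib]
  apply Finset.sum_congr rfl
  intro x _
  rw [← Finset.sum_sub_distrib, ← Finset.sum_add_distrib, ← Finset.sum_add_distrib]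
  apply Finset.sum_congr rfl
  intro i _
  apply Complex.ext <;> simp [Complex.mul_re, Complex.mul_im] <;> ring

lemma value_plus (σ : Matrix (Fin (2*n)) (Fin (2*n)) ℝ) (hσ : σ.IsSymm) (z : Fin (2*n) → ℂ) :
    star z ⬝ᵥ ((σ.map (fun a => (a : ℂ))
        + Complex.I • (sympForm n).map (fun a => (a : ℂ))) *ᵥ z)
    = ((((fun i => (z i).re) ⬝ᵥ σ *ᵥ (fun i => (z i).re)
        + (fun i => (z i).im) ⬝ᵥ σ *ᵥ (fun i => (z i).im))
        - 2 * ((fun i => (z i).re) ⬝ᵥ (sympForm n) *ᵥ (fun i => (z i).im)) : ℝ) : ℂ) := by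
  rw [Matrix.add_mulVec, dotProduct_add, Matrix.smul_mulVec,
    dotProduct_smul, dot_ofReal, dot_ofReal,
    dot_symm_of hσ (fun i => (z i).im) (fun i => (z i).re),
    symp_self, symp_self, symp_anti (fun i => (z i).im) (fun i => (z i).re)]
  apply Complex.ext <;> simp <;> ring

lemma value_minus (σ : Matrix (Fin (2*n)) (Fin (2*n)) ℝ) (hσ : σ.IsSymm) (z : Fin (2*n) → ℂ) :
    star z ⬝ᵥ ((σ.map (fun a => (a : ℂ))
        - Complex.I • (sympForm n).map (fun a => (a : ℂ))) *ᵥ z)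
    = ((((fun i => (z i).re) ⬝ᵥ σ *ᵥ (fun i => (z i).re)
        + (fun i => (z i).im) ⬝ᵥ σ *ᵥ (fun i => (z i).im))
        + 2 * ((fun i => (z i).re) ⬝ᵥ (sympForm n) *ᵥ (fun i => (z i).im)) : ℝ) : ℂ) := by
  rw [Matrix.sub_mulVec, dotProduct_sub, Matrix.smul_mulVec,
    dotProduct_smul, dot_ofReal, dot_ofReal,
    dot_symm_of hσ (fun i => (z i).im) (fun i => (z i).re),
    symp_self, symp_self, symp_anti (fun i => (z i).im) (fun i => (z i).re)]
  apply Complex.ext <;> simp <;> ring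

lemma map_conjT (M : Matrix (Fin m) (Fin m) ℝ) :
    (M.map (fun a => (a : ℂ)))ᴴ = Mᵀ.map (fun a => (a : ℂ)) := by
  ext i j
  simp [Matrix.conjTranspose_apply, Matrix.map_apply, Complex.conj_ofReal]

lemma herm_plus (σ : Matrix (Fin (2*n)) (Fin (2*n)) ℝ) (hσ : σ.IsSymm) :
    (σ.map (fun a => (a : ℂ))
      + Complex.I • (sympForm n).map (fun a => (a : ℂ))).IsHermitian := by
  have h1 : ((sympForm n).map (fun a => (a : ℂ)))ᴴ = -(sympForm n).map (fun a => (a : ℂ)) := by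
    rw [map_conjT, transpose_symp']
    ext i j; simp [Matrix.map_apply]
  unfold Matrix.IsHermitian
  rw [Matrix.conjTranspose_add, Matrix.conjTranspose_smul, map_conjT, hσ.eq, h1]
  rw [Complex.star_def, Complex.conj_I]
  rw [smul_neg, neg_smul, neg_neg]

lemma herm_minus (σ : Matrix (Fin (2*n)) (Fin (2*n)) ℝ) (hσ : σ.IsSymm) :
    (σ.map (fun a => (a : ℂ))
      - Complex.I • (sympForm n).map (fun a => (a : ℂ))).IsHermitian := by
  have h1 : ((sympForm n).map (fun a => (a : ℂ)))ᴴ = -(sympForm n).map (fun a => (a : ℂ)) := by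
    rw [map_conjT, transpose_symp']
    ext i j; simp [Matrix.map_apply]
  unfold Matrix.IsHermitian
  rw [Matrix.conjTranspose_sub, Matrix.conjTranspose_smul, map_conjT, hσ.eq, h1]
  rw [Complex.star_def, Complex.conj_I]
  rw [smul_neg, neg_smul, neg_neg]

lemma psd_of_master (σ : Matrix (Fin (2*n)) (Fin (2*n)) ℝ) (hσ : σ.IsSymm)
    (hm : ∀ x y, 2 * (x ⬝ᵥ (sympForm n) *ᵥ y) ≤ x ⬝ᵥ σ *ᵥ x + y ⬝ᵥ σ *ᵥ y) :
    (σ.map (fun a => (a : ℂ))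
      + Complex.I • (sympForm n).map (fun a => (a : ℂ))).PosSemidef ∧
    (σ.map (fun a => (a : ℂ))
      - Complex.I • (sympForm n).map (fun a => (a : ℂ))).PosSemidef := by
  constructor
  · refine Matrix.PosSemidef.of_dotProduct_mulVec_nonneg (herm_plus σ hσ) fun z => ?_
    rw [value_plus σ hσ z]
    rw [Complex.zero_le_real]
    have := hm (fun i => (z i).re) (fun i => (z i).im)
    linarith
  · refine Matrix.PosSemidef.of_dotProduct_mulVec_nonneg (herm_minus σ hσ) fun z => ?_
    rw [value_minus σ hσ z]
    rw [Complex.zero_le_real]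
    have := hm (fun i => (z i).re) (fun i => -(z i).im)
    have he : (fun i => -(z i).im) ⬝ᵥ σ *ᵥ (fun i => -(z i).im)
        = (fun i => (z i).im) ⬝ᵥ σ *ᵥ (fun i => (z i).im) := by
      have hn : (fun i => -(z i).im) = -(fun i => (z i).im) := by funext i; simp
      rw [hn, Matrix.mulVec_neg, dotProduct_neg, neg_dotProduct, neg_neg]
    have he2 : (fun i => (z i).re) ⬝ᵥ (sympForm n) *ᵥ (fun i => -(z i).im)
        = -((fun i => (z i).re) ⬝ᵥ (sympForm n) *ᵥ (fun i => (z i).im)) := by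
      have hn : (fun i => -(z i).im) = -(fun i => (z i).im) := by funext i; simp
      rw [hn, Matrix.mulVec_neg, dotProduct_neg]
    rw [he, he2] at this
    linarith

/-- Infimum over quantum covariance matrices: for any `w ∈ ℂ^{2n}`, the infimum of `w† σ w`
over all real symmetric `σ` with `σ ≥ ± i Δ` equals `|w† Δ w|`. -/
theorem inf_over_covariance_matrices (n : ℕ) (w : Fin (2 * n) → ℂ) :
    IsGLB
      {r : ℝ | ∃ σ : Matrix (Fin (2 * n)) (Fin (2 * n)) ℝ, σ.IsSymm ∧
        (σ.map (fun a => (a : ℂ)) + Complex.I • (sympForm n).map (fun a => (a : ℂ))).PosSemidef ∧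
        (σ.map (fun a => (a : ℂ)) - Complex.I • (sympForm n).map (fun a => (a : ℂ))).PosSemidef ∧
        r = (dotProduct (star w) ((σ.map (fun a => (a : ℂ))).mulVec w)).re}
      ‖(dotProduct (star w) (((sympForm n).map (fun a => (a : ℂ))).mulVec w))‖ := by
  have hTeq : star w ⬝ᵥ ((sympForm n).map (fun a => (a : ℂ))) *ᵥ w
      = ((2 * ((fun i => (w i).re) ⬝ᵥ (sympForm n) *ᵥ (fun i => (w i).im)) : ℝ) : ℂ)
        * Complex.I := by
    rw [dot_ofReal, symp_self, symp_self, symp_anti (fun i => (w i).im) (fun i => (w i).re)]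
    push_cast
    ring
  have habs : ‖(star w ⬝ᵥ ((sympForm n).map (fun a => (a : ℂ))) *ᵥ w)‖
      = |2 * ((fun i => (w i).re) ⬝ᵥ (sympForm n) *ᵥ (fun i => (w i).im))| := by
    rw [hTeq, norm_mul, Complex.norm_I, Complex.norm_real, Real.norm_eq_abs, mul_one]
  constructor
  · rintro r ⟨σ, hsym, h₁, h₂, rfl⟩
    have hre : (star w ⬝ᵥ (σ.map (fun a => (a : ℂ))) *ᵥ w).re
        = (fun i => (w i).re) ⬝ᵥ σ *ᵥ (fun i => (w i).re)
          + (fun i => (w i).im) ⬝ᵥ σ *ᵥ (fun i => (w i).im) := by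
      rw [dot_ofReal]; simp
    have v1 := h₁.dotProduct_mulVec_nonneg w
    rw [value_plus σ hsym w, Complex.zero_le_real] at v1
    have v2 := h₂.dotProduct_mulVec_nonneg w
    rw [value_minus σ hsym w, Complex.zero_le_real] at v2
    show ‖_‖ ≤ _
    rw [habs, hre, abs_le]
    constructor <;> linarith
  · intro b hb
    apply le_of_forall_pos_le_add
    intro ε hε
    obtain ⟨σ, hsym, hmas, hval⟩ := lemG (fun i => (w i).re) (fun i => (w i).im) hε
    have hpsd := psd_of_master σ hsym hmas
    have hre : (star w ⬝ᵥ (σ.map (fun a => (a : ℂ))) *ᵥ w).re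
        = (fun i => (w i).re) ⬝ᵥ σ *ᵥ (fun i => (w i).re)
          + (fun i => (w i).im) ⬝ᵥ σ *ᵥ (fun i => (w i).im) := by
      rw [dot_ofReal]; simp
    have hmem : ((star w ⬝ᵥ (σ.map (fun a => (a : ℂ))) *ᵥ w).re) ∈
        {r : ℝ | ∃ σ : Matrix (Fin (2 * n)) (Fin (2 * n)) ℝ, σ.IsSymm ∧
          (σ.map (fun a => (a : ℂ))
            + Complex.I • (sympForm n).map (fun a => (a : ℂ))).PosSemidef ∧
          (σ.map (fun a => (a : ℂ))
            - Complex.I • (sympForm n).map (fun a => (a : ℂ))).PosSemidef ∧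
          r = (dotProduct (star w) ((σ.map (fun a => (a : ℂ))).mulVec w)).re} :=
      ⟨σ, hsym, hpsd.1, hpsd.2, rfl⟩
    have hble := hb hmem
    rw [hre] at hble
    rw [habs]
    linarith

end
end

section
/- Any α satisfying the Gaussian-to-Gaussian positivity condition is positive semidefinite: if K and α are real 2n×2n matrices with α symmetric such that K σ Kᵀ + α ≥ ±iΔ for every real symmetric σ with σ ≥ ±iΔ, then α ≥ 0. -/
open scoped ComplexOrder

namespace NoiseAux

open Matrix Complex

noncomputable section

variable {n : ℕ}

lemma symp_transpose (n : ℕ) : (sympForm n)ᵀ = -sympForm n := by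
  ext i j
  simp only [sympForm, transpose_apply, Matrix.neg_apply, Matrix.of_apply]
  split_ifs <;> first | (exfalso; omega) | norm_num

lemma symp_mul_self (n : ℕ) : sympForm n * sympForm n = -1 := by
  ext i j
  rw [Matrix.mul_apply, Matrix.neg_apply, Matrix.one_apply]
  rcases Nat.even_or_odd (i : ℕ) with hi | hi
  · have h1 : (i : ℕ) % 2 = 0 := Nat.even_iff.mp hi
    have hlt : (i : ℕ) + 1 < 2 * n := by have := i.isLt; omega
    rw [Finset.sum_eq_single (⟨(i : ℕ) + 1, hlt⟩ : Fin (2 * n))]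
    · have hb : ((⟨(i : ℕ) + 1, hlt⟩ : Fin (2 * n)) : ℕ) = (i : ℕ) + 1 := rfl
      simp only [sympForm, Matrix.of_apply, hb]
      rw [if_pos (show (i : ℕ) % 2 = 0 ∧ True from ⟨h1, trivial⟩), one_mul,
        if_neg (show ¬(((i : ℕ) + 1) % 2 = 0 ∧ (j : ℕ) = (i : ℕ) + 1 + 1) from by omega)]
      by_cases hij : i = j
      · have hv : (j : ℕ) = (i : ℕ) := by rw [hij]
        rw [if_pos (show (j : ℕ) % 2 = 0 ∧ (i : ℕ) + 1 = (j : ℕ) + 1 from by omega), if_pos hij]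
        try norm_num
      · have hvij : (i : ℕ) ≠ (j : ℕ) := fun hc => hij (Fin.ext hc)
        rw [if_neg (show ¬((j : ℕ) % 2 = 0 ∧ (i : ℕ) + 1 = (j : ℕ) + 1) from by omega),
          if_neg hij]
        try norm_num
    · intro k _ hk
      have hk' : (k : ℕ) ≠ (i : ℕ) + 1 := fun hc => hk (Fin.ext hc)
      have hz : sympForm n i k = 0 := by
        simp only [sympForm, Matrix.of_apply]
        rw [if_neg (by omega), if_neg (by omega)]
      rw [hz, zero_mul]
    · intro hmem; exact absurd (Finset.mem_univ _) hmem
  · have h1 : (i : ℕ) % 2 = 1 := Nat.odd_iff.mp hi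
    have hlt : (i : ℕ) - 1 < 2 * n := by have := i.isLt; omega
    rw [Finset.sum_eq_single (⟨(i : ℕ) - 1, hlt⟩ : Fin (2 * n))]
    · have hb : ((⟨(i : ℕ) - 1, hlt⟩ : Fin (2 * n)) : ℕ) = (i : ℕ) - 1 := rfl
      simp only [sympForm, Matrix.of_apply, hb]
      rw [if_neg (show ¬((i : ℕ) % 2 = 0 ∧ (i : ℕ) - 1 = (i : ℕ) + 1) from by omega),
        if_pos (show ((i : ℕ) - 1) % 2 = 0 ∧ (i : ℕ) = (i : ℕ) - 1 + 1 from by omega)]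
      by_cases hij : i = j
      · have hv : (j : ℕ) = (i : ℕ) := by rw [hij]
        rw [if_pos (show ((i : ℕ) - 1) % 2 = 0 ∧ (j : ℕ) = (i : ℕ) - 1 + 1 from by omega),
          if_pos hij]
        try norm_num
      · have hvij : (i : ℕ) ≠ (j : ℕ) := fun hc => hij (Fin.ext hc)
        rw [if_neg (show ¬(((i : ℕ) - 1) % 2 = 0 ∧ (j : ℕ) = (i : ℕ) - 1 + 1) from by omega),
          if_neg (show ¬((j : ℕ) % 2 = 0 ∧ (i : ℕ) - 1 = (j : ℕ) + 1) from by omega),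
          if_neg hij]
        try norm_num
    · intro k _ hk
      have hk' : (k : ℕ) ≠ (i : ℕ) - 1 := fun hc => hk (Fin.ext hc)
      have hz : sympForm n i k = 0 := by
        simp only [sympForm, Matrix.of_apply]
        rw [if_neg (by omega), if_neg (by omega)]
      rw [hz, zero_mul]
    · intro hmem; exact absurd (Finset.mem_univ _) hmem

/-- complexification of a real matrix -/
abbrev cmap (M : Matrix (Fin (2 * n)) (Fin (2 * n)) ℝ) : Matrix (Fin (2 * n)) (Fin (2 * n)) ℂ :=
  M.map (fun a => (a : ℂ))

/-- complexification of a real vector -/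
abbrev cvec (k : Fin (2 * n) → ℝ) : Fin (2 * n) → ℂ := fun i => (k i : ℂ)

lemma star_cvec (k : Fin (2 * n) → ℝ) : star (cvec k) = cvec k := by
  funext i; simp [cvec]

lemma cmap_mul (M N : Matrix (Fin (2 * n)) (Fin (2 * n)) ℝ) :
    cmap (M * N) = cmap M * cmap N :=
  Matrix.map_mul (f := Complex.ofRealHom)

lemma cmap_conjTranspose (M : Matrix (Fin (2 * n)) (Fin (2 * n)) ℝ) :
    (cmap M)ᴴ = cmap Mᵀ := by
  ext i j; simp [cmap, conjTranspose_apply]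

lemma conj_quad (M : Matrix (Fin (2 * n)) (Fin (2 * n)) ℂ) (x : Fin (2 * n) → ℂ) :
    star (star x ⬝ᵥ M.mulVec x) = star x ⬝ᵥ Mᴴ.mulVec x := by
  rw [star_dotProduct, star_star, star_mulVec, dotProduct_mulVec]

lemma dot_real (M : Matrix (Fin (2 * n)) (Fin (2 * n)) ℝ) (k : Fin (2 * n) → ℝ) :
    cvec k ⬝ᵥ (cmap M).mulVec (cvec k) = ((k ⬝ᵥ M.mulVec k : ℝ) : ℂ) := by
  simp [cvec, cmap, dotProduct, mulVec, Finset.mul_sum]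

/-- quadratic form of real antisymmetric matrix vanishes on real vectors -/
lemma antisym_quad (A : Matrix (Fin (2 * n)) (Fin (2 * n)) ℝ) (hA : Aᵀ = -A)
    (k : Fin (2 * n) → ℝ) : k ⬝ᵥ A.mulVec k = 0 := by
  have h1 : k ⬝ᵥ A.mulVec k = -(k ⬝ᵥ A.mulVec k) := by
    calc k ⬝ᵥ A.mulVec k = (k ᵥ* A) ⬝ᵥ k := dotProduct_mulVec _ _ _
      _ = (Aᵀ.mulVec k) ⬝ᵥ k := by rw [mulVec_transpose]
      _ = ((-A).mulVec k) ⬝ᵥ k := by rw [hA]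
      _ = -((A.mulVec k) ⬝ᵥ k) := by rw [neg_mulVec, neg_dotProduct]
      _ = -(k ⬝ᵥ A.mulVec k) := by rw [dotProduct_comm]
  linarith

/-- imaginary part of quadratic form of complexified symmetric real matrix -/
lemma symm_quad_im (M : Matrix (Fin (2 * n)) (Fin (2 * n)) ℝ) (hM : M.IsSymm)
    (x : Fin (2 * n) → ℂ) : (star x ⬝ᵥ (cmap M).mulVec x).im = 0 := by
  have h := conj_quad (cmap M) x
  rw [cmap_conjTranspose, hM] at h
  have := congrArg Complex.im h
  simp only [Complex.star_def, Complex.conj_im] at this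
  linarith

/-- real part of symplectic quadratic form vanishes -/
lemma symp_quad_re (x : Fin (2 * n) → ℂ) :
    (star x ⬝ᵥ (cmap (sympForm n)).mulVec x).re = 0 := by
  have h := conj_quad (cmap (sympForm n)) x
  rw [cmap_conjTranspose, symp_transpose] at h
  have h2 : cmap (n := n) (-sympForm n) = -(cmap (sympForm n)) := by
    ext i j; simp [cmap]
  rw [h2, neg_mulVec, dotProduct_neg] at h
  have := congrArg Complex.re h
  simp only [Complex.star_def, Complex.conj_re, Complex.neg_re] at this
  linarith

/-- Euclidean norm of a complex vector -/
def N (u : Fin (2 * n) → ℂ) : ℝ := ‖(WithLp.equiv 2 (Fin (2 * n) → ℂ)).symm u‖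

lemma N_nonneg (u : Fin (2 * n) → ℂ) : 0 ≤ N u := norm_nonneg _

lemma cs (u w : Fin (2 * n) → ℂ) : ‖star u ⬝ᵥ w‖ ≤ N u * N w := by
  have h := norm_inner_le_norm (𝕜 := ℂ) ((WithLp.equiv 2 (Fin (2 * n) → ℂ)).symm u)
    ((WithLp.equiv 2 (Fin (2 * n) → ℂ)).symm w)
  rwa [show inner ℂ ((WithLp.equiv 2 (Fin (2 * n) → ℂ)).symm u) ((WithLp.equiv 2 (Fin (2 * n) → ℂ)).symm w)
    = star u ⬝ᵥ w from by rw [dotProduct_comm]; rfl] at h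

lemma nsq (u : Fin (2 * n) → ℂ) : (star u ⬝ᵥ u).re = N u ^ 2 := by
  have h := inner_self_eq_norm_sq (𝕜 := ℂ) ((WithLp.equiv 2 (Fin (2 * n) → ℂ)).symm u)
  rw [show inner ℂ ((WithLp.equiv 2 (Fin (2 * n) → ℂ)).symm u) ((WithLp.equiv 2 (Fin (2 * n) → ℂ)).symm u)
    = star u ⬝ᵥ u from by rw [dotProduct_comm]; rfl] at h
  simpa [N] using h

lemma N_of_sq {u w : Fin (2 * n) → ℂ} (h : (star u ⬝ᵥ u).re = (star w ⬝ᵥ w).re) :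
    N u = N w := by
  have h1 := nsq u; have h2 := nsq w
  have h3 : N u ^ 2 = N w ^ 2 := by rw [← h1, ← h2, h]
  nlinarith [N_nonneg u, N_nonneg w]

lemma cmap_neg_symp : cmap (n := n) (-sympForm n) = -(cmap (sympForm n)) := by
  ext i j; simp [cmap]

lemma symp_conj_mul : (cmap (n := n) (sympForm n))ᴴ * cmap (sympForm n) = 1 := by
  rw [cmap_conjTranspose, symp_transpose, cmap_neg_symp, neg_mul, ← cmap_mul, symp_mul_self]
  have : cmap (n := n) (-1) = -1 := by
    ext i j; by_cases hij : i = j <;> simp [cmap, Matrix.one_apply, hij]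
  rw [this, neg_neg]

lemma N_symp (x : Fin (2 * n) → ℂ) : N ((cmap (sympForm n)).mulVec x) = N x := by
  apply N_of_sq
  have key : star ((cmap (sympForm n)).mulVec x) ⬝ᵥ ((cmap (sympForm n)).mulVec x)
      = star x ⬝ᵥ ((cmap (sympForm n))ᴴ * cmap (sympForm n)).mulVec x := by
    rw [star_mulVec, ← dotProduct_mulVec, mulVec_mulVec]
  rw [key, symp_conj_mul, one_mulVec]

/-- the two PosSemidef conditions, given the quadratic-form bound -/
lemma psd_pair (σ : Matrix (Fin (2 * n)) (Fin (2 * n)) ℝ) (hσ : σ.IsSymm)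
    (hb : ∀ x : Fin (2 * n) → ℂ,
      ‖star x ⬝ᵥ (cmap (sympForm n)).mulVec x‖ ≤ (star x ⬝ᵥ (cmap σ).mulVec x).re) :
    (cmap σ + Complex.I • cmap (sympForm n)).PosSemidef ∧
    (cmap σ - Complex.I • cmap (sympForm n)).PosSemidef := by
  have herm1 : (cmap σ)ᴴ = cmap σ := by rw [cmap_conjTranspose, hσ]
  have herm2 : (Complex.I • cmap (sympForm n))ᴴ = Complex.I • cmap (sympForm n) := by
    rw [conjTranspose_smul, cmap_conjTranspose, symp_transpose, cmap_neg_symp]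
    simp [Complex.star_def, smul_neg]
  constructor <;> rw [Matrix.posSemidef_iff_dotProduct_mulVec] <;> constructor
  · show _ = _
    rw [conjTranspose_add, herm1, herm2]
  · intro x
    rw [add_mulVec, dotProduct_add, smul_mulVec, dotProduct_smul, smul_eq_mul]
    set S := star x ⬝ᵥ (cmap σ).mulVec x with hS
    set d := star x ⬝ᵥ (cmap (sympForm n)).mulVec x with hd
    have hSim : S.im = 0 := symm_quad_im σ hσ x
    have hdre : d.re = 0 := symp_quad_re x
    have hbd := hb x
    have habs : |d.im| ≤ ‖d‖ := by
      exact Complex.abs_im_le_norm d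
    have habs2 := abs_le.mp habs
    rw [Complex.le_def]
    constructor
    · simp only [Complex.add_re, Complex.zero_re, Complex.mul_re, Complex.I_re, Complex.I_im]
      linarith
    · simp only [Complex.add_im, Complex.zero_im, Complex.mul_im, Complex.I_re, Complex.I_im]
      linarith
  · show _ = _
    rw [conjTranspose_sub, herm1, herm2]
  · intro x
    rw [sub_mulVec, dotProduct_sub, smul_mulVec, dotProduct_smul, smul_eq_mul]
    set S := star x ⬝ᵥ (cmap σ).mulVec x with hS
    set d := star x ⬝ᵥ (cmap (sympForm n)).mulVec x with hd
    have hSim : S.im = 0 := symm_quad_im σ hσ x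
    have hdre : d.re = 0 := symp_quad_re x
    have hbd := hb x
    have habs : |d.im| ≤ ‖d‖ := by
      exact Complex.abs_im_le_norm d
    have habs2 := abs_le.mp habs
    rw [Complex.le_def]
    constructor
    · simp only [Complex.sub_re, Complex.zero_re, Complex.mul_re, Complex.I_re, Complex.I_im]
      linarith
    · simp only [Complex.sub_im, Complex.zero_im, Complex.mul_im, Complex.I_re, Complex.I_im]
      linarith

lemma hb_two (x : Fin (2 * n) → ℂ) :
    ‖star x ⬝ᵥ (cmap (sympForm n)).mulVec x‖
      ≤ (star x ⬝ᵥ (cmap ((2 : ℝ) • (1 : Matrix (Fin (2 * n)) (Fin (2 * n)) ℝ))).mulVec x).re := by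
  have h1 : ‖star x ⬝ᵥ (cmap (sympForm n)).mulVec x‖ ≤ N x * N ((cmap (sympForm n)).mulVec x) :=
    cs _ _
  rw [N_symp] at h1
  have h2 : cmap (n := n) ((2 : ℝ) • (1 : Matrix (Fin (2 * n)) (Fin (2 * n)) ℝ))
      = (2 : ℂ) • (1 : Matrix (Fin (2 * n)) (Fin (2 * n)) ℂ) := by
    ext i j; by_cases hij : i = j <;> simp [cmap, Matrix.one_apply, hij]
  rw [h2, smul_mulVec, one_mulVec, dotProduct_smul, smul_eq_mul]
  have h3 : ((2 : ℂ) * (star x ⬝ᵥ x)).re = 2 * (star x ⬝ᵥ x).re := by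
    simp [Complex.mul_re]
  rw [h3, nsq]
  nlinarith [N_nonneg x]

/-- rank-one matrix acting on a vector -/
lemma vecMulVec_mulVec' {R : Type*} [CommRing R] (u w y : Fin (2 * n) → R) :
    (Matrix.vecMulVec u w).mulVec y = (w ⬝ᵥ y) • u := by
  funext i
  simp [Matrix.vecMulVec_apply, Matrix.mulVec, dotProduct, Finset.sum_mul, Finset.mul_sum]
  congr 1; funext j; ring

/-- the squeezed covariance matrix in direction `v` -/
def sigmaT (v : Fin (2 * n) → ℝ) (t : ℝ) : Matrix (Fin (2 * n)) (Fin (2 * n)) ℝ :=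
  (1 / t) • Matrix.vecMulVec v v
    + (1 + t) • ((1 : Matrix (Fin (2 * n)) (Fin (2 * n)) ℝ) - Matrix.vecMulVec v v)

lemma sigmaT_isSymm (v : Fin (2 * n) → ℝ) (t : ℝ) : (sigmaT v t).IsSymm := by
  show _ = _
  ext i j
  simp only [sigmaT, Matrix.transpose_apply, Matrix.add_apply, Matrix.smul_apply,
    Matrix.sub_apply, Matrix.one_apply, Matrix.vecMulVec_apply, smul_eq_mul]
  by_cases hij : i = j
  · subst hij; ring
  · have hji : ¬ j = i := fun hc => hij hc.symm
    simp only [hij, hji, if_false]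
    ring

lemma cmap_sigmaT (v : Fin (2 * n) → ℝ) (t : ℝ) :
    cmap (sigmaT v t) = ((1 / t : ℝ) : ℂ) • Matrix.vecMulVec (cvec v) (cvec v)
      + ((1 + t : ℝ) : ℂ) • ((1 : Matrix (Fin (2 * n)) (Fin (2 * n)) ℂ)
          - Matrix.vecMulVec (cvec v) (cvec v)) := by
  ext i j
  simp only [cmap, sigmaT, Matrix.map_apply, Matrix.add_apply, Matrix.smul_apply,
    Matrix.sub_apply, Matrix.one_apply, Matrix.vecMulVec_apply, smul_eq_mul, cvec]
  by_cases hij : i = j <;> simp [hij] <;> push_cast <;> ring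

lemma hb_sigmaT (v : Fin (2 * n) → ℝ) (hv : v ⬝ᵥ v = 1) (t : ℝ) (ht : 0 < t)
    (x : Fin (2 * n) → ℂ) :
    ‖star x ⬝ᵥ (cmap (sympForm n)).mulVec x‖ ≤ (star x ⬝ᵥ (cmap (sigmaT v t)).mulVec x).re := by
  set vc : Fin (2 * n) → ℂ := cvec v with hvcdef
  set a : ℂ := vc ⬝ᵥ x with hadef
  set z : Fin (2 * n) → ℂ := x - a • vc with hzdef
  set Q : ℂ := star x ⬝ᵥ x with hQdef
  have hvc1 : vc ⬝ᵥ vc = 1 := by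
    have h0 : vc ⬝ᵥ vc = ((v ⬝ᵥ v : ℝ) : ℂ) := by simp [hvcdef, cvec, dotProduct]
    rw [h0, hv, Complex.ofReal_one]
  have hstarvc : star vc = vc := star_cvec v
  have hsxvc : star x ⬝ᵥ vc = star a := by
    rw [star_dotProduct, hstarvc]
  have hNvc : N vc = 1 := by
    have h1 := nsq vc
    rw [hstarvc, hvc1] at h1
    simp only [Complex.one_re] at h1
    nlinarith [N_nonneg vc]
  have hstarz : star z = star x - star a • vc := by
    rw [hzdef, star_sub, star_smul, hstarvc]
  have hzz : star z ⬝ᵥ z = Q - star a * a := by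
    rw [hstarz]
    conv_lhs => rw [hzdef]
    simp only [sub_dotProduct, dotProduct_sub, smul_dotProduct, dotProduct_smul, smul_eq_mul]
    rw [hsxvc, hvc1, ← hadef, ← hQdef]
    ring
  have hnormsq : star a * a = (Complex.normSq a : ℂ) := by
    rw [Complex.star_def, mul_comm, Complex.mul_conj]
  have hNz2 : N z ^ 2 = N x ^ 2 - Complex.normSq a := by
    have h1 := nsq z
    rw [hzz, hnormsq] at h1
    have h2 := nsq x
    rw [← hQdef] at h2
    simp only [Complex.sub_re, Complex.ofReal_re] at h1
    linarith
  set d : ℂ := star x ⬝ᵥ (cmap (sympForm n)).mulVec x with hddef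
  have hxz : x = z + a • vc := by rw [hzdef]; funext i; simp
  set T1 : ℂ := star z ⬝ᵥ (cmap (sympForm n)).mulVec z with hT1
  set T2 : ℂ := star z ⬝ᵥ (cmap (sympForm n)).mulVec vc with hT2
  set T3 : ℂ := vc ⬝ᵥ (cmap (sympForm n)).mulVec z with hT3
  have hT0 : vc ⬝ᵥ (cmap (sympForm n)).mulVec vc = 0 := by
    rw [hvcdef, dot_real, antisym_quad _ (symp_transpose n), Complex.ofReal_zero]
  have hdsplit : d = T1 + a * T2 + star a * T3 := by
    rw [hddef]
    conv_lhs => rw [hxz]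
    rw [star_add, star_smul, hstarvc]
    simp only [mulVec_add, mulVec_smul, add_dotProduct, dotProduct_add, smul_dotProduct,
      dotProduct_smul, smul_eq_mul]
    rw [← hT1, ← hT2, ← hT3, hT0]
    ring
  have b1 : ‖T1‖ ≤ N z * N z := by
    have h := cs z ((cmap (sympForm n)).mulVec z)
    rwa [N_symp] at h
  have b2 : ‖T2‖ ≤ N z * 1 := by
    have h := cs z ((cmap (sympForm n)).mulVec vc)
    rwa [N_symp, hNvc] at h
  have b3 : ‖T3‖ ≤ 1 * N z := by
    have h := cs vc ((cmap (sympForm n)).mulVec z)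
    rwa [N_symp, hNvc, hstarvc] at h
  set A : ℝ := ‖a‖ with hAdef
  have hA2 : A ^ 2 = Complex.normSq a := Complex.sq_norm a
  have hAnn : 0 ≤ A := norm_nonneg a
  have hdbound : ‖d‖ ≤ N z * N z + 2 * (A * N z) := by
    calc ‖d‖ = ‖T1 + a * T2 + star a * T3‖ := by rw [hdsplit]
      _ ≤ ‖T1 + a * T2‖ + ‖star a * T3‖ := norm_add_le _ _
      _ ≤ ‖T1‖ + ‖a * T2‖ + ‖star a * T3‖ := by linarith [norm_add_le T1 (a * T2)]
      _ = ‖T1‖ + A * ‖T2‖ + A * ‖T3‖ := by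
          rw [norm_mul, norm_mul, norm_star]
      _ ≤ N z * N z + A * (N z * 1) + A * (1 * N z) := by
          have h2' : A * ‖T2‖ ≤ A * (N z * 1) := mul_le_mul_of_nonneg_left b2 hAnn
          have h3' : A * ‖T3‖ ≤ A * (1 * N z) := mul_le_mul_of_nonneg_left b3 hAnn
          linarith
      _ = N z * N z + 2 * (A * N z) := by ring
  have hSval : star x ⬝ᵥ (cmap (sigmaT v t)).mulVec x
      = ((1 / t : ℝ) : ℂ) * (a * star a) + ((1 + t : ℝ) : ℂ) * (Q - a * star a) := by
    rw [cmap_sigmaT, ← hvcdef, add_mulVec, smul_mulVec, smul_mulVec,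
      sub_mulVec, one_mulVec, vecMulVec_mulVec']
    simp only [dotProduct_add, dotProduct_smul, dotProduct_sub, smul_eq_mul]
    rw [hsxvc, ← hadef, ← hQdef]
    try ring
  have hSre : (star x ⬝ᵥ (cmap (sigmaT v t)).mulVec x).re
      = (1 / t) * Complex.normSq a + (1 + t) * (N x ^ 2 - Complex.normSq a) := by
    rw [hSval]
    have h1 : a * star a = (Complex.normSq a : ℂ) := by rw [mul_comm, hnormsq]
    rw [h1]
    have hQre : Q.re = N x ^ 2 := by rw [hQdef]; exact nsq x
    have hQim : Q.im = 0 := by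
      have h2 := symm_quad_im (1 : Matrix (Fin (2 * n)) (Fin (2 * n)) ℝ)
        (by show _ = _; simp) x
      have hone : cmap (n := n) (1 : Matrix (Fin (2 * n)) (Fin (2 * n)) ℝ)
          = (1 : Matrix (Fin (2 * n)) (Fin (2 * n)) ℂ) := by
        ext i j; by_cases hij : i = j <;> simp [cmap, Matrix.one_apply, hij]
      rw [hone, one_mulVec, ← hQdef] at h2
      exact h2
    simp [Complex.add_re, Complex.mul_re, Complex.ofReal_re, Complex.ofReal_im,
      Complex.sub_re, Complex.sub_im, hQre, hQim]
  rw [hSre]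
  have hNzn : 0 ≤ N z := N_nonneg z
  have hkey : (1 / t) * A ^ 2 + t * (N z * N z) - 2 * (A * N z) = (1 / t) * (A - t * N z) ^ 2 := by
    field_simp
    ring
  have hkey2 : 0 ≤ (1 / t) * (A - t * N z) ^ 2 := by positivity
  have hNz2' : N x ^ 2 - Complex.normSq a = N z ^ 2 := by linarith
  rw [hNz2']
  have hkey3 : 0 ≤ (1 / t) * A ^ 2 + t * (N z * N z) - 2 * (A * N z) := by
    rw [hkey]; exact hkey2
  rw [← hA2]
  have hsq : N z ^ 2 = N z * N z := by ring
  rw [hsq]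
  linarith [hdbound, hkey3]

end

end NoiseAux

open Matrix

/-- Any `α` satisfying the Gaussian-to-Gaussian positivity condition is positive semidefinite:
if `K σ Kᵀ + α ≥ ± i Δ` for every quantum covariance matrix `σ` (real symmetric with
`σ ≥ ± i Δ`), then `α ≥ 0`. -/
theorem noise_matrix_posSemidef
    (n : ℕ) (K α : Matrix (Fin (2 * n)) (Fin (2 * n)) ℝ) (hα : α.IsSymm)
    (h : ∀ σ : Matrix (Fin (2 * n)) (Fin (2 * n)) ℝ, σ.IsSymm →
      (σ.map (fun a => (a : ℂ)) + Complex.I • (sympForm n).map (fun a => (a : ℂ))).PosSemidef →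
      (σ.map (fun a => (a : ℂ)) - Complex.I • (sympForm n).map (fun a => (a : ℂ))).PosSemidef →
      ((K * σ * K.transpose + α).map (fun a => (a : ℂ))
          + Complex.I • (sympForm n).map (fun a => (a : ℂ))).PosSemidef ∧
      ((K * σ * K.transpose + α).map (fun a => (a : ℂ))
          - Complex.I • (sympForm n).map (fun a => (a : ℂ))).PosSemidef) :
    α.PosSemidef := by
  classical
  rw [Matrix.posSemidef_iff_dotProduct_mulVec]
  constructor
  · show αᴴ = α
    have hct : αᴴ = αᵀ := by ext i j; simp [Matrix.conjTranspose_apply]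
    rw [hct, hα]
  · intro k
    show (0 : ℝ) ≤ star k ⬝ᵥ α.mulVec k
    rw [star_trivial]
    set u : Fin (2 * n) → ℝ := Kᵀ.mulVec k with hu
    set U : ℝ := u ⬝ᵥ u with hUdef
    set c : ℝ := k ⬝ᵥ α.mulVec k with hc
    have hUnn : 0 ≤ U := by
      rw [hUdef]
      apply Finset.sum_nonneg
      intro i _
      exact mul_self_nonneg _
    have hreal : ∀ σ : Matrix (Fin (2 * n)) (Fin (2 * n)) ℝ,
        k ⬝ᵥ (K * σ * Kᵀ + α).mulVec k = u ⬝ᵥ σ.mulVec u + c := by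
      intro σ
      rw [add_mulVec, dotProduct_add, ← hc]
      congr 1
      rw [← Matrix.mulVec_mulVec, ← Matrix.mulVec_mulVec, dotProduct_mulVec,
        show k ᵥ* K = Kᵀ.mulVec k from (Matrix.mulVec_transpose K k).symm, ← hu]
    have key : ∀ σ : Matrix (Fin (2 * n)) (Fin (2 * n)) ℝ, σ.IsSymm →
        (∀ x : Fin (2 * n) → ℂ,
          ‖star x ⬝ᵥ (NoiseAux.cmap (sympForm n)).mulVec x‖
            ≤ (star x ⬝ᵥ (NoiseAux.cmap σ).mulVec x).re) →
        0 ≤ u ⬝ᵥ σ.mulVec u + c := by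
      intro σ hσ hbσ
      obtain ⟨P1, _⟩ := h σ hσ (NoiseAux.psd_pair σ hσ hbσ).1 (NoiseAux.psd_pair σ hσ hbσ).2
      have hq := P1.dotProduct_mulVec_nonneg (NoiseAux.cvec k)
      rw [NoiseAux.star_cvec, add_mulVec, dotProduct_add, smul_mulVec,
        dotProduct_smul] at hq
      rw [show ((K * σ * Kᵀ + α).map fun a => (a : ℂ))
          = NoiseAux.cmap (K * σ * Kᵀ + α) from rfl] at hq
      rw [show ((sympForm n).map fun a => (a : ℂ)) = NoiseAux.cmap (sympForm n) from rfl] at hq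
      rw [NoiseAux.dot_real, NoiseAux.dot_real,
        NoiseAux.antisym_quad _ (NoiseAux.symp_transpose n), Complex.ofReal_zero,
        smul_zero, add_zero, hreal σ] at hq
      exact_mod_cast hq
    by_cases hu0 : u = 0
    · have hb := fun x => NoiseAux.hb_two (n := n) x
      have h0 := key ((2 : ℝ) • (1 : Matrix (Fin (2 * n)) (Fin (2 * n)) ℝ))
        (by show _ = _; rw [Matrix.transpose_smul, Matrix.transpose_one]) hb
      rw [hu0] at h0
      simpa using h0
    · have hUpos : 0 < U := by
        rcases lt_or_eq_of_le hUnn with h1 | h1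
        · exact h1
        · exact absurd (dotProduct_self_eq_zero.mp h1.symm) hu0
      set s : ℝ := Real.sqrt U with hsdef
      have hs2 : s ^ 2 = U := Real.sq_sqrt hUnn
      have hspos : 0 < s := Real.sqrt_pos.mpr hUpos
      set v : Fin (2 * n) → ℝ := s⁻¹ • u with hvdef
      have hvu : v ⬝ᵥ u = s⁻¹ * U := by
        rw [hvdef, smul_dotProduct, smul_eq_mul, ← hUdef]
      have huv : u ⬝ᵥ v = s⁻¹ * U := by
        rw [hvdef, dotProduct_smul, smul_eq_mul, ← hUdef]
      have hvv : v ⬝ᵥ v = 1 := by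
        rw [hvdef, smul_dotProduct, dotProduct_smul, smul_eq_mul, smul_eq_mul, ← hUdef,
          ← hs2]
        field_simp
      have hquad : ∀ t : ℝ, 0 < t → u ⬝ᵥ (NoiseAux.sigmaT v t).mulVec u = (1 / t) * U := by
        intro t ht
        have hsU : s⁻¹ * U * (s⁻¹ * U) = U := by
          rw [← hs2]; field_simp
        rw [NoiseAux.sigmaT, add_mulVec, smul_mulVec, smul_mulVec, sub_mulVec,
          one_mulVec, NoiseAux.vecMulVec_mulVec']
        simp only [dotProduct_add, dotProduct_smul, dotProduct_sub, smul_eq_mul]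
        rw [hvu, huv, ← hUdef, hsU]
        ring
      have hkey : ∀ t : ℝ, 0 < t → 0 ≤ (1 / t) * U + c := by
        intro t ht
        have h0 := key (NoiseAux.sigmaT v t) (NoiseAux.sigmaT_isSymm v t)
          (fun x => NoiseAux.hb_sigmaT v hvv t ht x)
        rwa [hquad t ht] at h0
      by_contra hneg
      push_neg at hneg
      have hcneg : c < 0 := hneg
      set t0 : ℝ := (U + 1) / (-c) with ht0def
      have ht0pos : 0 < t0 := div_pos (by linarith) (by linarith)
      have h0 := hkey t0 ht0pos
      have heq : (1 / t0) * U + c = c / (U + 1) := by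
        rw [ht0def]
        field_simp
        ring
      rw [heq] at h0
      have : c / (U + 1) < 0 := div_neg_of_neg_of_pos hcneg (by linarith)
      linarith
end

section
/- No-noise multimode classification: let K be a real 2n×2n matrix such that |w₁ᵀ K Δ Kᵀ w₂| ≥ |w₁ᵀ Δ w₂| for all real vectors w₁, w₂ ∈ ℝ^{2n}, where Δ is the standard symplectic form. Then K Δ Kᵀ = (1/λ) Δ for some real λ with 0 < |λ| ≤ 1; consequently K = S · κ I with κ = 1/√λ ≥ 1 and S symplectic when λ > 0, or K = S T κ I with T the total time-reversal when λ < 0. -/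
/-- The total time-reversal `T = ⊕ₖ diag(1,-1)` on `ℝ^{2n}`. -/
noncomputable def timeRev (n : ℕ) : Matrix (Fin (2 * n)) (Fin (2 * n)) ℝ :=
  Matrix.diagonal fun i => if (i : ℕ) % 2 = 0 then 1 else -1

open Matrix

/-- If every vector orthogonal to `g` is orthogonal to `f`, then `f` is a multiple of `g`. -/
lemma dot_span (m : ℕ) (f g : Fin m → ℝ)
    (h : ∀ w, dotProduct w g = 0 → dotProduct w f = 0) :
    ∃ c : ℝ, f = c • g := by
  by_cases hg : g = 0
  · refine ⟨0, ?_⟩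
    have hf := h f (by simp [hg])
    have : f = 0 := (dotProduct_self_eq_zero).1 hf
    simp [this]
  · have hgg : dotProduct g g ≠ 0 := fun h0 => hg (dotProduct_self_eq_zero.1 h0)
    set c : ℝ := dotProduct f g / dotProduct g g with hc
    refine ⟨c, ?_⟩
    set w : Fin m → ℝ := f - c • g with hw
    have hwg : dotProduct w g = 0 := by
      simp only [hw, sub_dotProduct, smul_dotProduct, smul_eq_mul, hc]
      field_simp
      ring
    have hwf := h w hwg
    have hww : dotProduct w w = 0 := by
      have : dotProduct w w = dotProduct w f - c * dotProduct w g := by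
        simp [hw, dotProduct_sub, dotProduct_smul, smul_eq_mul]
      rw [this, hwf, hwg]; ring
    have : w = 0 := dotProduct_self_eq_zero.1 hww
    exact sub_eq_zero.1 this

/-- If `B v` is always parallel to `C v` and `C` is injective, then `B = c • C`. -/
lemma const_of_span (m : ℕ) (hm : 0 < m) (B C : Matrix (Fin m) (Fin m) ℝ)
    (hC : ∀ v, C.mulVec v = 0 → v = 0)
    (hspan : ∀ v, ∃ c : ℝ, B.mulVec v = c • C.mulVec v) :
    ∃ c : ℝ, B = c • C := by
  set e : Fin m → ℝ := Pi.single ⟨0, hm⟩ 1 with he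
  obtain ⟨c, hc⟩ := hspan e
  have hGe : C.mulVec e ≠ 0 := by
    intro h0
    have := hC e h0
    have : e ⟨0, hm⟩ = 0 := by rw [this]; rfl
    simp [he] at this
  have key : ∀ v, B.mulVec v = c • C.mulVec v := by
    intro v
    by_cases hdep : ∃ t : ℝ, C.mulVec v = t • C.mulVec e
    · obtain ⟨t, ht⟩ := hdep
      have hv : v = t • e := by
        have h0 : C.mulVec (v - t • e) = 0 := by
          rw [mulVec_sub, mulVec_smul, ht]; simp
        exact sub_eq_zero.1 (hC _ h0)
      rw [hv, mulVec_smul, hc, mulVec_smul, smul_comm]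
    · obtain ⟨c₂, h₂⟩ := hspan v
      obtain ⟨c₃, h₃⟩ := hspan (e + v)
      rw [mulVec_add, mulVec_add, hc, h₂, smul_add] at h₃
      have heq : (c₂ - c₃) • C.mulVec v = (c₃ - c) • C.mulVec e := by
        rw [sub_smul, sub_smul]
        linear_combination (norm := module) h₃
      by_cases hcc : c₂ = c₃
      · have : (c₃ - c) • C.mulVec e = 0 := by rw [← heq, hcc]; simp
        rcases smul_eq_zero.1 this with h' | h'
        · have : c₃ = c := by linarith [sub_eq_zero.1 (by exact_mod_cast h')]
          rw [h₂, hcc, this]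
        · exact absurd h' hGe
      · exfalso
        apply hdep
        refine ⟨(c₃ - c) / (c₂ - c₃), ?_⟩
        have hne : c₂ - c₃ ≠ 0 := sub_ne_zero.2 hcc
        calc C.mulVec v = (c₂ - c₃)⁻¹ • ((c₂ - c₃) • C.mulVec v) := by
              rw [smul_smul, inv_mul_cancel₀ hne, one_smul]
          _ = ((c₃ - c) / (c₂ - c₃)) • C.mulVec e := by
              rw [heq, smul_smul, div_eq_inv_mul]
  refine ⟨c, ?_⟩
  ext i j
  have := congrFun (key (Pi.single j 1)) i
  simpa [mulVec_single] using this

lemma sympForm_mulVec_even (n : ℕ) (v : Fin (2 * n) → ℝ) (i : Fin (2 * n))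
    (hi : (i : ℕ) % 2 = 0) :
    (sympForm n).mulVec v i = v ⟨(i : ℕ) + 1, by omega⟩ := by
  have h2 : (i : ℕ) < 2 * n := i.2
  rw [mulVec, dotProduct]
  rw [Finset.sum_eq_single (⟨(i : ℕ) + 1, by omega⟩ : Fin (2 * n))]
  · have : sympForm n i ⟨(i : ℕ) + 1, by omega⟩ = 1 := by
      simp [sympForm, hi]
    rw [this, one_mul]
  · intro k _ hk
    have hk' : (k : ℕ) ≠ (i : ℕ) + 1 := fun h => hk (Fin.ext h)
    have : sympForm n i k = 0 := by
      simp only [sympForm, Matrix.of_apply]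
      rw [if_neg (by tauto), if_neg (by rintro ⟨h1, h2⟩; omega)]
    rw [this, zero_mul]
  · intro hmem; exact absurd (Finset.mem_univ _) hmem

lemma sympForm_mulVec_odd (n : ℕ) (v : Fin (2 * n) → ℝ) (i : Fin (2 * n))
    (hi : (i : ℕ) % 2 = 1) :
    (sympForm n).mulVec v i = -v ⟨(i : ℕ) - 1, by omega⟩ := by
  have h2 : (i : ℕ) < 2 * n := i.2
  have h1 : 1 ≤ (i : ℕ) := by omega
  rw [mulVec, dotProduct]
  rw [Finset.sum_eq_single (⟨(i : ℕ) - 1, by omega⟩ : Fin (2 * n))]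
  · have : sympForm n i ⟨(i : ℕ) - 1, by omega⟩ = -1 := by
      simp only [sympForm, Matrix.of_apply]
      rw [if_neg (by rintro ⟨h1, h2⟩; omega), if_pos (by constructor <;> omega)]
    rw [this]; ring
  · intro k _ hk
    have hk' : (k : ℕ) ≠ (i : ℕ) - 1 := fun h => hk (Fin.ext h)
    have : sympForm n i k = 0 := by
      simp only [sympForm, Matrix.of_apply]
      rw [if_neg (by rintro ⟨h1, h2⟩; omega), if_neg (by rintro ⟨h1, h2⟩; omega)]
    rw [this, zero_mul]
  · intro hmem; exact absurd (Finset.mem_univ _) hmem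

lemma sympForm_mulVec_injective (n : ℕ) (v : Fin (2 * n) → ℝ)
    (h : (sympForm n).mulVec v = 0) : v = 0 := by
  funext j
  have hj : (j : ℕ) < 2 * n := j.2
  rcases Nat.even_or_odd (j : ℕ) with he | ho
  · have h2 : (j : ℕ) % 2 = 0 := Nat.even_iff.1 he
    have := congrFun h ⟨(j : ℕ) + 1, by omega⟩
    rw [sympForm_mulVec_odd n v _ (by simp; omega)] at this
    simp only [Pi.zero_apply, neg_eq_zero] at this
    have hj' : (⟨(j : ℕ) + 1 - 1, by omega⟩ : Fin (2 * n)) = j := by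
      apply Fin.ext; simp
    rw [hj'] at this
    simpa using this
  · have h2 : (j : ℕ) % 2 = 1 := Nat.odd_iff.1 ho
    have h1 : 1 ≤ (j : ℕ) := by omega
    have := congrFun h ⟨(j : ℕ) - 1, by omega⟩
    rw [sympForm_mulVec_even n v _ (by simp; omega)] at this
    simp only [Pi.zero_apply] at this
    have hj' : (⟨(j : ℕ) - 1 + 1, by omega⟩ : Fin (2 * n)) = j := by
      apply Fin.ext; simp; omega
    rw [hj'] at this
    simpa using this

lemma timeRev_symp (n : ℕ) :
    timeRev n * sympForm n * (timeRev n).transpose = -sympForm n := by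
  rw [show (timeRev n).transpose = timeRev n from Matrix.diagonal_transpose _]
  ext i j
  rw [timeRev, Matrix.mul_diagonal, Matrix.diagonal_mul]
  simp only [sympForm, Matrix.neg_apply, Matrix.of_apply]
  split_ifs with h1 h2 h3 h4 h5 h6 h7 <;> try ring
  all_goals (exfalso; omega)

lemma timeRev_sq (n : ℕ) : timeRev n * timeRev n = 1 := by
  ext i j
  rw [timeRev, Matrix.diagonal_mul_diagonal]
  rcases eq_or_ne i j with rfl | hij
  · rw [Matrix.diagonal_apply_eq, Matrix.one_apply_eq]
    by_cases h : (i:ℕ)%2 = 0 <;> simp [h]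
  · rw [Matrix.diagonal_apply_ne _ hij, Matrix.one_apply_ne hij]

lemma symp_pos (n : ℕ) (K : Matrix (Fin (2 * n)) (Fin (2 * n)) ℝ) (c : ℝ) (hc : 0 < c)
    (hK : K * sympForm n * K.transpose = c⁻¹ • sympForm n) :
    ∃ S : Matrix (Fin (2 * n)) (Fin (2 * n)) ℝ,
      S * sympForm n * S.transpose = sympForm n ∧ K = (1 / Real.sqrt c) • S := by
  refine ⟨Real.sqrt c • K, ?_, ?_⟩
  · rw [Matrix.transpose_smul, Matrix.smul_mul, Matrix.smul_mul, Matrix.mul_smul, hK,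
      smul_smul, smul_smul, Real.mul_self_sqrt hc.le, mul_inv_cancel₀ hc.ne', one_smul]
  · rw [smul_smul, one_div, inv_mul_cancel₀ (Real.sqrt_pos.2 hc).ne', one_smul]

lemma symp_neg (n : ℕ) (K : Matrix (Fin (2 * n)) (Fin (2 * n)) ℝ) (c : ℝ) (hc : c < 0)
    (hK : K * sympForm n * K.transpose = c⁻¹ • sympForm n) :
    ∃ S : Matrix (Fin (2 * n)) (Fin (2 * n)) ℝ,
      S * sympForm n * S.transpose = sympForm n ∧
        K = (1 / Real.sqrt (-c)) • (S * timeRev n) := by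
  have hT : (timeRev n).transpose = timeRev n := Matrix.diagonal_transpose _
  have hmid : timeRev n * sympForm n * timeRev n = -sympForm n := by
    have := timeRev_symp n; rwa [hT] at this
  have hcpos : (0 : ℝ) < -c := by linarith
  refine ⟨Real.sqrt (-c) • (K * timeRev n), ?_, ?_⟩
  · have e1 : (Real.sqrt (-c) • (K * timeRev n)) * sympForm n *
        (Real.sqrt (-c) • (K * timeRev n)).transpose
        = (Real.sqrt (-c) * Real.sqrt (-c)) •
          (K * timeRev n * sympForm n * (timeRev n * K.transpose)) := by
      rw [Matrix.transpose_smul, Matrix.transpose_mul, hT, Matrix.smul_mul, Matrix.smul_mul,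
        Matrix.mul_smul, smul_smul]
    have e2 : K * timeRev n * sympForm n * (timeRev n * K.transpose)
        = K * (timeRev n * sympForm n * timeRev n) * K.transpose := by
      noncomm_ring
    rw [e1, e2, hmid, Real.mul_self_sqrt hcpos.le, Matrix.mul_neg, Matrix.neg_mul, hK,
      smul_neg, smul_smul, show -c * c⁻¹ = -1 by rw [neg_mul, mul_inv_cancel₀ hc.ne], neg_smul, one_smul, neg_neg]
  · rw [Matrix.smul_mul, Matrix.mul_assoc, timeRev_sq, Matrix.mul_one, smul_smul, one_div,
      inv_mul_cancel₀ (Real.sqrt_pos.2 hcpos).ne', one_smul]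

/-- No-noise multimode classification: if `K` is a real `2n×2n` matrix with
`|w₁ᵀ (K Δ Kᵀ) w₂| ≥ |w₁ᵀ Δ w₂|` for all real `w₁, w₂`, then `K Δ Kᵀ = (1/λ) Δ` for some
`λ` with `0 < |λ| ≤ 1`; consequently `K = κ S` with `κ = 1/√|λ| ≥ 1` and `S` symplectic when
`λ > 0`, and `K = κ (S T)` with `T` the total time-reversal when `λ < 0`. -/
theorem no_noise_classification
    (n : ℕ) (K : Matrix (Fin (2 * n)) (Fin (2 * n)) ℝ)
    (h : ∀ w₁ w₂ : Fin (2 * n) → ℝ,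
      |dotProduct w₁ ((sympForm n).mulVec w₂)| ≤
        |dotProduct w₁ ((K * sympForm n * K.transpose).mulVec w₂)|) :
    ∃ lam : ℝ, 0 < |lam| ∧ |lam| ≤ 1 ∧
      K * sympForm n * K.transpose = (1 / lam) • sympForm n ∧
      (1 : ℝ) ≤ 1 / Real.sqrt |lam| ∧
      (0 < lam → ∃ S : Matrix (Fin (2 * n)) (Fin (2 * n)) ℝ,
        S * sympForm n * S.transpose = sympForm n ∧ K = (1 / Real.sqrt lam) • S) ∧
      (lam < 0 → ∃ S : Matrix (Fin (2 * n)) (Fin (2 * n)) ℝ,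
        S * sympForm n * S.transpose = sympForm n ∧
          K = (1 / Real.sqrt (-lam)) • (S * timeRev n)) := by
  rcases Nat.eq_zero_or_pos n with hn | hn
  · subst hn
    refine ⟨1, by norm_num, by norm_num, ?_, by simp, ?_, by norm_num⟩
    · ext i j; exact absurd i.2 (by omega)
    · intro _
      refine ⟨K, ?_, ?_⟩
      · ext i j; exact absurd i.2 (by omega)
      · simp
  · have hzero : ∀ w₁ w₂ : Fin (2 * n) → ℝ,
        dotProduct w₁ ((K * sympForm n * K.transpose).mulVec w₂) = 0 →
          dotProduct w₁ ((sympForm n).mulVec w₂) = 0 := by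
      intro w₁ w₂ h0
      have := h w₁ w₂
      rw [h0, abs_zero] at this
      exact abs_eq_zero.1 (le_antisymm this (abs_nonneg _))
    have hspan : ∀ v, ∃ c : ℝ,
        (sympForm n).mulVec v = c • (K * sympForm n * K.transpose).mulVec v := by
      intro v
      exact dot_span _ _ _ (fun w hw => hzero w v hw)
    have hAinj : ∀ v, (K * sympForm n * K.transpose).mulVec v = 0 → v = 0 := by
      intro v hv
      apply sympForm_mulVec_injective n v
      have : ∀ w, dotProduct w ((sympForm n).mulVec v) = 0 := by
        intro w
        exact hzero w v (by rw [hv, dotProduct_zero])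
      exact dotProduct_self_eq_zero.1 (this ((sympForm n).mulVec v))
    obtain ⟨c, hc⟩ := const_of_span (2 * n) (by omega) (sympForm n)
      (K * sympForm n * K.transpose) hAinj hspan
    obtain ⟨i0, hi0⟩ : ∃ i : Fin (2 * n), (i : ℕ) = 0 := ⟨⟨0, by omega⟩, rfl⟩
    obtain ⟨i1, hi1⟩ : ∃ i : Fin (2 * n), (i : ℕ) = 1 := ⟨⟨1, by omega⟩, rfl⟩
    have hΔ01 : sympForm n i0 i1 = 1 := by
      simp [sympForm, hi0, hi1]
    have hcne : c ≠ 0 := by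
      intro h0
      rw [h0, zero_smul] at hc
      have := congrFun (congrFun hc i0) i1
      rw [hΔ01] at this
      simpa using this
    have hKDK : K * sympForm n * K.transpose = c⁻¹ • sympForm n := by
      have h2 := congrArg (fun M : Matrix (Fin (2*n)) (Fin (2*n)) ℝ => c⁻¹ • M) hc
      simp only [smul_smul, inv_mul_cancel₀ hcne, one_smul] at h2
      exact h2.symm
    have hdot1 : dotProduct (Pi.single i0 1)
        ((sympForm n).mulVec (Pi.single i1 1)) = 1 := by
      rw [single_dotProduct, one_mul]
      rw [sympForm_mulVec_even n _ i0 (by rw [hi0])]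
      have : (⟨(i0 : ℕ) + 1, by rw [hi0]; omega⟩ : Fin (2 * n)) = i1 := by
        apply Fin.ext; simp [hi0, hi1]
      rw [this, Pi.single_eq_same]
    have hdotA : dotProduct (Pi.single i0 1)
        ((K * sympForm n * K.transpose).mulVec (Pi.single i1 1)) = c⁻¹ := by
      rw [hKDK, Matrix.smul_mulVec, dotProduct_smul, hdot1, smul_eq_mul, mul_one]
    have habs : 0 < |c| := abs_pos.2 hcne
    have hle : |c| ≤ 1 := by
      have := h (Pi.single i0 1) (Pi.single i1 1)
      rw [hdot1, hdotA, abs_one, abs_inv] at this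
      calc |c| = |c| * 1 := (mul_one _).symm
        _ ≤ |c| * |c|⁻¹ := by nlinarith
        _ = 1 := mul_inv_cancel₀ habs.ne'
    have hsqrt : (1 : ℝ) ≤ 1 / Real.sqrt |c| := by
      have hs : 0 < Real.sqrt |c| := Real.sqrt_pos.2 habs
      rw [le_div_iff₀ hs, one_mul]
      exact Real.sqrt_le_one.2 hle
    refine ⟨c, habs, hle, by rw [hKDK, one_div], hsqrt,
      fun hp => symp_pos n K c hp hKDK,
      fun hneg => symp_neg n K c hneg hKDK⟩
end
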